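/- arXiv:1609.07167 — 10 statements merged into one kernel-verified Lean document; each statement's English description precedes it below -/
import Mathlib

section
/- A poset P contains a subposet isomorphic to [κ]^{<ω} (finite subsets of κ ordered by inclusion) if and only if the poset J(P) of ideals of P, ordered by inclusion, contains a subposet isomorphic to the power set 𝒫(κ) ordered by inclusion. -/
/-- Finite subsets of `α`, ordered by inclusion; `[α]^{<ω}`. -/
def FinSets (α : Type*) : Type _ := {S : Set α // S.Finite}

instance {α : Type*} : PartialOrder (FinSets α) :=
  inferInstanceAs (PartialOrder {S : Set α // S.Finite})

instance {α : Type*} : SemilatticeSup (FinSets α) :=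
  { (inferInstance : PartialOrder (FinSets α)) with
    sup := fun S T => ⟨S.1 ∪ T.1, S.2.union T.2⟩
    le_sup_left := fun S T => Set.subset_union_left (s := S.1) (t := T.1)
    le_sup_right := fun S T => Set.subset_union_right (s := S.1) (t := T.1)
    sup_le := fun _ _ _ h1 h2 => Set.union_subset h1 h2 }
/-- An ideal of a poset: a nonempty up-directed initial segment. -/
def IsIdeal {α : Type*} [Preorder α] (I : Set α) : Prop :=
  I.Nonempty ∧ (∀ ⦃x y : α⦄, x ≤ y → y ∈ I → x ∈ I) ∧
    ∀ x ∈ I, ∀ y ∈ I, ∃ z ∈ I, x ≤ z ∧ y ≤ z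

section Aux

variable {P : Type*} [PartialOrder P] {κ : Type*}

/-- An ideal contains an upper bound for any finite collection of its elements. -/
lemma ideal_ub_mem {I : Set P} (hI : IsIdeal I) (t : Finset P) :
    ∃ z ∈ I, ∀ x ∈ t, x ∈ I → x ≤ z := by
  classical
  induction t using Finset.induction_on with
  | empty => exact hI.1.imp fun z hz => ⟨hz, by simp⟩
  | insert _ _ ha ih =>
    rename_i a s
    obtain ⟨z, hz, hub⟩ := ih
    by_cases haI : a ∈ I
    · obtain ⟨w, hw, haw, hzw⟩ := hI.2.2 a haI z hz
      exact ⟨w, hw, fun x hx hxI => by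
        rcases Finset.mem_insert.1 hx with rfl | hx
        · exact haw
        · exact (hub x hx hxI).trans hzw⟩
    · exact ⟨z, hz, fun x hx hxI => by
        rcases Finset.mem_insert.1 hx with rfl | hx
        · exact absurd hxI haI
        · exact hub x hx hxI⟩

/-- A chosen upper bound in an ideal of the ideal-members of a finset. -/
noncomputable def idealUB (I : {I : Set P // IsIdeal I}) (t : Finset P) : P :=
  (ideal_ub_mem I.2 t).choose

lemma idealUB_mem (I : {I : Set P // IsIdeal I}) (t : Finset P) : idealUB I t ∈ I.1 :=
  (ideal_ub_mem I.2 t).choose_spec.1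

lemma le_idealUB (I : {I : Set P // IsIdeal I}) {t : Finset P} {x : P}
    (hx : x ∈ t) (hxI : x ∈ I.1) : x ≤ idealUB I t :=
  (ideal_ub_mem I.2 t).choose_spec.2 x hx hxI

variable (g : Set κ ↪o {I : Set P // IsIdeal I}) (q : κ → P)

open Classical in
/-- The recursively chosen elements `p s` witnessing the embedding of finite sets. -/
noncomputable def pFun : Finset κ → P :=
  Finset.strongInduction fun s ih =>
    idealUB (g ↑s)
      (s.image q ∪ s.ssubsets.attach.image fun t => ih t.1 (Finset.mem_ssubsets.1 t.2))

open Classical in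
lemma pFun_eq (s : Finset κ) :
    pFun g q s = idealUB (g ↑s)
      (s.image q ∪ s.ssubsets.attach.image fun t => pFun g q t.1) := by
  rw [pFun, Finset.strongInduction_eq]

lemma pFun_mem (s : Finset κ) : pFun g q s ∈ (g ↑s).1 := by
  rw [pFun_eq]; exact idealUB_mem _ _

variable (hkey : ∀ (a : κ) (A : Set κ), q a ∈ (g A).1 ↔ a ∈ A)

include hkey in
lemma q_le_pFun {a : κ} {s : Finset κ} (ha : a ∈ s) : q a ≤ pFun g q s := by
  classical
  rw [pFun_eq]
  exact le_idealUB _ (Finset.mem_union_left _ (Finset.mem_image_of_mem q ha))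
    ((hkey a ↑s).2 (by exact_mod_cast ha))

lemma pFun_ssubset_le {t s : Finset κ} (h : t ⊂ s) : pFun g q t ≤ pFun g q s := by
  classical
  rw [pFun_eq g q s]
  refine le_idealUB _ (Finset.mem_union_right _ ?_) ?_
  · exact Finset.mem_image_of_mem _ (Finset.mem_attach _ ⟨t, Finset.mem_ssubsets.2 h⟩)
  · have hsub : (↑t : Set κ) ≤ ↑s := by exact_mod_cast h.1
    exact g.monotone hsub (pFun_mem g q t)

lemma pFun_mono {t s : Finset κ} (h : t ⊆ s) : pFun g q t ≤ pFun g q s := by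
  rcases eq_or_ne t s with rfl | hne
  · exact le_rfl
  · exact pFun_ssubset_le g q ⟨h, fun h' => hne (le_antisymm h h')⟩

include hkey in
lemma pFun_le_iff {s t : Finset κ} : pFun g q s ≤ pFun g q t ↔ s ⊆ t := by
  constructor
  · intro h a ha
    have h1 : q a ≤ pFun g q t := (q_le_pFun g q hkey ha).trans h
    have h2 : q a ∈ (g ↑t).1 := (g ↑t).2.2.1 h1 (pFun_mem g q t)
    exact_mod_cast (hkey a ↑t).1 h2
  · exact pFun_mono g q

/-- `FinSets κ` order-embeds into `Finset κ`. -/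
noncomputable def finSetsEmb : FinSets κ ↪o Finset κ :=
  OrderEmbedding.ofMapLEIff (fun S => S.2.toFinset) fun S T =>
    Set.Finite.toFinset_subset_toFinset

end Aux

/-- `P` contains a subposet isomorphic to `[κ]^{<ω}` iff `J(P)` contains a
subposet isomorphic to `𝒫(κ)`. -/
theorem stmt_1 {P : Type*} [PartialOrder P] (κ : Type*) :
    Nonempty (FinSets κ ↪o P) ↔ Nonempty (Set κ ↪o {I : Set P // IsIdeal I}) := by
  constructor
  · rintro ⟨f⟩
    refine ⟨OrderEmbedding.ofMapLEIff
      (fun A => ⟨{p | ∃ S : FinSets κ, S.1 ⊆ A ∧ p ≤ f S}, ?_, ?_, ?_⟩) ?_⟩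
    · exact ⟨f ⟨∅, Set.finite_empty⟩, ⟨∅, Set.finite_empty⟩, by simp, le_rfl⟩
    · rintro x y hxy ⟨S, hS, hy⟩
      exact ⟨S, hS, hxy.trans hy⟩
    · rintro x ⟨S, hS, hx⟩ y ⟨T, hT, hy⟩
      refine ⟨f (S ⊔ T), ⟨S ⊔ T, Set.union_subset hS hT, le_rfl⟩,
        hx.trans (f.monotone le_sup_left), hy.trans (f.monotone le_sup_right)⟩
    · intro A B
      constructor
      · intro h a ha
        have hmem : f ⟨{a}, Set.finite_singleton a⟩ ∈
            {p | ∃ S : FinSets κ, S.1 ⊆ A ∧ p ≤ f S} :=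
          ⟨⟨{a}, Set.finite_singleton a⟩, Set.singleton_subset_iff.2 ha, le_rfl⟩
        obtain ⟨S, hS, hle⟩ := h hmem
        have : ({a} : Set κ) ⊆ S.1 := f.le_iff_le.1 hle
        exact hS (this rfl)
      · intro hAB p
        rintro ⟨S, hS, hp⟩
        exact ⟨S, hS.trans hAB, hp⟩
  · rintro ⟨g⟩
    -- choose q a ∈ g {a} \ g {a}ᶜ
    have hq : ∀ a : κ, ∃ x, x ∈ (g {a}).1 ∧ x ∉ (g {a}ᶜ).1 := by
      intro a
      have hns : ¬ ((g {a}).1 ⊆ (g {a}ᶜ).1) := by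
        intro hsub
        have : ({a} : Set κ) ⊆ {a}ᶜ := g.le_iff_le.1 hsub
        exact (this rfl) rfl
      exact Set.not_subset.1 hns
    set q : κ → P := fun a => (hq a).choose with hqdef
    have hkey : ∀ (a : κ) (A : Set κ), q a ∈ (g A).1 ↔ a ∈ A := by
      intro a A
      constructor
      · intro h
        by_contra hA
        have : (g A).1 ⊆ (g {a}ᶜ).1 := g.monotone (fun x hx hxa => hA (hxa ▸ hx))
        exact (hq a).choose_spec.2 (this h)
      · intro hA
        have : (g {a}).1 ⊆ (g A).1 := g.monotone (Set.singleton_subset_iff.2 hA)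
        exact this (hq a).choose_spec.1
    exact ⟨(finSetsEmb).trans (OrderEmbedding.ofMapLEIff (pFun g q)
      (fun s t => pFun_le_iff g q hkey))⟩
end

section
/- Let Ω(ω*) be the set of pairs (i,j) with i < j < ω, ordered by (i,j) ≤ (i',j') iff i' ≤ i and j ≤ j', and let Ω̲(ω*) be Ω(ω*) with a least element adjoined. Then Ω̲(ω*) does not embed into [ω]^{<ω} (finite subsets of ℕ ordered by inclusion) as a join-subsemilattice, even though it embeds as a poset. -/
/-- The poset `Ω(ω*)`: pairs `(i,j)` with `i < j < ω`, with `(i,j) ≤ (i',j')` iff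
`i' ≤ i` and `j ≤ j'`.  It is a join-semilattice with `(i,j) ⊔ (i',j') = (min i i', max j j')`. -/
def OmegaStar : Type := {p : ℕ × ℕ // p.1 < p.2}

instance : SemilatticeSup OmegaStar where
  le a b := b.1.1 ≤ a.1.1 ∧ a.1.2 ≤ b.1.2
  le_refl a := ⟨le_refl _, le_refl _⟩
  le_trans a b c hab hbc := ⟨hbc.1.trans hab.1, hab.2.trans hbc.2⟩
  le_antisymm a b hab hba := by
    apply Subtype.ext
    exact Prod.ext (le_antisymm hba.1 hab.1) (le_antisymm hab.2 hba.2)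
  sup a b := ⟨(min a.1.1 b.1.1, max a.1.2 b.1.2),
    lt_of_le_of_lt (min_le_left _ _) (lt_of_lt_of_le a.2 (le_max_left _ _))⟩
  le_sup_left a b := ⟨min_le_left _ _, le_max_left _ _⟩
  le_sup_right a b := ⟨min_le_right _ _, le_max_right _ _⟩
  sup_le a b c hac hbc := ⟨le_min hac.1 hbc.1, max_le hac.2 hbc.2⟩
/-- `A` embeds into `B` as a join-subsemilattice: an injective map preserving binary joins. -/
def JoinEmbeds (A B : Type*) [SemilatticeSup A] [SemilatticeSup B] : Prop :=
  ∃ f : A → B, Function.Injective f ∧ ∀ x y : A, f (x ⊔ y) = f x ⊔ f y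

/-- Auxiliary: the element `(i, i+d+1)` of `Ω(ω*)`, coerced into `Ω̲(ω*)`. -/
def OmegaStar.mk' (i d : ℕ) : OmegaStar := ⟨(i, i + d + 1), by omega⟩

def OmegaStar.pt (i d : ℕ) : WithBot OmegaStar := ↑(OmegaStar.mk' i d)

lemma OmegaStar.pt_sup (i d : ℕ) :
    OmegaStar.pt i 0 ⊔ OmegaStar.pt (i + d) 0 = OmegaStar.pt i d := by
  unfold OmegaStar.pt
  rw [← WithBot.coe_sup]
  congr 1
  apply Subtype.ext
  show (min i (i + d), max (i + 0 + 1) (i + d + 0 + 1)) = (i, i + d + 1)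
  rw [min_eq_left (by omega), max_eq_right (by omega)]

lemma OmegaStar.pt_le {i d i' d' : ℕ} (h1 : i' ≤ i) (h2 : i + d ≤ i' + d') :
    OmegaStar.pt i d ≤ OmegaStar.pt i' d' := by
  unfold OmegaStar.pt
  apply WithBot.coe_le_coe.2
  show i' ≤ i ∧ i + d + 1 ≤ i' + d' + 1
  omega

lemma OmegaStar.pt_inj {i d i' d' : ℕ} (h : OmegaStar.pt i d = OmegaStar.pt i' d') :
    i = i' ∧ d = d' := by
  unfold OmegaStar.pt at h
  have h2 := WithBot.coe_inj.1 h
  have h3 : ((i, i + d + 1) : ℕ × ℕ) = (i', i' + d' + 1) := congrArg Subtype.val h2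
  have h4 := congrArg Prod.fst h3
  have h5 := congrArg Prod.snd h3
  simp only at h4 h5
  omega

/-- Combinatorial core: no family of finite sets can satisfy these conditions. -/
lemma combo_false (S : ℕ → Set ℕ) (hfin : ∀ n, (S n).Finite)
    (ha : ∀ l m n, l < m → m < n → S m ⊆ S l ∪ S n)
    (hstrict : ∀ i k, i < k → ∃ y, y ∈ S i ∧ y ∉ S (i + 1) ∧ y ∉ S k) : False := by
  classical
  have key : ∀ i, ∃ y, (∀ l, l ≤ i → y ∈ S l) ∧ (∀ n, i < n → y ∉ S n) := by
    intro i
    set k : ℕ → ℕ := fun y => if h : ∃ m, i + 1 < m ∧ y ∈ S m then h.choose else 0 with hk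
    set K : ℕ := (hfin i).toFinset.sup k + i + 2 with hK
    obtain ⟨y, hyi, hyi1, hyK⟩ := hstrict i K (by omega)
    have hnot : ∀ n, i < n → y ∉ S n := by
      intro n hin hyn
      by_cases h1eq : n = i + 1
      · subst h1eq; exact hyi1 hyn
      · have h1 : i + 1 < n := by omega
        have hex : ∃ m, i + 1 < m ∧ y ∈ S m := ⟨n, h1, hyn⟩
        have hspec : i + 1 < k y ∧ y ∈ S (k y) := by
          simp only [hk, dif_pos hex]
          exact hex.choose_spec
        have hyF : y ∈ (hfin i).toFinset := (hfin i).mem_toFinset.2 hyi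
        have hkle : k y ≤ (hfin i).toFinset.sup k := Finset.le_sup hyF
        rcases eq_or_lt_of_le (show k y ≤ K by omega) with h2 | h2
        · exact hyK (h2 ▸ hspec.2)
        · rcases ha (i + 1) (k y) K hspec.1 h2 hspec.2 with h3 | h3
          · exact hyi1 h3
          · exact hyK h3
    refine ⟨y, ?_, hnot⟩
    intro l hl
    rcases eq_or_lt_of_le hl with rfl | h
    · exact hyi
    · rcases ha l i (i + 1) h (Nat.lt_succ_self _) hyi with h3 | h3
      · exact h3
      · exact absurd h3 hyi1
  choose Y hY1 hY2 using key
  have hinjY : Function.Injective Y := by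
    intro a b hab
    by_contra hne
    rcases lt_or_gt_of_ne hne with h | h
    · exact hY2 a b h (by rw [hab]; exact hY1 b b le_rfl)
    · exact hY2 b a h (by rw [← hab]; exact hY1 a a le_rfl)
  exact (Set.infinite_of_injective_forall_mem hinjY
    (fun a => hY1 a 0 (Nat.zero_le _))) (hfin 0)

/-- `Ω̲(ω*)` does not embed into `[ω]^{<ω}` as a join-subsemilattice,
although it embeds as a poset. -/
theorem stmt_2 :
    ¬ JoinEmbeds (WithBot OmegaStar) (FinSets ℕ) ∧
      Nonempty (WithBot OmegaStar ↪o FinSets ℕ) := by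
  constructor
  · rintro ⟨f, hinj, hsup⟩
    have hmono : ∀ x y : WithBot OmegaStar, x ≤ y → f x ≤ f y := by
      intro x y h
      have h2 : x ⊔ y = y := sup_eq_right.2 h
      have h3 := hsup x y
      rw [h2] at h3
      rw [h3]
      exact le_sup_left
    set S : ℕ → Set ℕ := fun n => (f (OmegaStar.pt n 0)).1 with hSdef
    have hfin : ∀ n, (S n).Finite := fun n => (f (OmegaStar.pt n 0)).2
    have ha : ∀ l m n, l < m → m < n → S m ⊆ S l ∪ S n := by
      intro l m n hlm hmn
      obtain ⟨d, rfl⟩ : ∃ d, n = l + d := ⟨n - l, by omega⟩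
      have h1 : OmegaStar.pt m 0 ≤ OmegaStar.pt l d := OmegaStar.pt_le (by omega) (by omega)
      have h2 := hmono _ _ h1
      rw [← OmegaStar.pt_sup l d, hsup] at h2
      exact h2
    have hstrict : ∀ i k, i < k → ∃ y, y ∈ S i ∧ y ∉ S (i + 1) ∧ y ∉ S k := by
      intro i k hik
      obtain ⟨d, rfl⟩ : ∃ d, k = i + (d + 1) := ⟨k - i - 1, by omega⟩
      have hlt : OmegaStar.pt (i + 1) d < OmegaStar.pt i (d + 1) := by
        refine lt_of_le_of_ne (OmegaStar.pt_le (by omega) (by omega)) ?_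
        intro h
        have := (OmegaStar.pt_inj h).1
        omega
      have hflt : f (OmegaStar.pt (i + 1) d) < f (OmegaStar.pt i (d + 1)) :=
        lt_of_le_of_ne (hmono _ _ hlt.le) (fun he => hlt.ne (hinj he))
      rw [← OmegaStar.pt_sup (i + 1) d, ← OmegaStar.pt_sup i (d + 1), hsup, hsup] at hflt
      have heq : i + 1 + d = i + (d + 1) := by omega
      rw [heq] at hflt
      have h1 : S (i + 1) ∪ S (i + (d + 1)) ⊆ S i ∪ S (i + (d + 1)) := hflt.le
      have h2 : S (i + 1) ∪ S (i + (d + 1)) ≠ S i ∪ S (i + (d + 1)) := by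
        intro hcon
        exact hflt.ne (Subtype.ext hcon)
      obtain ⟨y, hy1, hy2⟩ := Set.exists_of_ssubset (h1.ssubset_of_ne h2)
      refine ⟨y, ?_, fun h => hy2 (Or.inl h), fun h => hy2 (Or.inr h)⟩
      rcases hy1 with h | h
      · exact h
      · exact absurd (Or.inr h) hy2
    exact combo_false S hfin ha hstrict
  · refine ⟨OrderEmbedding.ofMapLEIff
      (WithBot.recBotCoe ⟨∅, Set.finite_empty⟩
        (fun a => ⟨Set.Ico a.1.1 a.1.2, Set.finite_Ico _ _⟩)) ?_⟩
    intro a b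
    induction a using WithBot.recBotCoe with
    | bot =>
      exact iff_of_true (Set.empty_subset _) bot_le
    | coe x =>
      induction b using WithBot.recBotCoe with
      | bot =>
        refine iff_of_false ?_ (WithBot.not_coe_le_bot x)
        intro h
        exact (h (Set.mem_Ico.2 ⟨le_refl _, x.2⟩) : x.1.1 ∈ (∅ : Set ℕ))
      | coe y =>
        rw [WithBot.coe_le_coe]
        exact Set.Ico_subset_Ico_iff x.2
end

section
/- If Q is a well-founded poset, then the join-semilattice Ω̲(ω*) does not embed as a join-subsemilattice into I_{<ω}(Q), the join-semilattice of finitely generated initial segments of Q ordered by inclusion. -/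
/-- Finitely generated initial segments of `Q`, ordered by inclusion. -/
def FinGenInitSeg (Q : Type*) [Preorder Q] : Type _ :=
  {S : Set Q // ∃ F : Finset Q, S = {x | ∃ y ∈ F, x ≤ y}}

instance {Q : Type*} [Preorder Q] : PartialOrder (FinGenInitSeg Q) :=
  inferInstanceAs (PartialOrder {S : Set Q // ∃ F : Finset Q, S = {x | ∃ y ∈ F, x ≤ y}})
instance {Q : Type*} [Preorder Q] : SemilatticeSup (FinGenInitSeg Q) :=
  { (inferInstance : PartialOrder (FinGenInitSeg Q)) with
    sup := fun S T => ⟨S.1 ∪ T.1, by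
      classical
      obtain ⟨F, hF⟩ := S.2
      obtain ⟨G, hG⟩ := T.2
      refine ⟨F ∪ G, ?_⟩
      ext x
      simp only [hF, hG, Set.mem_union, Set.mem_setOf_eq, Finset.mem_union]
      constructor
      · rintro (⟨y, hy, hxy⟩ | ⟨y, hy, hxy⟩)
        · exact ⟨y, Or.inl hy, hxy⟩
        · exact ⟨y, Or.inr hy, hxy⟩
      · rintro ⟨y, hy | hy, hxy⟩
        · exact Or.inl ⟨y, hy, hxy⟩
        · exact Or.inr ⟨y, hy, hxy⟩⟩
    le_sup_left := fun S T => Set.subset_union_left (s := S.1) (t := T.1)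
    le_sup_right := fun S T => Set.subset_union_right (s := S.1) (t := T.1)
    sup_le := fun _ _ _ h1 h2 => Set.union_subset h1 h2 }
namespace Stmt3Aux

/-- The element `(i,j)` of `WithBot OmegaStar` (junk `⊥` if `¬ i < j`). -/
noncomputable def osW (i j : ℕ) : WithBot OmegaStar :=
  if h : i < j then WithBot.some (⟨(i, j), h⟩ : OmegaStar) else ⊥

lemma osW_pos {i j : ℕ} (h : i < j) :
    osW i j = WithBot.some (⟨(i, j), h⟩ : OmegaStar) := dif_pos h

lemma osW_sup {i j i' j' : ℕ} (h : i < j) (h' : i' < j') :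
    osW i j ⊔ osW i' j' = osW (min i i') (max j j') := by
  have hm : min i i' < max j j' :=
    lt_of_le_of_lt (min_le_left _ _) (lt_of_lt_of_le h (le_max_left _ _))
  rw [osW_pos h, osW_pos h', osW_pos hm]
  rfl

lemma osW_inj {i j i' j' : ℕ} (h : i < j) (h' : i' < j') (he : osW i j = osW i' j') :
    i = i' ∧ j = j' := by
  rw [osW_pos h, osW_pos h'] at he
  have h2 : (⟨(i, j), h⟩ : OmegaStar) = ⟨(i', j'), h'⟩ := Option.some_injective _ he
  have h3 := congrArg Subtype.val h2
  exact ⟨congrArg Prod.fst h3, congrArg Prod.snd h3⟩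

variable {Q : Type*} [PartialOrder Q]

open Classical in
/-- Pick an element of `F i` above `x` (junk `x` if none exists). -/
noncomputable def cov (F : ℕ → Finset Q) (x : Q) (i : ℕ) : Q :=
  if h : ∃ y ∈ F i, x ≤ y then h.choose else x

lemma cov_spec {F : ℕ → Finset Q} {x : Q} {i : ℕ} (h : ∃ y ∈ F i, x ≤ y) :
    cov F x i ∈ F i ∧ x ≤ cov F x i := by
  unfold cov
  rw [dif_pos h]
  exact ⟨h.choose_spec.1, h.choose_spec.2⟩

/-- The cover chain: `chain F bm m t` is an element of `F (m - t)` above `bm`. -/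
noncomputable def chain (F : ℕ → Finset Q) (bm : Q) (m : ℕ) : ℕ → Q
  | 0 => cov F bm m
  | (t + 1) => cov F (chain F bm m t) (m - (t + 1))

lemma chain_zero (F : ℕ → Finset Q) (bm : Q) (m : ℕ) :
    chain F bm m 0 = cov F bm m := rfl

lemma chain_succ (F : ℕ → Finset Q) (bm : Q) (m t : ℕ) :
    chain F bm m (t + 1) = cov F (chain F bm m t) (m - (t + 1)) := rfl

end Stmt3Aux

open Stmt3Aux

/-- if `Q` is well-founded, `Ω̲(ω*)` does not embed as a join-subsemilattice
into `I_{<ω}(Q)`. -/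
theorem stmt_3 {Q : Type*} [PartialOrder Q]
    (hQ : WellFounded ((· < ·) : Q → Q → Prop)) :
    ¬ JoinEmbeds (WithBot OmegaStar) (FinGenInitSeg Q) := by
  classical
  rintro ⟨f, hinj, hsup⟩
  -- union law for images of pairs
  have U1 : ∀ i j i' j' : ℕ, i < j → i' < j' →
      (f (osW i j)).1 ∪ (f (osW i' j')).1 = (f (osW (min i i') (max j j'))).1 := by
    intro i j i' j' h h'
    have h2 : (f (osW i j) ⊔ f (osW i' j')).1 = (f (osW i j)).1 ∪ (f (osW i' j')).1 := rfl
    rw [← h2, ← hsup, osW_sup h h']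
  have U2 : ∀ i j i' j' : ℕ, i < j → i' < j' →
      (f (osW i j)).1 = (f (osW i' j')).1 → i = i' ∧ j = j' := by
    intro i j i' j' h h' he
    exact osW_inj h h' (hinj (Subtype.ext he))
  -- finite generating sets for the "diagonal" segments
  have hFex : ∀ m : ℕ, ∃ Fs : Finset Q, (f (osW m (m+1))).1 = {x | ∃ y ∈ Fs, x ≤ y} :=
    fun m => (f (osW m (m+1))).2
  choose F hFs using hFex
  have memF : ∀ (m : ℕ) (x : Q), x ∈ (f (osW m (m+1))).1 ↔ ∃ y ∈ F m, x ≤ y := by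
    intro m x
    rw [hFs m]
    exact Iff.rfl
  -- witnesses b m ∈ v m \ v (m+1)
  have hbex : ∀ m : ℕ, ∃ bb : Q,
      bb ∈ (f (osW m (m+1))).1 ∧ bb ∉ (f (osW (m+1) (m+2))).1 := by
    intro m
    have hu : (f (osW m (m+1))).1 ∪ (f (osW (m+1) (m+2))).1 = (f (osW m (m+2))).1 := by
      have h := U1 m (m+1) (m+1) (m+2) (by omega) (by omega)
      rwa [min_eq_left (by omega), max_eq_right (by omega)] at h
    have hne : (f (osW m (m+2))).1 ≠ (f (osW (m+1) (m+2))).1 := by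
      intro he
      have := (U2 m (m+2) (m+1) (m+2) (by omega) (by omega) he).1
      omega
    have hnsub : ¬ ((f (osW m (m+2))).1 ⊆ (f (osW (m+1) (m+2))).1) := by
      intro hs
      refine hne (Set.Subset.antisymm hs ?_)
      rw [← hu]
      exact Set.subset_union_right
    rw [Set.not_subset] at hnsub
    obtain ⟨bb, hbb1, hbb2⟩ := hnsub
    rw [← hu] at hbb1
    rcases hbb1 with h | h
    · exact ⟨bb, h, hbb2⟩
    · exact absurd h hbb2
  choose b hb1 hb2 using hbex
  -- the key step: an element of v (i+1) above b m is in v i (for i + 1 ≤ m)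
  have step : ∀ m i : ℕ, i + 1 ≤ m → ∀ x : Q,
      x ∈ (f (osW (i+1) (i+2))).1 → b m ≤ x → x ∈ (f (osW i (i+1))).1 := by
    intro m i him x hx hbx
    have hu3 : (f (osW i (i+1))).1 ∪ (f (osW (m+1) (m+2))).1 = (f (osW i (m+2))).1 := by
      have h := U1 i (i+1) (m+1) (m+2) (by omega) (by omega)
      rwa [min_eq_left (by omega), max_eq_right (by omega)] at h
    have hu4 : (f (osW (i+1) (i+2))).1 ∪ (f (osW i (m+2))).1 = (f (osW i (m+2))).1 := by
      have h := U1 (i+1) (i+2) i (m+2) (by omega) (by omega)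
      rwa [min_eq_right (by omega), max_eq_right (by omega)] at h
    have hx2 : x ∈ (f (osW i (m+2))).1 := by
      rw [← hu4]
      exact Or.inl hx
    rw [← hu3] at hx2
    rcases hx2 with h | h
    · exact h
    · exfalso
      apply hb2 m
      obtain ⟨y, hy, hxy⟩ := (memF (m+1) x).1 h
      exact (memF (m+1) (b m)).2 ⟨y, hy, le_trans hbx hxy⟩
  -- invariants of the cover chain
  have Dinv : ∀ m t : ℕ, t ≤ m →
      chain F (b m) m t ∈ F (m - t) ∧ b m ≤ chain F (b m) m t := by
    intro m t
    induction t with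
    | zero =>
      intro _
      have h0 : ∃ y ∈ F m, b m ≤ y := (memF m (b m)).1 (hb1 m)
      have hc := cov_spec h0
      rw [chain_zero]
      exact ⟨by simpa using hc.1, hc.2⟩
    | succ t ih =>
      intro hle
      have ht := ih (by omega)
      have hxv : chain F (b m) m t ∈ (f (osW (m - t) (m - t + 1))).1 :=
        (memF (m - t) _).2 ⟨_, ht.1, le_rfl⟩
      have e : m - t = (m - (t+1)) + 1 := by omega
      rw [e] at hxv
      have hstep := step m (m - (t+1)) (by omega) _ hxv ht.2
      have hex : ∃ y ∈ F (m - (t+1)), chain F (b m) m t ≤ y := (memF _ _).1 hstep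
      have hc := cov_spec hex
      rw [chain_succ]
      exact ⟨hc.1, le_trans ht.2 hc.2⟩
  have Dmono : ∀ m t : ℕ, t + 1 ≤ m → chain F (b m) m t ≤ chain F (b m) m (t+1) := by
    intro m t hle
    have ht := Dinv m t (by omega)
    have hxv : chain F (b m) m t ∈ (f (osW (m - t) (m - t + 1))).1 :=
      (memF (m - t) _).2 ⟨_, ht.1, le_rfl⟩
    have e : m - t = (m - (t+1)) + 1 := by omega
    rw [e] at hxv
    have hstep := step m (m - (t+1)) (by omega) _ hxv ht.2
    have hex : ∃ y ∈ F (m - (t+1)), chain F (b m) m t ≤ y := (memF _ _).1 hstep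
    rw [chain_succ]
    exact (cov_spec hex).2
  have Gmem : ∀ m j : ℕ, j ≤ m →
      chain F (b m) m (m - j) ∈ F j ∧ b m ≤ chain F (b m) m (m - j) := by
    intro m j h
    have h2 := Dinv m (m - j) (by omega)
    rwa [show m - (m - j) = j by omega] at h2
  have Gmono : ∀ m j : ℕ, j + 1 ≤ m →
      chain F (b m) m (m - (j+1)) ≤ chain F (b m) m (m - j) := by
    intro m j h
    have h2 := Dmono m (m - (j+1)) (by omega)
    rwa [show m - (j+1) + 1 = m - j by omega] at h2
  -- an ultrafilter extending the cofinite filter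
  obtain ⟨U, hUle⟩ := Ultrafilter.exists_le (Filter.cofinite : Filter ℕ)
  have hge : ∀ j : ℕ, {m : ℕ | j ≤ m} ∈ (U : Filter ℕ) := by
    intro j
    apply hUle
    rw [Filter.mem_cofinite]
    apply Set.Finite.subset (Set.finite_Iio j)
    intro x hx
    simp only [Set.mem_compl_iff, Set.mem_setOf_eq, not_le] at hx
    exact hx
  -- select a coherent generator at each level
  have hwex : ∀ j : ℕ, ∃ g, g ∈ F j ∧
      {m : ℕ | j ≤ m ∧ chain F (b m) m (m - j) = g} ∈ (U : Filter ℕ) := by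
    intro j
    by_contra hcon
    push_neg at hcon
    have hAll : ∀ g ∈ F j,
        {m : ℕ | j ≤ m ∧ chain F (b m) m (m - j) = g}ᶜ ∈ (U : Filter ℕ) := by
      intro g hg
      exact Ultrafilter.compl_mem_iff_notMem.2 (hcon g hg)
    have hInt : (⋂ g ∈ F j, {m : ℕ | j ≤ m ∧ chain F (b m) m (m - j) = g}ᶜ)
        ∈ (U : Filter ℕ) := (Filter.biInter_finset_mem (F j)).2 hAll
    have hmem := Filter.inter_mem (hge j) hInt
    obtain ⟨m, hm1, hm2⟩ := Ultrafilter.nonempty_of_mem hmem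
    rw [Set.mem_iInter₂] at hm2
    exact hm2 _ (Gmem m j hm1).1 ⟨hm1, rfl⟩
  choose w hw1 hw2 using hwex
  -- the selected generators form a nonincreasing sequence
  have wstep : ∀ j : ℕ, w (j+1) ≤ w j := by
    intro j
    have hmem := Filter.inter_mem (hw2 j) (hw2 (j+1))
    obtain ⟨m, hma, hmb⟩ := Ultrafilter.nonempty_of_mem hmem
    have h1 := Gmono m j hmb.1
    rw [hma.2, hmb.2] at h1
    exact h1
  have wanti : ∀ j k : ℕ, j ≤ k → w k ≤ w j := by
    intro j k
    induction k with
    | zero =>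
      intro h
      have : j = 0 := by omega
      subst this
      exact le_rfl
    | succ k ih =>
      intro h
      rcases Nat.lt_or_ge j (k+1) with h' | h'
      · exact le_trans (wstep k) (ih (by omega))
      · have : j = k + 1 := by omega
        subst this
        exact le_rfl
  -- well-foundedness: the sequence is eventually constant
  obtain ⟨x, hxr, hminx⟩ := hQ.has_min (Set.range w) ⟨w 0, ⟨0, rfl⟩⟩
  obtain ⟨N, hN⟩ := hxr
  have hconst : ∀ j : ℕ, N ≤ j → w j = x := by
    intro j hj
    have h1 : w j ≤ x := by
      rw [← hN]
      exact wanti N j hj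
    rcases eq_or_lt_of_le h1 with he | hl
    · exact he
    · exact absurd hl (hminx (w j) ⟨j, rfl⟩)
  obtain ⟨m, hm1, hm2⟩ := Ultrafilter.nonempty_of_mem (hw2 N)
  have hbm : b m ≤ x := by
    have h2 := (Gmem m N hm1).2
    rw [hm2, hconst N le_rfl] at h2
    exact h2
  have hxf : x ∈ F (m+1) := by
    rw [← hconst (m+1) (by omega)]
    exact hw1 (m+1)
  exact hb2 m ((memF (m+1) (b m)).2 ⟨x, hxf, hbm⟩)
end

section
/- An algebraic lattice L is well-founded if and only if the join-semilattice K(L) of its compact elements is well-founded and contains no join-subsemilattice isomorphic to Ω̲(ω*) or to [ω]^{<ω}. -/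
/-- The December 2024 Mathlib notion of compact element of a complete lattice. -/
def CompleteLattice.IsCompactElement {α : Type*} [CompleteLattice α] (k : α) :=
  ∀ s : Set α, k ≤ sSup s → ∃ t : Finset α, ↑t ⊆ s ∧ k ≤ t.sup id

open CompleteLattice in
instance {L : Type*} [CompleteLattice L] :
    SemilatticeSup {a : L // CompleteLattice.IsCompactElement a} :=
  { (inferInstance : PartialOrder {a : L // CompleteLattice.IsCompactElement a}) with
    sup := fun a b => ⟨a.1 ⊔ b.1, by
      intro s hs
      classical
      obtain ⟨ta, hta, ha⟩ := a.2 s (le_trans le_sup_left hs)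
      obtain ⟨tb, htb, hb⟩ := b.2 s (le_trans le_sup_right hs)
      refine ⟨ta ∪ tb, ?_, ?_⟩
      · rw [Finset.coe_union]; exact Set.union_subset hta htb
      · exact sup_le (ha.trans (Finset.sup_mono Finset.subset_union_left))
          (hb.trans (Finset.sup_mono Finset.subset_union_right))⟩
    le_sup_left := fun a b => le_sup_left (a := a.1) (b := b.1)
    le_sup_right := fun a b => le_sup_right (a := a.1) (b := b.1)
    sup_le := fun _ _ _ h1 h2 => sup_le h1 h2 }

lemma oldCompact_iff {α : Type*} [CompleteLattice α] (k : α) :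
    CompleteLattice.IsCompactElement k ↔ IsCompactElement k :=
  (CompleteLattice.isCompactElement_iff_exists_le_sSup_of_le_sSup (α := α) k).symm

-- ############ helpers ############

section JoinHelpers
variable {A B : Type*} [SemilatticeSup A] [SemilatticeSup B] {f : A → B}

lemma join_mono (hsup : ∀ x y : A, f (x ⊔ y) = f x ⊔ f y) {x y : A} (h : x ≤ y) :
    f x ≤ f y := by
  have : f x ⊔ f y = f y := by rw [← hsup, sup_eq_right.mpr h]
  exact sup_eq_right.mp this

lemma join_reflect (hinj : Function.Injective f)
    (hsup : ∀ x y : A, f (x ⊔ y) = f x ⊔ f y) {x y : A} (h : f x ≤ f y) : x ≤ y := by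
  have : f (x ⊔ y) = f y := by rw [hsup]; exact sup_eq_right.mpr h
  exact sup_eq_right.mp (hinj this)

end JoinHelpers

lemma OmegaStar.le_def {a b : OmegaStar} : a ≤ b ↔ b.1.1 ≤ a.1.1 ∧ a.1.2 ≤ b.1.2 := Iff.rfl

section Forward
variable {L : Type*} [CompleteLattice L]

local notation "K" => {a : L // CompleteLattice.IsCompactElement a}

lemma wf_K_of_wf (hL : WellFounded ((· < ·) : L → L → Prop)) :
    WellFounded ((· < ·) : K → K → Prop) :=
  Subrelation.wf (fun {a b} h => Subtype.coe_lt_coe.mpr h)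
    (InvImage.wf (fun a : K => (a : L)) hL)

/-- From a strictly descending sequence obtained from an embedding, contradict wf. -/
lemma no_descending (hL : WellFounded ((· < ·) : L → L → Prop))
    (x : ℕ → L) (hdesc : ∀ n, x (n + 1) ≤ x n) (hne : ∀ n, ¬ x n ≤ x (n + 1)) : False := by
  obtain ⟨m, ⟨n, rfl⟩, hmin⟩ := hL.has_min (Set.range x) ⟨x 0, 0, rfl⟩
  exact hmin (x (n + 1)) ⟨n + 1, rfl⟩
    (lt_of_le_of_ne (hdesc n) (fun h => hne n (le_of_eq h.symm)))

lemma no_omega_embed (hL : WellFounded ((· < ·) : L → L → Prop)) :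
    ¬ JoinEmbeds (WithBot OmegaStar) K := by
  rintro ⟨f, hinj, hsup⟩
  set g : OmegaStar → K := fun p => f (p : WithBot OmegaStar) with hg
  have ginj : Function.Injective g := fun p q h =>
    WithBot.coe_injective (hinj h)
  have gsup : ∀ p q : OmegaStar, g (p ⊔ q) = g p ⊔ g q := by
    intro p q
    have : ((p ⊔ q : OmegaStar) : WithBot OmegaStar) = (p : WithBot OmegaStar) ⊔ q :=
      WithBot.coe_sup p q
    rw [hg]; simp only []
    rw [this, hsup]
  -- the points (n, n+1+k)
  set P : ℕ → ℕ → OmegaStar := fun n k => ⟨(n, n + 1 + k), by omega⟩ with hP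
  have Ple : ∀ n k n' k', n' ≤ n → n + 1 + k ≤ n' + 1 + k' → P n k ≤ P n' k' := by
    intro n k n' k' h1 h2
    exact OmegaStar.le_def.mpr ⟨h1, h2⟩
  set x : ℕ → L := fun n => sSup (Set.range fun k => ((g (P n k) : K) : L)) with hx
  have hdesc : ∀ n, x (n + 1) ≤ x n := by
    intro n
    refine sSup_le ?_
    rintro b ⟨k, rfl⟩
    have h1 : P (n + 1) k ≤ P n (k + 1) := Ple _ _ _ _ (by omega) (by omega)
    have h2 : ((g (P (n+1) k) : K) : L) ≤ ((g (P n (k+1)) : K) : L) :=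
      Subtype.coe_le_coe.mpr (join_mono gsup h1)
    exact h2.trans (le_sSup ⟨k + 1, rfl⟩)
  have hne : ∀ n, ¬ x n ≤ x (n + 1) := by
    intro n h
    have hcomp := (g (P n 0)).2
    rw [oldCompact_iff, CompleteLattice.isCompactElement_iff_le_of_directed_sSup_le] at hcomp
    have hmono : Monotone fun k => ((g (P (n+1) k) : K) : L) := by
      intro k k' hk
      exact Subtype.coe_le_coe.mpr (join_mono gsup (Ple _ _ _ _ (le_refl _) (by omega)))
    obtain ⟨b, ⟨k₀, rfl⟩, hb⟩ :=
      hcomp (Set.range fun k => ((g (P (n+1) k) : K) : L)) (Set.range_nonempty _)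
        hmono.directed_le.directedOn_range
        (le_trans (le_sSup (Set.mem_range_self 0)) h)
    -- g (P n 0) ≤ g (P (n+1) k₀) in K
    have hK : g (P n 0) ≤ g (P (n + 1) k₀) := Subtype.coe_le_coe.mp hb
    have : ((P n 0 : OmegaStar) : WithBot OmegaStar) ≤ (P (n + 1) k₀ : OmegaStar) :=
      join_reflect hinj hsup hK
    have : P n 0 ≤ P (n + 1) k₀ := WithBot.coe_le_coe.mp this
    have h5 := (OmegaStar.le_def.mp this).1
    simp only [hP] at h5
    omega
  exact no_descending hL x hdesc hne

lemma no_finsets_embed (hL : WellFounded ((· < ·) : L → L → Prop)) :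
    ¬ JoinEmbeds (FinSets ℕ) K := by
  rintro ⟨f, hinj, hsup⟩
  set S : ℕ → ℕ → FinSets ℕ := fun n k => ⟨Set.Icc n (n + k), Set.finite_Icc _ _⟩ with hS
  have Sle : ∀ n k n' k', n' ≤ n → n + k ≤ n' + k' → S n k ≤ S n' k' := by
    intro n k n' k' h1 h2
    show Set.Icc n (n + k) ⊆ Set.Icc n' (n' + k')
    intro m hm
    simp only [Set.mem_Icc] at *
    omega
  set x : ℕ → L := fun n => sSup (Set.range fun k => ((f (S n k) : K) : L)) with hx
  have hdesc : ∀ n, x (n + 1) ≤ x n := by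
    intro n
    refine sSup_le ?_
    rintro b ⟨k, rfl⟩
    have h1 : S (n + 1) k ≤ S n (k + 1) := Sle _ _ _ _ (by omega) (by omega)
    exact (Subtype.coe_le_coe.mpr (join_mono hsup h1)).trans (le_sSup ⟨k + 1, rfl⟩)
  have hne : ∀ n, ¬ x n ≤ x (n + 1) := by
    intro n h
    have hcomp := (f (S n 0)).2
    rw [oldCompact_iff, CompleteLattice.isCompactElement_iff_le_of_directed_sSup_le] at hcomp
    have hmono : Monotone fun k => ((f (S (n+1) k) : K) : L) := by
      intro k k' hk
      exact Subtype.coe_le_coe.mpr (join_mono hsup (Sle _ _ _ _ (le_refl _) (by omega)))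
    obtain ⟨b, ⟨k₀, rfl⟩, hb⟩ :=
      hcomp (Set.range fun k => ((f (S (n+1) k) : K) : L)) (Set.range_nonempty _)
        hmono.directed_le.directedOn_range
        (le_trans (le_sSup (Set.mem_range_self 0)) h)
    have hK : f (S n 0) ≤ f (S (n + 1) k₀) := Subtype.coe_le_coe.mp hb
    have : S n 0 ≤ S (n + 1) k₀ := join_reflect hinj hsup hK
    have : (n : ℕ) ∈ Set.Icc (n+1) (n + 1 + k₀) := this (by simp [hS])
    simp only [Set.mem_Icc] at this
    omega
  exact no_descending hL x hdesc hne

end Forward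

-- ########## backward helpers ##########

section BackHelp
variable {L : Type*} [CompleteLattice L]

local notation "K" => {a : L // CompleteLattice.IsCompactElement a}

lemma bot_compact : CompleteLattice.IsCompactElement (⊥ : L) := by
  intro s _
  exact ⟨∅, by simp⟩

lemma Ksup_val (a b : K) : ((a ⊔ b : K) : L) = (a : L) ⊔ (b : L) := rfl

/-- Independent strictly monotone sequence gives a FinSets embedding. -/
lemma finsets_embed_of_indep (y : ℕ → L)
    (hcomp : ∀ n, CompleteLattice.IsCompactElement (y n)) (g : ℕ → ℕ) (hg : StrictMono g)
    (hind : ∀ r (F : Finset ℕ), (∀ m ∈ F, ∃ r', m = g r') → g r ∉ F →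
      ¬ y (g r) ≤ F.sup y) :
    JoinEmbeds (FinSets ℕ) K := by
  classical
  refine ⟨fun S => ⟨(S.2.toFinset.image g).sup y,
    (oldCompact_iff _).mpr (CompleteLattice.isCompactElement_finsetSup _ (fun x _ => (oldCompact_iff _).mp (hcomp x)))⟩, ?_, ?_⟩
  · -- injectivity
    have key : ∀ S T : FinSets ℕ,
        (S.2.toFinset.image g).sup y = (T.2.toFinset.image g).sup y → S.1 ⊆ T.1 := by
      intro S T h nn hn
      by_contra hnT
      have h1 : y (g nn) ≤ (S.2.toFinset.image g).sup y :=
        Finset.le_sup (Finset.mem_image_of_mem g (S.2.mem_toFinset.mpr hn))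
      rw [h] at h1
      refine hind nn (T.2.toFinset.image g) ?_ ?_ h1
      · intro m hm
        obtain ⟨t, _, rfl⟩ := Finset.mem_image.mp hm
        exact ⟨t, rfl⟩
      · intro hmem
        obtain ⟨t, ht, hteq⟩ := Finset.mem_image.mp hmem
        exact hnT (hg.injective hteq ▸ T.2.mem_toFinset.mp ht)
    intro S T h
    have h' := congrArg Subtype.val h
    exact Subtype.ext (le_antisymm (key S T h') (key T S h'.symm))
  · -- join-preservation
    intro S T
    apply Subtype.ext
    rw [Ksup_val]
    show ((S ⊔ T).2.toFinset.image g).sup y = _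
    have hto : (S ⊔ T).2.toFinset = S.2.toFinset ∪ T.2.toFinset := by
      ext a
      simp only [Set.Finite.mem_toFinset, Finset.mem_union]
      show a ∈ S.1 ∪ T.1 ↔ _
      simp [Set.mem_union]
    rw [hto, Finset.image_union, Finset.sup_union]

end BackHelp

section OmegaEmbed
variable {L : Type*} [CompleteLattice L]

local notation "K" => {a : L // CompleteLattice.IsCompactElement a}

lemma OmegaStar.le_def' {a b : OmegaStar} : a ≤ b ↔ b.1.1 ≤ a.1.1 ∧ a.1.2 ≤ b.1.2 := Iff.rfl

lemma OmegaStar.sup_def (a b : OmegaStar) :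
    (a ⊔ b).1 = (min a.1.1 b.1.1, max a.1.2 b.1.2) := rfl

/-- Markers with persistent absorption and non-full top points give an `Ω(ω*)` embedding. -/
lemma omega_embed_of_markers (y : ℕ → L)
    (hcomp : ∀ n, CompleteLattice.IsCompactElement (y n))
    (hbad : ∀ n (S : Finset ℕ), (∀ m ∈ S, n < m) → ¬ y n ≤ S.sup y)
    (n : ℕ → ℕ) (hmono : StrictMono n)
    (habs : ∀ p q x, p < q → n (p+1) ≤ x → x < n q →
       y x ≤ (Finset.Ico (n p) (n (p+1))).sup y ⊔ (Finset.Ico (n q) (n (q+1))).sup y)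
    (hnf : ∀ m, ¬ y (n (m+1)) ≤ (Finset.range (n (m+1))).sup y) :
    JoinEmbeds (WithBot OmegaStar) K := by
  classical
  set ff : ℕ → ℕ → L := fun i j => (Finset.Ico (n (i+1)) (n (j+1))).sup y with hff
  -- basic: membership of left marker
  have hmem : ∀ i j, i < j → y (n (i+1)) ≤ ff i j := by
    intro i j hij
    exact Finset.le_sup (Finset.mem_Ico.mpr ⟨le_rfl, hmono (by omega)⟩)
  have hsub : ∀ i j i' j', i' ≤ i → j ≤ j' → ff i j ≤ ff i' j' := by
    intro i j i' j' h1 h2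
    exact Finset.sup_mono (Finset.Ico_subset_Ico (hmono.monotone (by omega))
      (hmono.monotone (by omega)))
  -- join equality
  have joineq : ∀ i j i' j', i < j → i' < j' → i ≤ i' →
      ff i j ⊔ ff i' j' = ff i (max j j') := by
    intro i j i' j' hij hij' hii'
    apply le_antisymm
    · exact sup_le (hsub _ _ _ _ le_rfl (le_max_left _ _))
        (hsub _ _ _ _ hii' (le_max_right _ _))
    · refine Finset.sup_le ?_
      intro x hx
      obtain ⟨hx1, hx2⟩ := Finset.mem_Ico.mp hx
      rcases lt_or_ge x (n (j+1)) with hxj | hxj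
      · exact le_trans (Finset.le_sup (Finset.mem_Ico.mpr ⟨hx1, hxj⟩)) le_sup_left
      · -- x ≥ n (j+1); then j < j'
        have hjj' : j < j' := by
          by_contra hc
          have : max j j' = j := by omega
          rw [this] at hx2
          omega
        have hmax : max j j' = j' := by omega
        rw [hmax] at hx2
        rcases le_or_gt (n (i'+1)) x with hxi' | hxi'
        · exact le_trans (Finset.le_sup (Finset.mem_Ico.mpr ⟨hxi', hx2⟩)) le_sup_right
        · -- gap case : n (j+1) ≤ x < n (i'+1), so j < i'
          have hji' : j < i' := by
            have := hmono.lt_iff_lt.mp (lt_of_le_of_lt hxj hxi')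
            omega
          have := habs j (i'+1) x (by omega) hxj hxi'
          refine le_trans this (sup_le_sup ?_ ?_)
          · exact Finset.sup_mono (Finset.Ico_subset_Ico (hmono.monotone (by omega)) le_rfl)
          · exact Finset.sup_mono (Finset.Ico_subset_Ico le_rfl (hmono.monotone (by omega)))
  -- injectivity in i
  have inji : ∀ i j i' j', i < j → i' < j' → ff i j = ff i' j' → ¬ i < i' := by
    intro i j i' j' hij hij' heq hlt
    have h1 : y (n (i+1)) ≤ ff i' j' := heq ▸ hmem i j hij
    refine hbad (n (i+1)) _ ?_ h1
    intro m hm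
    have := (Finset.mem_Ico.mp hm).1
    exact lt_of_lt_of_le (hmono (by omega)) this
  -- injectivity in j
  have injj : ∀ i j j', i < j → i < j' → ff i j = ff i j' → ¬ j < j' := by
    intro i j j' hij hij' heq hlt
    have h1 : y (n (j+1)) ≤ ff i j' :=
      Finset.le_sup (Finset.mem_Ico.mpr ⟨hmono.monotone (by omega), hmono (by omega)⟩)
    rw [← heq] at h1
    refine hnf j ?_
    refine le_trans h1 (Finset.sup_mono ?_)
    intro m hm
    exact Finset.mem_range.mpr (Finset.mem_Ico.mp hm).2
  -- nonbot
  have hnbot : ∀ i j, i < j → ¬ ff i j ≤ ⊥ := by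
    intro i j hij h
    refine hbad (n (i+1)) ∅ (by simp) ?_
    simpa using le_trans (hmem i j hij) h
  -- the embedding
  refine ⟨fun w => WithBot.recBotCoe ⟨⊥, bot_compact⟩
    (fun p => ⟨ff p.1.1 p.1.2, (oldCompact_iff _).mpr (CompleteLattice.isCompactElement_finsetSup _ (fun x _ => (oldCompact_iff _).mp (hcomp x)))⟩) w,
    ?_, ?_⟩
  · -- injective
    have hval : ∀ p : OmegaStar,
        (WithBot.recBotCoe (⟨⊥, bot_compact⟩ : K)
          (fun p => ⟨ff p.1.1 p.1.2,
            (oldCompact_iff _).mpr (CompleteLattice.isCompactElement_finsetSup _ (fun x _ => (oldCompact_iff _).mp (hcomp x)))⟩)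
          (p : WithBot OmegaStar) : K).1 = ff p.1.1 p.1.2 := fun _ => rfl
    intro w w'
    cases w with
    | bot =>
      cases w' with
      | bot => intro _; rfl
      | coe q =>
        intro h
        have hv := congrArg Subtype.val h
        exact absurd (le_of_eq hv.symm) (hnbot q.1.1 q.1.2 q.2)
    | coe p =>
      cases w' with
      | bot =>
        intro h
        have hv := congrArg Subtype.val h
        exact absurd (le_of_eq hv) (hnbot p.1.1 p.1.2 p.2)
      | coe q =>
        intro h
        have hv : ff p.1.1 p.1.2 = ff q.1.1 q.1.2 := congrArg Subtype.val h
        have hi : p.1.1 = q.1.1 := by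
          have h1 := inji p.1.1 p.1.2 q.1.1 q.1.2 p.2 q.2 hv
          have h2 := inji q.1.1 q.1.2 p.1.1 p.1.2 q.2 p.2 hv.symm
          omega
        have hj : p.1.2 = q.1.2 := by
          rw [hi] at hv
          have h1 := injj q.1.1 p.1.2 q.1.2 (hi ▸ p.2) q.2 hv
          have h2 := injj q.1.1 q.1.2 p.1.2 q.2 (hi ▸ p.2) hv.symm
          omega
        have : p = q := Subtype.ext (Prod.ext hi hj)
        rw [this]
  · -- join-preserving
    intro w w'
    cases w with
    | bot =>
      cases w' with
      | bot =>
        apply Subtype.ext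
        rw [Ksup_val]
        show (⊥ : L) = ⊥ ⊔ ⊥
        simp
      | coe q =>
        apply Subtype.ext
        rw [Ksup_val]
        show ff q.1.1 q.1.2 = ⊥ ⊔ ff q.1.1 q.1.2
        simp
    | coe p =>
      cases w' with
      | bot =>
        apply Subtype.ext
        rw [Ksup_val]
        show ff p.1.1 p.1.2 = ff p.1.1 p.1.2 ⊔ ⊥
        simp
      | coe q =>
        apply Subtype.ext
        rw [Ksup_val]
        have hco : ((p : WithBot OmegaStar) ⊔ (q : WithBot OmegaStar)) = ((p ⊔ q : OmegaStar) : WithBot OmegaStar) :=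
          (WithBot.coe_sup p q).symm
        rw [hco]
        show ff (p ⊔ q).1.1 (p ⊔ q).1.2 = ff p.1.1 p.1.2 ⊔ ff q.1.1 q.1.2
        have hsup1 : (p ⊔ q).1.1 = min p.1.1 q.1.1 := by rw [OmegaStar.sup_def]
        have hsup2 : (p ⊔ q).1.2 = max p.1.2 q.1.2 := by rw [OmegaStar.sup_def]
        rw [hsup1, hsup2]
        rcases le_total p.1.1 q.1.1 with hle | hle
        · have h1 : p.1.1 ⊓ q.1.1 = p.1.1 := inf_eq_left.mpr hle
          rw [h1, ← joineq p.1.1 p.1.2 q.1.1 q.1.2 p.2 q.2 hle]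
        · have h1 : p.1.1 ⊓ q.1.1 = q.1.1 := inf_eq_right.mpr hle
          have h2 : p.1.2 ⊔ q.1.2 = q.1.2 ⊔ p.1.2 := sup_comm _ _
          rw [h1, h2, sup_comm (ff p.1.1 p.1.2) (ff q.1.1 q.1.2),
            ← joineq q.1.1 q.1.2 p.1.1 p.1.2 q.2 p.2 hle]

end OmegaEmbed

section Master
variable {L : Type*} [CompleteLattice L]

local notation "K" => {a : L // CompleteLattice.IsCompactElement a}

/-- Persistent coverage: `y k` is below `sup B ⊔ (something arbitrarily far out)`. -/
def PCp (y : ℕ → L) (B : Finset ℕ) (k : ℕ) : Prop :=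
  ∀ N : ℕ, ∃ H : Finset ℕ, (∀ m ∈ H, N < m) ∧ y k ≤ B.sup y ⊔ H.sup y

lemma PCp.mono {y : ℕ → L} {B B' : Finset ℕ} {k : ℕ} (h : PCp y B k) (hBB : B ⊆ B') :
    PCp y B' k := by
  intro N
  obtain ⟨H, h1, h2⟩ := h N
  exact ⟨H, h1, h2.trans (sup_le_sup_right (Finset.sup_mono hBB) _)⟩

theorem master (y : ℕ → L)
    (hcomp : ∀ n, CompleteLattice.IsCompactElement (y n))
    (hbad : ∀ n (S : Finset ℕ), (∀ m ∈ S, n < m) → ¬ y n ≤ S.sup y) :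
    JoinEmbeds (FinSets ℕ) K ∨ JoinEmbeds (WithBot OmegaStar) K ∨
    ∃ k₀, ∀ m, k₀ ≤ m → y m ≤ (Finset.range k₀).sup y := by
  classical
  by_cases hUB : ∀ a : ℕ, ∃ b, a < b ∧ ∀ k, b ≤ k → PCp y (Finset.Ico a b) k
  case neg =>
    -- ############ independence case : [ω]^{<ω} embeds ############
    left
    push_neg at hUB
    obtain ⟨a₀, ha₀⟩ := hUB
    -- horizon function for failed persistent coverage
    have hNNex : ∀ (G : Finset ℕ) (k : ℕ), ∃ N, ¬ PCp y G k →
        ∀ H : Finset ℕ, (∀ m ∈ H, N < m) → ¬ y k ≤ G.sup y ⊔ H.sup y := by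
      intro G k
      by_cases h : PCp y G k
      · exact ⟨0, fun hc => absurd h hc⟩
      · unfold PCp at h
        push_neg at h
        obtain ⟨N, hN⟩ := h
        exact ⟨N, fun _ => hN⟩
    choose NN hNN using hNNex
    -- choice of bad points from the failure of UB
    have ha₀' : ∀ b : ℕ, ∃ k, a₀ < b → b ≤ k ∧ ¬ PCp y (Finset.Ico a₀ b) k := by
      intro b
      by_cases h : a₀ < b
      · obtain ⟨k, h1, h2⟩ := ha₀ b h
        exact ⟨k, fun _ => ⟨h1, h2⟩⟩
      · exact ⟨0, fun hc => absurd hc h⟩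
    choose kf hkf using ha₀'
    -- the recursion on lower bounds
    set bstep : ℕ → ℕ := fun b =>
      max (kf b) (((Finset.Ico a₀ b).powerset).sup (fun G => NN G (kf b))) + 1 with hbstep
    set bseq : ℕ → ℕ := fun r => bstep^[r] (a₀ + 1) with hbseq
    have hbseq_succ : ∀ r, bseq (r + 1) = bstep (bseq r) := by
      intro r
      rw [hbseq]
      exact Function.iterate_succ_apply' bstep r (a₀ + 1)
    have hbs : ∀ r, a₀ < bseq r := by
      intro r
      induction r with
      | zero => simp [hbseq]
      | succ r ih =>
        rw [hbseq_succ]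
        have : kf (bseq r) ≤ bstep (bseq r) - 1 := by
          rw [hbstep]; simp
        have h2 := (hkf (bseq r) ih).1
        have h3 : bseq r ≤ kf (bseq r) := h2
        omega
    set g : ℕ → ℕ := fun r => kf (bseq r) with hgdef
    have hkey : ∀ r, bseq r ≤ g r ∧ ¬ PCp y (Finset.Ico a₀ (bseq r)) (g r) := by
      intro r
      exact hkf (bseq r) (hbs r)
    have hglt : ∀ r, g r < bseq (r + 1) := by
      intro r
      rw [hbseq_succ, hbstep]
      simp only []
      have hgr : g r = kf (bseq r) := rfl
      have := le_max_left (kf (bseq r)) (((Finset.Ico a₀ (bseq r)).powerset).sup (fun G => NN G (kf (bseq r))))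
      omega
    have hNNlt : ∀ r (G : Finset ℕ), G ⊆ Finset.Ico a₀ (bseq r) → NN G (g r) < bseq (r + 1) := by
      intro r G hG
      rw [hbseq_succ, hbstep]
      simp only []
      have hgr : g r = kf (bseq r) := rfl
      have h1 : NN G (g r) ≤ ((Finset.Ico a₀ (bseq r)).powerset).sup (fun G => NN G (kf (bseq r))) := by
        rw [hgr]
        exact Finset.le_sup (f := fun G => NN G (kf (bseq r))) (Finset.mem_powerset.mpr hG)
      have h2 := le_max_right (kf (bseq r)) (((Finset.Ico a₀ (bseq r)).powerset).sup (fun G => NN G (kf (bseq r))))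
      omega
    have hbmono : StrictMono bseq := by
      refine strictMono_nat_of_lt_succ ?_
      intro r
      have h1 := (hkey r).1
      have h2 := hglt r
      omega
    have hgmono : StrictMono g := by
      refine strictMono_nat_of_lt_succ ?_
      intro r
      have h1 := hglt r
      have h2 := (hkey (r + 1)).1
      omega
    -- independence
    have hind : ∀ r (F : Finset ℕ), (∀ m ∈ F, ∃ r', m = g r') → g r ∉ F →
        ¬ y (g r) ≤ F.sup y := by
      intro r F hF hgF hle
      set G := F.filter (· < g r) with hGdef
      set H := F.filter (g r < ·) with hHdef
      have hFGH : F.sup y ≤ G.sup y ⊔ H.sup y := by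
        refine Finset.sup_le ?_
        intro m hm
        rcases lt_trichotomy m (g r) with h | h | h
        · have hmG : m ∈ G := by rw [hGdef]; exact Finset.mem_filter.mpr ⟨hm, h⟩
          exact le_trans (Finset.le_sup hmG) le_sup_left
        · exact absurd (h ▸ hm) hgF
        · have hmH : m ∈ H := by rw [hHdef]; exact Finset.mem_filter.mpr ⟨hm, h⟩
          exact le_trans (Finset.le_sup hmH) le_sup_right
      have hGsub : G ⊆ Finset.Ico a₀ (bseq r) := by
        intro m hm
        rw [hGdef] at hm
        obtain ⟨hmF, hmlt⟩ := Finset.mem_filter.mp hm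
        obtain ⟨r', rfl⟩ := hF m hmF
        have hr' : r' < r := hgmono.lt_iff_lt.mp hmlt
        refine Finset.mem_Ico.mpr ⟨?_, ?_⟩
        · have h1 := hbs r'
          have h2 := (hkey r').1
          omega
        · have h1 := hglt r'
          have h2 : bseq (r' + 1) ≤ bseq r := hbmono.monotone (by omega)
          omega
      have hHfar : ∀ m ∈ H, NN G (g r) < m := by
        intro m hm
        rw [hHdef] at hm
        obtain ⟨hmF, hmgt⟩ := Finset.mem_filter.mp hm
        obtain ⟨r', rfl⟩ := hF m hmF
        have hr' : r < r' := hgmono.lt_iff_lt.mp hmgt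
        have h1 : bseq (r + 1) ≤ bseq r' := hbmono.monotone (by omega)
        have h2 := (hkey r').1
        have h3 := hNNlt r G hGsub
        omega
      have hnPC : ¬ PCp y G (g r) := by
        intro hPC
        exact (hkey r).2 (hPC.mono hGsub)
      exact hNN G (g r) hnPC H hHfar (le_trans hle hFGH)
    exact finsets_embed_of_indep y hcomp g hgmono hind
  case pos =>
    by_cases hNF : {k : ℕ | ¬ y k ≤ (Finset.range k).sup y}.Infinite
    case pos =>
      -- ############ markers case : Ω(ω*) embeds ############
      right; left
      have hstep : ∀ a : ℕ, ∃ v, a < v ∧ (∀ k, v ≤ k → PCp y (Finset.Ico a v) k) ∧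
          ¬ y v ≤ (Finset.range v).sup y ∧
          ∀ B x, B ⊆ Finset.range a → x < a → PCp y B x →
            ∃ H : Finset ℕ, (∀ m ∈ H, a < m ∧ m < v) ∧ y x ≤ B.sup y ⊔ H.sup y := by
        intro a
        obtain ⟨b, hab, hb⟩ := hUB a
        have hWex : ∀ (B : Finset ℕ) (x : ℕ), ∃ H : Finset ℕ,
            PCp y B x → (∀ m ∈ H, a < m) ∧ y x ≤ B.sup y ⊔ H.sup y := by
          intro B x
          by_cases h : PCp y B x
          · obtain ⟨H, h1, h2⟩ := h a
            exact ⟨H, fun _ => ⟨h1, h2⟩⟩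
          · exact ⟨∅, fun hc => absurd hc h⟩
        choose W hW using hWex
        set Wb : ℕ := (Finset.range a).powerset.sup
          (fun B => (Finset.range a).sup (fun x => (W B x).sup id)) with hWb
        obtain ⟨v, hvNF, hvgt⟩ := hNF.exists_gt (max b (max a Wb))
        refine ⟨v, ?_, ?_, hvNF, ?_⟩
        · have := le_max_left a Wb
          have := le_max_right b (max a Wb)
          omega
        · intro k hk
          have hbv : b ≤ v := by
            have := le_max_left b (max a Wb)
            omega
          exact (hb k (le_trans hbv hk)).mono (Finset.Ico_subset_Ico le_rfl hbv)
        · intro B x hB hx hPC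
          refine ⟨W B x, ?_, (hW B x hPC).2⟩
          intro m hm
          refine ⟨(hW B x hPC).1 m hm, ?_⟩
          have h1 : m ≤ (W B x).sup id := Finset.le_sup (f := id) hm
          have h2 : (W B x).sup id ≤ (Finset.range a).sup (fun x' => (W B x').sup id) :=
            Finset.le_sup (f := fun x' => (W B x').sup id) (Finset.mem_range.mpr hx)
          have h3 : (Finset.range a).sup (fun x' => (W B x').sup id) ≤ Wb :=
            Finset.le_sup (f := fun B => (Finset.range a).sup (fun x => (W B x).sup id))
              (Finset.mem_powerset.mpr hB)
          have h4 := le_max_right a Wb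
          have h5 := le_max_right b (max a Wb)
          omega
      choose stepf hstep1 hstep2 hstep3 hstep4 using hstep
      set nmk : ℕ → ℕ := fun m => stepf^[m] 0 with hnmk
      have hnmk_succ : ∀ m, nmk (m + 1) = stepf (nmk m) := by
        intro m
        rw [hnmk]
        exact Function.iterate_succ_apply' stepf m 0
      have hnmono : StrictMono nmk := by
        refine strictMono_nat_of_lt_succ ?_
        intro m
        rw [hnmk_succ]
        exact hstep1 (nmk m)
      have habs : ∀ p q x, p < q → nmk (p+1) ≤ x → x < nmk q →
          y x ≤ (Finset.Ico (nmk p) (nmk (p+1))).sup y ⊔ (Finset.Ico (nmk q) (nmk (q+1))).sup y := by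
        intro p q x hpq hx1 hx2
        have hPC : PCp y (Finset.Ico (nmk p) (nmk (p+1))) x := by
          rw [hnmk_succ] at hx1 ⊢
          exact hstep2 (nmk p) x hx1
        have hB : Finset.Ico (nmk p) (nmk (p+1)) ⊆ Finset.range (nmk q) := by
          intro m hm
          have h1 := (Finset.mem_Ico.mp hm).2
          have h2 : nmk (p+1) ≤ nmk q := hnmono.monotone (by omega)
          exact Finset.mem_range.mpr (by omega)
        obtain ⟨H, hH1, hH2⟩ := by
          have := hstep4 (nmk q) (Finset.Ico (nmk p) (nmk (p+1))) x hB hx2 hPC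
          rw [← hnmk_succ] at this
          exact this
        refine le_trans hH2 (sup_le_sup_left (Finset.sup_mono ?_) _)
        intro m hm
        exact Finset.mem_Ico.mpr ⟨le_of_lt (hH1 m hm).1, (hH1 m hm).2⟩
      have hnf : ∀ m, ¬ y (nmk (m+1)) ≤ (Finset.range (nmk (m+1))).sup y := by
        intro m
        rw [hnmk_succ]
        exact hstep3 (nmk m)
      exact omega_embed_of_markers y hcomp hbad nmk hnmono habs hnf
    case neg =>
      -- ############ dominated tail ############
      right; right
      rw [Set.not_infinite] at hNF
      obtain ⟨k₀', hk₀'⟩ := hNF.bddAbove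
      refine ⟨k₀' + 1, ?_⟩
      have hfull : ∀ k, k₀' + 1 ≤ k → y k ≤ (Finset.range k).sup y := by
        intro k hk
        by_contra hc
        have := hk₀' hc
        omega
      have hstab : ∀ d, (Finset.range (k₀' + 1 + d)).sup y ≤ (Finset.range (k₀' + 1)).sup y := by
        intro d
        induction d with
        | zero => exact le_rfl
        | succ d ih =>
          have he : k₀' + 1 + (d+1) = (k₀' + 1 + d) + 1 := by omega
          rw [he, Finset.range_add_one, Finset.sup_insert]
          exact sup_le (le_trans (hfull _ (by omega)) ih) ih
      intro m hm
      have he : m = k₀' + 1 + (m - (k₀' + 1)) := by omega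
      refine le_trans (hfull m hm) ?_
      calc (Finset.range m).sup y = (Finset.range (k₀' + 1 + (m - (k₀' + 1)))).sup y := by rw [← he]
        _ ≤ (Finset.range (k₀' + 1)).sup y := hstab _

end Master

section BackMain
variable {L : Type*} [CompleteLattice L] [IsCompactlyGenerated L]

local notation "K" => {a : L // CompleteLattice.IsCompactElement a}

theorem backward_dir
    (hK : WellFounded ((· < ·) : K → K → Prop))
    (hOm : ¬ JoinEmbeds (WithBot OmegaStar) K)
    (hFin : ¬ JoinEmbeds (FinSets ℕ) K) :
    WellFounded ((· < ·) : L → L → Prop) := by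
  classical
  by_contra hnwf
  rw [RelEmbedding.wellFounded_iff_isEmpty, not_isEmpty_iff] at hnwf
  obtain ⟨e⟩ := hnwf
  have hadec : ∀ {m n : ℕ}, m < n → e n < e m := by
    intro m n h
    exact e.map_rel_iff.mpr h
  have hwit : ∀ n : ℕ, ∃ c : L, CompleteLattice.IsCompactElement c ∧ c ≤ e n ∧ ¬ c ≤ e (n+1) := by
    intro n
    by_contra hc
    push_neg at hc
    have hle : e n ≤ e (n+1) := by
      conv_lhs => rw [← sSup_compact_le_eq (e n)]
      refine sSup_le ?_
      rintro c ⟨h1, h2⟩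
      exact hc c ((oldCompact_iff c).mpr h1) h2
    exact absurd hle (hadec (Nat.lt_succ_self n)).not_ge
  choose x hx1 hx2 hx3 using hwit
  have hbad : ∀ n (S : Finset ℕ), (∀ m ∈ S, n < m) → ¬ x n ≤ S.sup x := by
    intro n S hS hle
    refine hx3 n (le_trans hle ?_)
    refine Finset.sup_le ?_
    intro m hm
    have h1 : n + 1 ≤ m := hS m hm
    rcases eq_or_lt_of_le h1 with h | h
    · rw [← h]; exact hx2 (n+1)
    · exact le_trans (hx2 m) (le_of_lt (hadec h))
  have hmain : ∀ (y : ℕ → L), (∀ n, CompleteLattice.IsCompactElement (y n)) →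
      (∀ n (S : Finset ℕ), (∀ m ∈ S, n < m) → ¬ y n ≤ S.sup y) →
      ∃ k₀, ∀ m, k₀ ≤ m → y m ≤ (Finset.range k₀).sup y := by
    intro y hc hb
    rcases master y hc hb with h | h | h
    · exact absurd h hFin
    · exact absurd h hOm
    · exact h
  obtain ⟨k₀, hk₀⟩ := hmain x hx1 hbad
  set V : Set K := {v | {n : ℕ | x n ≤ (v : L)}.Infinite} with hV
  have hVne : V.Nonempty := by
    refine ⟨⟨(Finset.range k₀).sup x,
      (oldCompact_iff _).mpr (CompleteLattice.isCompactElement_finsetSup _ (fun i _ => (oldCompact_iff _).mp (hx1 i)))⟩, ?_⟩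
    show {n : ℕ | x n ≤ _}.Infinite
    apply Set.infinite_of_injective_forall_mem (f := fun m : ℕ => k₀ + m)
      (fun a b hab => Nat.add_left_cancel hab)
    intro m
    exact hk₀ (k₀ + m) (by omega)
  obtain ⟨vhat, hvhatV, hvmin⟩ := hK.has_min V hVne
  have hMinf : {n : ℕ | x n ≤ (vhat : L)}.Infinite := hvhatV
  set m₀ : ℕ := Nat.nth (fun n => x n ≤ (vhat : L)) 0 with hm₀
  have hm₀mem : x m₀ ≤ (vhat : L) := Nat.nth_mem_of_infinite hMinf 0
  have hclaim : ∀ G : Finset ℕ, (∀ g ∈ G, x g ≤ (vhat : L) ∧ m₀ < g) →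
      ¬ {k : ℕ | x k ≤ G.sup x}.Infinite := by
    intro G hG hInf
    have hcompG : CompleteLattice.IsCompactElement (G.sup x) :=
      (oldCompact_iff _).mpr (CompleteLattice.isCompactElement_finsetSup _ (fun i _ => (oldCompact_iff _).mp (hx1 i)))
    have hmemV : (⟨G.sup x, hcompG⟩ : K) ∈ V := hInf
    have hle : (⟨G.sup x, hcompG⟩ : K) ≤ vhat := by
      show G.sup x ≤ (vhat : L)
      exact Finset.sup_le (fun g hg => (hG g hg).1)
    have heq : (⟨G.sup x, hcompG⟩ : K) = vhat := by
      rcases lt_or_eq_of_le hle with h | h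
      · exact absurd h (hvmin _ hmemV)
      · exact h
    refine hbad m₀ G (fun g hg => (hG g hg).2) ?_
    have hval : G.sup x = (vhat : L) := congrArg Subtype.val heq
    rw [hval]
    exact hm₀mem
  have hp₁inf : {n : ℕ | x n ≤ (vhat : L) ∧ m₀ < n}.Infinite := by
    have hset : {n : ℕ | x n ≤ (vhat : L) ∧ m₀ < n} =
        {n : ℕ | x n ≤ (vhat : L)} \ {n : ℕ | n ≤ m₀} := by
      ext n
      simp only [Set.mem_setOf_eq, Set.mem_diff]
      constructor
      · rintro ⟨h1, h2⟩; exact ⟨h1, by omega⟩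
      · rintro ⟨h1, h2⟩; exact ⟨h1, by omega⟩
    rw [hset]
    exact hMinf.diff (Set.finite_le_nat m₀)
  set e₁ : ℕ → ℕ := Nat.nth (fun n => x n ≤ (vhat : L) ∧ m₀ < n) with he₁
  have he₁mono : StrictMono e₁ := Nat.nth_strictMono hp₁inf
  have he₁mem : ∀ r, x (e₁ r) ≤ (vhat : L) ∧ m₀ < e₁ r :=
    fun r => Nat.nth_mem_of_infinite hp₁inf r
  have hzbad : ∀ r (S : Finset ℕ), (∀ s ∈ S, r < s) →
      ¬ (fun r => x (e₁ r)) r ≤ S.sup (fun r => x (e₁ r)) := by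
    intro r S hS hle
    refine hbad (e₁ r) (S.image e₁) ?_ ?_
    · intro m hm
      obtain ⟨s, hs, rfl⟩ := Finset.mem_image.mp hm
      exact he₁mono (hS s hs)
    · rw [Finset.sup_image]
      exact hle
  obtain ⟨k₁, hk₁⟩ := hmain (fun r => x (e₁ r)) (fun r => hx1 _) hzbad
  refine hclaim ((Finset.range k₁).image e₁) ?_ ?_
  · intro g hg
    obtain ⟨s, _, rfl⟩ := Finset.mem_image.mp hg
    exact he₁mem s
  · apply Set.infinite_of_injective_forall_mem (f := fun m : ℕ => e₁ (k₁ + m))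
      (fun a b hab => by
        have := he₁mono.injective hab
        omega)
    intro m
    show x (e₁ (k₁ + m)) ≤ ((Finset.range k₁).image e₁).sup x
    rw [Finset.sup_image]
    exact hk₁ (k₁ + m) (by omega)

end BackMain

/-- an algebraic lattice `L` is well-founded iff the join-semilattice `K(L)` of
its compact elements is well-founded and contains no join-subsemilattice isomorphic to
`Ω̲(ω*)` or to `[ω]^{<ω}`. -/
theorem stmt_4 {L : Type*} [CompleteLattice L] [IsCompactlyGenerated L] :
    WellFounded ((· < ·) : L → L → Prop) ↔
      (WellFounded
          ((· < ·) : {a : L // CompleteLattice.IsCompactElement a} →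
            {a : L // CompleteLattice.IsCompactElement a} → Prop) ∧
        ¬ JoinEmbeds (WithBot OmegaStar) {a : L // CompleteLattice.IsCompactElement a} ∧
        ¬ JoinEmbeds (FinSets ℕ) {a : L // CompleteLattice.IsCompactElement a}) := by
  constructor
  · intro hL
    exact ⟨wf_K_of_wf hL, no_omega_embed hL, no_finsets_embed hL⟩
  · rintro ⟨hK, hOm, hFin⟩
    exact backward_dir hK hOm hFin
end

section
/- A join-semilattice P contains an infinite independent set if and only if it contains an infinite separating chain of ideals. -/
/-- A subset `X` of a join-semilattice is independent if `x ≰ ⋁ F` for every `x ∈ X` and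
every nonempty finite `F ⊆ X \\ {x}`. -/
def IndepSet {P : Type*} [SemilatticeSup P] (X : Set P) : Prop :=
  ∀ x ∈ X, ∀ (F : Finset P) (hF : F.Nonempty), ↑F ⊆ X \ {x} → ¬ x ≤ F.sup' hF id
/-- The ideal generated by `{x} ∪ J` in a join-semilattice, for `J` an ideal. -/
def joinIdeal {P : Type*} [SemilatticeSup P] (x : P) (J : Set P) : Set P :=
  {z | ∃ y ∈ J, z ≤ x ⊔ y}

/-- A nonempty chain `𝓘` of ideals is separating if for every `I ∈ 𝓘` with `I ≠ ⋃ 𝓘` and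
every `x ∈ ⋃ 𝓘 \\ I` there is `J ∈ 𝓘` with `I ⊄ {x} ∨ J`. -/
def Separating {P : Type*} [SemilatticeSup P] (𝓘 : Set (Set P)) : Prop :=
  ∀ I ∈ 𝓘, I ≠ ⋃₀ 𝓘 → ∀ x ∈ ⋃₀ 𝓘, x ∉ I → ∃ J ∈ 𝓘, ¬ I ⊆ joinIdeal x J

open Classical in
/-- An ideal is closed under finite suprema. -/
lemma IsIdeal.sup'_mem {P : Type*} [SemilatticeSup P] {I : Set P} (hI : IsIdeal I) :
    ∀ (F : Finset P) (hF : F.Nonempty), ↑F ⊆ I → F.sup' hF id ∈ I := by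
  obtain ⟨-, hdown, hdir⟩ := hI
  have hsup : ∀ a ∈ I, ∀ b ∈ I, a ⊔ b ∈ I := by
    intro a ha b hb
    obtain ⟨c, hc, hac, hbc⟩ := hdir a ha b hb
    exact hdown (sup_le hac hbc) hc
  intro F hF
  induction hF using Finset.Nonempty.cons_induction with
  | singleton a => intro h; simpa using h (by simp)
  | cons a s ha hs ih =>
      intro h
      rw [Finset.sup'_cons hs]
      exact hsup a (h (by simp)) _ (ih fun w hw => h (by simp [hw]))

/-- Forward direction: an infinite independent set yields an infinite separating chain. -/
lemma stmt6_forward {P : Type*} [SemilatticeSup P] (X : Set P) (hX : X.Infinite)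
    (hind : IndepSet X) :
    ∃ 𝓘 : Set (Set P), 𝓘.Infinite ∧ (∀ I ∈ 𝓘, IsIdeal I) ∧
      IsChain (· ⊆ ·) 𝓘 ∧ Separating 𝓘 := by
  classical
  set f := hX.natEmbedding
  set x : ℕ → P := fun n => (f n : P) with hxdef
  have hxX : ∀ n, x n ∈ X := fun n => (f n).2
  have hxinj : Function.Injective x := fun n m h => f.injective (Subtype.ext h)
  -- key independence consequence
  have key : ∀ (j : ℕ) (S : Finset ℕ) (hS : S.Nonempty),
      (∀ i ∈ S, i ≠ j) → ¬ x j ≤ S.sup' hS x := by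
    intro j S hS hne hle
    refine hind (x j) (hxX j) (S.image x) (hS.image x) ?_ ?_
    · intro w hw
      obtain ⟨i, hi, rfl⟩ := Finset.mem_image.mp hw
      exact ⟨hxX i, by simpa using fun h => hne i hi (hxinj h)⟩
    · rw [Finset.sup'_image]
      exact hle
  set J : ℕ → Set P :=
    fun n => {z | ∃ S : Finset ℕ, ∃ hS : S.Nonempty, (∀ i ∈ S, n ≤ i) ∧ z ≤ S.sup' hS x}
    with hJdef
  have hmemJ : ∀ n, x n ∈ J n := by
    intro n
    exact ⟨{n}, Finset.singleton_nonempty n, by simp, by simp⟩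
  have hanti : ∀ {n m : ℕ}, n ≤ m → J m ⊆ J n := by
    rintro n m hnm z ⟨S, hS, hge, hle⟩
    exact ⟨S, hS, fun i hi => hnm.trans (hge i hi), hle⟩
  have hnotJ : ∀ {j n : ℕ}, j < n → x j ∉ J n := by
    rintro j n hjn ⟨S, hS, hge, hle⟩
    exact key j S hS (fun i hi h => by have := hge i hi; omega) hle
  have hJinj : Function.Injective J := by
    intro n m h
    by_contra hne
    rcases Nat.lt_or_ge n m with hlt | hge
    · exact hnotJ hlt (h ▸ hmemJ n)
    · exact hnotJ (lt_of_le_of_ne hge (Ne.symm hne)) (h ▸ hmemJ m)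
  refine ⟨Set.range J, Set.infinite_range_of_injective hJinj, ?_, ?_, ?_⟩
  · -- each J n is an ideal
    rintro _ ⟨n, rfl⟩
    refine ⟨⟨x n, hmemJ n⟩, ?_, ?_⟩
    · rintro a b hab ⟨S, hS, hge, hle⟩
      exact ⟨S, hS, hge, hab.trans hle⟩
    · rintro a ⟨S, hS, hgeS, haS⟩ b ⟨T, hT, hgeT, hbT⟩
      have hST : (S ∪ T).Nonempty := hS.mono Finset.subset_union_left
      have h1 : S.sup' hS x ≤ (S ∪ T).sup' hST x :=
        Finset.sup'_le _ _ fun i hi => Finset.le_sup' x (Finset.mem_union_left _ hi)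
      have h2 : T.sup' hT x ≤ (S ∪ T).sup' hST x :=
        Finset.sup'_le _ _ fun i hi => Finset.le_sup' x (Finset.mem_union_right _ hi)
      refine ⟨(S ∪ T).sup' hST x, ⟨S ∪ T, hST, ?_, le_refl _⟩,
        haS.trans h1, hbT.trans h2⟩
      intro i hi
      rcases Finset.mem_union.mp hi with h | h
      exacts [hgeS i h, hgeT i h]
  · -- chain
    rintro _ ⟨n, rfl⟩ _ ⟨m, rfl⟩ -
    rcases le_total n m with h | h
    · exact Or.inr (hanti h)
    · exact Or.inl (hanti h)
  · -- separating
    rintro _ ⟨n, rfl⟩ - a ha -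
    obtain ⟨_, ⟨m, rfl⟩, ham⟩ := ha
    obtain ⟨S, hS, -, haS⟩ := ham
    set j : ℕ := max (S.max' hS + 1) n with hjdef
    have hjn : n ≤ j := le_max_right _ _
    have hjS : ∀ i ∈ S, i < j := fun i hi =>
      lt_of_lt_of_le (Nat.lt_succ_of_le (S.le_max' i hi)) (le_max_left _ _)
    refine ⟨J (j + 1), ⟨j + 1, rfl⟩, fun hsub => ?_⟩
    have hxj : x j ∈ J n := ⟨{j}, Finset.singleton_nonempty j, by simpa using hjn, by simp⟩
    obtain ⟨y, ⟨T, hT, hgeT, hyT⟩, hle⟩ := hsub hxj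
    have hST : (S ∪ T).Nonempty := hS.mono Finset.subset_union_left
    have h1 : S.sup' hS x ≤ (S ∪ T).sup' hST x :=
      Finset.sup'_le _ _ fun i hi => Finset.le_sup' x (Finset.mem_union_left _ hi)
    have h2 : T.sup' hT x ≤ (S ∪ T).sup' hST x :=
      Finset.sup'_le _ _ fun i hi => Finset.le_sup' x (Finset.mem_union_right _ hi)
    refine key j (S ∪ T) hST ?_ (hle.trans (sup_le (haS.trans h1) (hyT.trans h2)))
    intro i hi
    rcases Finset.mem_union.mp hi with h | h
    · exact Nat.ne_of_lt (hjS i h)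
    · have := hgeT i h; omega

/-- Backward direction: an infinite separating chain yields an infinite independent set. -/
lemma stmt6_backward {P : Type*} [SemilatticeSup P] (𝓘 : Set (Set P)) (hinf : 𝓘.Infinite)
    (hid : ∀ I ∈ 𝓘, IsIdeal I) (hch : IsChain (· ⊆ ·) 𝓘) (hsep : Separating 𝓘) :
    ∃ X : Set P, X.Infinite ∧ IndepSet X := by
  classical
  -- joins of elements of the union stay in the union
  have mem_sup : ∀ {I}, I ∈ 𝓘 → ∀ {a b : P}, a ∈ I → b ∈ I → a ⊔ b ∈ I := by
    intro I hI a b ha hb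
    obtain ⟨-, hdown, hdir⟩ := hid I hI
    obtain ⟨c, hc, hac, hbc⟩ := hdir a ha b hb
    exact hdown (sup_le hac hbc) hc
  have union_sup : ∀ {a b : P}, a ∈ ⋃₀ 𝓘 → b ∈ ⋃₀ 𝓘 → a ⊔ b ∈ ⋃₀ 𝓘 := by
    rintro a b ⟨A, hA, haA⟩ ⟨B, hB, hbB⟩
    rcases eq_or_ne A B with rfl | hne
    · exact ⟨A, hA, mem_sup hA haA hbB⟩
    · rcases hch hA hB hne with h | h
      · exact ⟨B, hB, mem_sup hB (h haA) hbB⟩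
      · exact ⟨A, hA, mem_sup hA haA (h hbB)⟩
  -- the key step from the separating property
  have key : ∀ K ∈ 𝓘, ∀ a ∈ ⋃₀ 𝓘, a ∉ K →
      ∃ K' ∈ 𝓘, K' ⊆ K ∧ ∃ z ∈ K, z ∉ K' ∧ ∀ y ∈ K', ¬ z ≤ a ⊔ y := by
    intro K hK a ha haK
    have hne : K ≠ ⋃₀ 𝓘 := fun h => haK (h ▸ ha)
    obtain ⟨Jm, hJm, hnsub⟩ := hsep K hK hne a ha haK
    obtain ⟨z, hzK, hzJ⟩ := Set.not_subset.mp hnsub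
    have hzy : ∀ y ∈ Jm, ¬ z ≤ a ⊔ y := fun y hy hle => hzJ ⟨y, hy, hle⟩
    have hznJ : z ∉ Jm := fun h => hzy z h le_sup_right
    have hJK : Jm ≠ K := fun h => hznJ (h ▸ hzK)
    rcases hch hJm hK hJK with h | h
    · exact ⟨Jm, hJm, h, z, hzK, hznJ, hzy⟩
    · exact absurd (h hzK) hznJ
  -- initial data
  obtain ⟨A, hA, B, hB, hAB⟩ := hinf.nontrivial
  obtain ⟨K₀, hK₀, x₀, hx₀U, hx₀K⟩ :
      ∃ K₀ ∈ 𝓘, ∃ x₀ ∈ ⋃₀ 𝓘, x₀ ∉ K₀ := by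
    rcases hch hA hB hAB with h | h
    · obtain ⟨x, hxB, hxA⟩ := Set.not_subset.mp
        (fun h' => hAB (Set.Subset.antisymm h h'))
      exact ⟨A, hA, x, ⟨B, hB, hxB⟩, hxA⟩
    · obtain ⟨x, hxA, hxB⟩ := Set.not_subset.mp
        (fun h' => hAB (Set.Subset.antisymm h' h))
      exact ⟨B, hB, x, ⟨A, hA, hxA⟩, hxB⟩
  -- states: (current ideal, current accumulated join)
  let St := {p : Set P × P // p.1 ∈ 𝓘 ∧ p.2 ∈ ⋃₀ 𝓘 ∧ p.2 ∉ p.1}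
  have hstep : ∀ st : St, ∃ q : St × P, q.1.1.1 ⊆ st.1.1 ∧ q.2 ∈ st.1.1 ∧ q.2 ∉ q.1.1.1 ∧
      q.1.1.2 = st.1.2 ⊔ q.2 ∧ ∀ y ∈ q.1.1.1, ¬ q.2 ≤ st.1.2 ⊔ y := by
    rintro ⟨⟨K, s⟩, hK, hs, hsK⟩
    obtain ⟨K', hK', hsub, z, hzK, hzK', hzy⟩ := key K hK s hs hsK
    have hzU : z ∈ ⋃₀ 𝓘 := ⟨K, hK, hzK⟩
    have hs'U : s ⊔ z ∈ ⋃₀ 𝓘 := union_sup hs hzU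
    have hs'K' : s ⊔ z ∉ K' := fun h => hzK' ((hid K' hK').2.1 le_sup_right h)
    exact ⟨⟨⟨(K', s ⊔ z), hK', hs'U, hs'K'⟩, z⟩, hsub, hzK, hzK', rfl, hzy⟩
  choose step hstep1 hstep2 hstep3 hstep4 hstep5 using hstep
  let state : ℕ → St := fun n => Nat.rec ⟨(K₀, x₀), hK₀, hx₀U, hx₀K⟩
    (fun _ st => (step st).1) n
  have hstate : ∀ n, state (n + 1) = (step (state n)).1 := fun n => rfl
  let z : ℕ → P := fun n => (step (state n)).2
  let K : ℕ → Set P := fun n => (state n).1.1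
  let s : ℕ → P := fun n => (state n).1.2
  have hKmem : ∀ n, K n ∈ 𝓘 := fun n => (state n).2.1
  have hKsub : ∀ n, K (n + 1) ⊆ K n := fun n => hstep1 (state n)
  have hzK : ∀ n, z n ∈ K n := fun n => hstep2 (state n)
  have hzK' : ∀ n, z n ∉ K (n + 1) := fun n => hstep3 (state n)
  have hs' : ∀ n, s (n + 1) = s n ⊔ z n := fun n => hstep4 (state n)
  have hzy : ∀ n, ∀ y ∈ K (n + 1), ¬ z n ≤ s n ⊔ y := fun n => hstep5 (state n)
  have hKanti : ∀ {n m : ℕ}, n ≤ m → K m ⊆ K n := by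
    intro n m h
    induction m, h using Nat.le_induction with
    | base => exact subset_refl _
    | succ m hm ih => exact (hKsub m).trans ih
  have hsmono : ∀ {n m : ℕ}, n ≤ m → s n ≤ s m := by
    intro n m h
    induction m, h using Nat.le_induction with
    | base => exact le_refl _
    | succ m hm ih => exact ih.trans (by rw [hs' m]; exact le_sup_left)
  have hzs : ∀ {i n : ℕ}, i < n → z i ≤ s n := by
    intro i n h
    have : z i ≤ s (i + 1) := by rw [hs' i]; exact le_sup_right
    exact this.trans (hsmono h)
  have hzinj : Function.Injective z := by
    intro i m h
    rcases Nat.lt_trichotomy i m with hlt | heq | hlt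
    · have : z i ∈ K (i + 1) := by rw [h]; exact hKanti (Nat.succ_le_of_lt hlt) (hzK m)
      exact absurd this (hzK' i)
    · exact heq
    · have : z m ∈ K (m + 1) := by rw [← h]; exact hKanti (Nat.succ_le_of_lt hlt) (hzK i)
      exact absurd this (hzK' m)
  refine ⟨Set.range z, Set.infinite_range_of_injective hzinj, ?_⟩
  rintro _ ⟨n, rfl⟩ F hF hFsub hle
  -- every element of F is some z i with i ≠ n
  have hFform : ∀ w ∈ F, ∃ i, i ≠ n ∧ w = z i := by
    intro w hw
    obtain ⟨⟨i, rfl⟩, hwne⟩ := hFsub hw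
    exact ⟨i, fun h => hwne (by rw [h]; exact Set.mem_singleton _), rfl⟩
  obtain ⟨y₀, hy₀⟩ := (hid (K (n + 1)) (hKmem (n + 1))).1
  set G : Finset P := insert y₀ (F.filter (· ∈ K (n + 1))) with hGdef
  have hGne : G.Nonempty := ⟨y₀, Finset.mem_insert_self _ _⟩
  set y : P := G.sup' hGne id with hydef
  have hyK : y ∈ K (n + 1) := by
    refine (hid (K (n + 1)) (hKmem (n + 1))).sup'_mem G hGne ?_
    intro w hw
    rcases Finset.mem_insert.mp hw with rfl | hw
    · exact hy₀
    · exact (Finset.mem_filter.mp hw).2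
  have hFle : ∀ w ∈ F, w ≤ s n ⊔ y := by
    intro w hw
    obtain ⟨i, hin, rfl⟩ := hFform w hw
    rcases Nat.lt_or_ge i n with h | h
    · exact (hzs h).trans le_sup_left
    · have hiK : z i ∈ K (n + 1) := hKanti (show n + 1 ≤ i by omega) (hzK i)
      have : z i ≤ y := Finset.le_sup' id
        (Finset.mem_insert_of_mem (Finset.mem_filter.mpr ⟨hw, hiK⟩))
      exact this.trans le_sup_right
  exact hzy n y hyK (hle.trans (Finset.sup'_le _ _ hFle))

/-- a join-semilattice contains an infinite independent set iff it contains an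
infinite separating chain of ideals. -/
theorem stmt_6 {P : Type*} [SemilatticeSup P] :
    (∃ X : Set P, X.Infinite ∧ IndepSet X) ↔
      (∃ 𝓘 : Set (Set P), 𝓘.Infinite ∧ (∀ I ∈ 𝓘, IsIdeal I) ∧
        IsChain (· ⊆ ·) 𝓘 ∧ Separating 𝓘) := by
  constructor
  · rintro ⟨X, hX, hind⟩
    exact stmt6_forward X hX hind
  · rintro ⟨𝓘, hinf, hid, hch, hsep⟩
    exact stmt6_backward 𝓘 hinf hid hch hsep
end

section
/- A join-semilattice P contains either ω* (an infinite strictly decreasing sequence) or Ω(ω*) as a join-subsemilattice if and only if P contains an ω*-indexed strictly decreasing chain 𝓘 of ideals such that every infinite subchain of 𝓘 is non-separating. -/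
namespace Stmt7Aux

theorem omega_le (a b : OmegaStar) : a ≤ b ↔ b.1.1 ≤ a.1.1 ∧ a.1.2 ≤ b.1.2 := Iff.rfl

theorem omega_sup (a b : OmegaStar) :
    (a ⊔ b).1 = (min a.1.1 b.1.1, max a.1.2 b.1.2) := rfl

section
variable {A B : Type*} [SemilatticeSup A] [SemilatticeSup B] {f : A → B}

theorem join_mono (hf : ∀ x y, f (x ⊔ y) = f x ⊔ f y) {a b : A} (h : a ≤ b) : f a ≤ f b := by
  have h1 := hf a b
  rw [sup_eq_right.mpr h] at h1
  exact h1 ▸ le_sup_left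

theorem join_reflect (hinj : Function.Injective f) (hf : ∀ x y, f (x ⊔ y) = f x ⊔ f y)
    {a b : A} (h : f a ≤ f b) : a ≤ b := by
  have h1 : f (a ⊔ b) = f b := by rw [hf]; exact sup_eq_right.mpr h
  have := hinj h1
  exact le_sup_left.trans_eq this

end

section
variable {P : Type*} [SemilatticeSup P]

theorem sup_mem_ideal {I : Set P} (h : IsIdeal I) {a b : P} (ha : a ∈ I) (hb : b ∈ I) :
    a ⊔ b ∈ I := by
  obtain ⟨z, hz, haz, hbz⟩ := h.2.2 a ha b hb
  exact h.2.1 (sup_le haz hbz) hz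

theorem finset_bound {I : Set P} (h : IsIdeal I) {α : Type*} [DecidableEq α] (S : Finset α)
    (g : α → P) : (∀ a ∈ S, g a ∈ I) → ∃ z ∈ I, ∀ a ∈ S, g a ≤ z := by
  induction S using Finset.induction_on with
  | empty => intro _; obtain ⟨e, he⟩ := h.1; exact ⟨e, he, by simp⟩
  | @insert a S hna ih =>
    intro hg
    obtain ⟨z, hz, hzb⟩ := ih (fun b hb => hg b (Finset.mem_insert_of_mem hb))
    refine ⟨g a ⊔ z, sup_mem_ideal h (hg a (Finset.mem_insert_self _ _)) hz, ?_⟩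
    intro b hb
    rcases Finset.mem_insert.mp hb with rfl | hb
    · exact le_sup_left
    · exact (hzb b hb).trans le_sup_right

end

def natRecIdx {α : Type*} (a : α) (f : ℕ → α → α) : ℕ → α
  | 0 => a
  | n + 1 => f n (natRecIdx a f n)

section W
variable {P : Type*} [SemilatticeSup P]

def Phi (I : ℕ → Set P) (M : ℕ → ℕ) (xt : ℕ → P) (j : ℕ) (v : ℕ → P) (w' : P) : Prop :=
  w' ∈ I (M j) ∧ (∀ t s, t < s → s ≤ j → xt s ≤ xt t ⊔ w') ∧
  (∀ t m, t < m → m < j → v m ≤ xt t ⊔ w') ∧ (∀ t m, t < m → m < j → ¬ w' ≤ xt t ⊔ v m)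

open Classical in
noncomputable def chooser (I : ℕ → Set P) (M : ℕ → ℕ) (xt : ℕ → P) (e : P) (j : ℕ)
    (v : ℕ → P) : P :=
  if h : ∃ w', Phi I M xt j v w' then h.choose else e

theorem chooser_spec {I : ℕ → Set P} {M : ℕ → ℕ} {xt : ℕ → P} {e : P} {j : ℕ} {v : ℕ → P}
    (h : ∃ w', Phi I M xt j v w') : Phi I M xt j v (chooser I M xt e j v) := by
  unfold chooser
  rw [dif_pos h]
  exact h.choose_spec

noncomputable def pre (I : ℕ → Set P) (M : ℕ → ℕ) (xt : ℕ → P) (e : P) : ℕ → ℕ → P :=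
  natRecIdx (fun _ => e) (fun j' v m => if m = j' + 1 then chooser I M xt e (j' + 1) v else v m)

noncomputable def wseq (I : ℕ → Set P) (M : ℕ → ℕ) (xt : ℕ → P) (e : P) (j : ℕ) : P :=
  pre I M xt e j j

theorem pre_succ (I : ℕ → Set P) (M : ℕ → ℕ) (xt : ℕ → P) (e : P) (j m : ℕ) :
    pre I M xt e (j + 1) m =
      if m = j + 1 then chooser I M xt e (j + 1) (pre I M xt e j) else pre I M xt e j m := rfl

theorem wseq_succ (I : ℕ → Set P) (M : ℕ → ℕ) (xt : ℕ → P) (e : P) (j : ℕ) :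
    wseq I M xt e (j + 1) = chooser I M xt e (j + 1) (pre I M xt e j) := by
  show pre I M xt e (j + 1) (j + 1) = _
  rw [pre_succ, if_pos rfl]

theorem pre_agree (I : ℕ → Set P) (M : ℕ → ℕ) (xt : ℕ → P) (e : P) :
    ∀ j m, m ≤ j → pre I M xt e j m = wseq I M xt e m := by
  intro j
  induction j with
  | zero => intro m hm; rw [Nat.le_zero.mp hm]; rfl
  | succ j ih =>
    intro m hm
    rcases eq_or_lt_of_le hm with rfl | hlt
    · rfl
    · rw [pre_succ, if_neg (by omega)]
      exact ih m (by omega)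

theorem wseq_invariant (I : ℕ → Set P) (M : ℕ → ℕ) (xt : ℕ → P) (e : P)
    (hPhiEx : ∀ j (v : ℕ → P), (∀ m, 1 ≤ m → m < j → v m ∈ I (M m)) → ∃ w', Phi I M xt j v w') :
    ∀ j, 1 ≤ j → Phi I M xt j (fun m => wseq I M xt e m) (wseq I M xt e j) := by
  intro j
  induction j using Nat.strong_induction_on with
  | _ j ih =>
    intro hj
    obtain ⟨j', rfl⟩ : ∃ j', j = j' + 1 := ⟨j - 1, by omega⟩
    have hv : ∀ m, 1 ≤ m → m < j' + 1 → pre I M xt e j' m ∈ I (M m) := by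
      intro m h1 h2
      rw [pre_agree I M xt e j' m (by omega)]
      exact (ih m h2 h1).1
    have hspec := chooser_spec (e := e) (hPhiEx (j' + 1) (pre I M xt e j') hv)
    rw [← wseq_succ] at hspec
    obtain ⟨h1, h2, h3, h4⟩ := hspec
    refine ⟨h1, h2, ?_, ?_⟩
    · intro t m htm hmj
      have := h3 t m htm hmj
      rwa [pre_agree I M xt e j' m (by omega)] at this
    · intro t m htm hmj
      have := h4 t m htm hmj
      rwa [pre_agree I M xt e j' m (by omega)] at this

end W

end Stmt7Aux

namespace Stmt7Aux

section Backward
variable {P : Type*} [SemilatticeSup P]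

theorem backward (I : ℕ → Set P) (hId : ∀ n, IsIdeal (I n)) (hA : StrictAnti I)
    (hNS : ∀ S : Set ℕ, S.Infinite → ¬ Separating (I '' S)) :
    (∃ g : ℕ → P, StrictAnti g) ∨ JoinEmbeds OmegaStar P := by
  classical
  have hsub : ∀ {a b : ℕ}, a ≤ b → I b ⊆ I a := fun hab => hA.antitone hab
  have hUnion : ∀ c : ℕ, ⋃₀ (I '' Set.Ici c) = I c := by
    intro c
    apply subset_antisymm
    · rintro z ⟨J, ⟨m, hm, rfl⟩, hz⟩
      exact hsub hm hz
    · intro z hz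
      exact ⟨I c, ⟨c, le_refl c, rfl⟩, hz⟩
  have step : ∀ c : ℕ, ∃ n x, c < n ∧ x ∈ I c ∧ x ∉ I n ∧
      ∀ k, c ≤ k → ∀ z ∈ I n, ∃ y ∈ I k, z ≤ x ⊔ y := by
    intro c
    have h := hNS _ (Set.Ici_infinite c)
    rw [Separating] at h
    push_neg at h
    obtain ⟨J, hJmem, hJne, x, hxU, hxJ, hall⟩ := h
    obtain ⟨n, hn, rfl⟩ := hJmem
    rw [hUnion c] at hJne hxU
    have hnc : c < n := lt_of_le_of_ne hn (by rintro rfl; exact hJne rfl)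
    refine ⟨n, x, hnc, hxU, hxJ, ?_⟩
    intro k hk z hz
    exact hall (I k) ⟨k, hk, rfl⟩ hz
  choose F X hlt hmem hnot hcov using step
  by_cases hesc : ∀ K : ℕ, ∃ K' b, K < K' ∧ b ∈ I K ∧ b ∉ I K' ∧ ∀ z ∈ I K', z ≤ b
  · left
    choose F' B h1 h2 h3 h4 using hesc
    set L : ℕ → ℕ := natRecIdx 0 (fun _ p => F' p) with hL
    refine ⟨fun m => B (L m), strictAnti_nat_of_succ_lt ?_⟩
    intro m
    have hstep : L (m + 1) = F' (L m) := rfl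
    have hmem2 : B (L (m + 1)) ∈ I (F' (L m)) := by rw [← hstep]; exact h2 (L (m + 1))
    have hle : B (L (m + 1)) ≤ B (L m) := h4 (L m) _ hmem2
    refine lt_of_le_of_ne hle ?_
    intro heq
    exact h3 (L m) (heq ▸ hmem2)
  · push_neg at hesc
    obtain ⟨K, hK⟩ := hesc
    right
    set M : ℕ → ℕ := natRecIdx K (fun _ p => F p) with hMdef
    have hM0 : M 0 = K := rfl
    have hMsucc : ∀ t, M (t + 1) = F (M t) := fun t => rfl
    have hMlt : ∀ t, M t < M (t + 1) := fun t => by rw [hMsucc]; exact hlt (M t)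
    have hMmono : StrictMono M := strictMono_nat_of_lt_succ hMlt
    set xt : ℕ → P := fun t => X (M t) with hxt
    have hxmem : ∀ t, xt t ∈ I (M t) := fun t => hmem (M t)
    have hxnot : ∀ t, xt t ∉ I (M (t + 1)) := fun t => by rw [hMsucc]; exact hnot (M t)
    have hxcov : ∀ t k, M t ≤ k → ∀ z ∈ I (M (t + 1)), ∃ y ∈ I k, z ≤ xt t ⊔ y := by
      intro t k hk z hz
      rw [hMsucc] at hz
      exact hcov (M t) k hk z hz
    have hIsub : ∀ {a b : ℕ}, a ≤ b → I (M b) ⊆ I (M a) :=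
      fun hab => hsub (hMmono.monotone hab)
    have hIK : ∀ t, I (M t) ⊆ I K := fun t => by
      rw [← hM0]; exact hIsub (Nat.zero_le t)
    have nE : ∀ j, 1 ≤ j → ∀ c : P, c ∈ I K → c ∉ I (M j) → ∃ u ∈ I (M j), ¬ u ≤ c := by
      intro j hj c hc hcn
      have hKj : K < M j := by
        have := hMmono (show 0 < j from hj)
        rwa [hM0] at this
      exact hK (M j) c hKj hc hcn
    -- existence of good w' at each stage
    have ePhi : ∀ j (v : ℕ → P), (∀ m, 1 ≤ m → m < j → v m ∈ I (M m)) →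
        ∃ w', Phi I M xt j v w' := by
      intro j v hv
      obtain ⟨e, he⟩ := (hId (M j)).1
      -- (A) choices
      have hAex : ∀ t s, t < s → s ≤ j → ∃ y ∈ I (M j), xt s ≤ xt t ⊔ y := by
        intro t s hts hsj
        exact hxcov t (M j) (hMmono.monotone (by omega)) (xt s)
          (hIsub (show t + 1 ≤ s from hts) (hxmem s))
      have hBex : ∀ t m, t < m → m < j → ∃ y ∈ I (M j), v m ≤ xt t ⊔ y := by
        intro t m htm hmj
        exact hxcov t (M j) (hMmono.monotone (by omega)) (v m)
          (hIsub (show t + 1 ≤ m from htm) (hv m (by omega) hmj))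
      have hUex : ∀ t m, t < m → m < j → ∃ u ∈ I (M j), ¬ u ≤ xt t ⊔ v m := by
        intro t m htm hmj
        apply nE j (by omega)
        · exact sup_mem_ideal (hId K) (hIK t (hxmem t)) (hIK m (hv m (by omega) hmj))
        · intro hcmem
          exact hxnot t ((hId (M (t + 1))).2.1 le_sup_left
            (hIsub (show t + 1 ≤ j from by omega) hcmem))
      set T : Finset (ℕ × ℕ) := Finset.range (j + 1) ×ˢ Finset.range (j + 1) with hT
      have hmemT : ∀ a b : ℕ, a ≤ j → b ≤ j → (a, b) ∈ T := by
        intro a b ha hb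
        rw [hT, Finset.mem_product]
        exact ⟨Finset.mem_range.mpr (by omega), Finset.mem_range.mpr (by omega)⟩
      -- gA
      have gAfull : ∃ zA ∈ I (M j), ∀ t s, t < s → s ≤ j → xt s ≤ xt t ⊔ zA := by
        set gA : ℕ × ℕ → P := fun p =>
          if h : p.1 < p.2 ∧ p.2 ≤ j then (hAex p.1 p.2 h.1 h.2).choose else e with hgA
        have gAmem : ∀ p, gA p ∈ I (M j) := by
          intro p
          rw [hgA]
          dsimp only
          split
          · next h => exact (hAex p.1 p.2 h.1 h.2).choose_spec.1
          · exact he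
        obtain ⟨zA, hzA, hzAb⟩ := finset_bound (hId (M j)) T gA (fun p _ => gAmem p)
        refine ⟨zA, hzA, ?_⟩
        intro t s hts hsj
        have hsp := (hAex t s hts hsj).choose_spec.2
        have hle : gA (t, s) = (hAex t s hts hsj).choose := by
          rw [hgA]; dsimp only; rw [dif_pos ⟨hts, hsj⟩]
        have : gA (t, s) ≤ zA := hzAb (t, s) (hmemT t s (by omega) hsj)
        rw [hle] at this
        exact hsp.trans (sup_le_sup_left this _)
      obtain ⟨zA, hzA, hzAp⟩ := gAfull
      have gBfull : ∃ zB ∈ I (M j), ∀ t m, t < m → m < j → v m ≤ xt t ⊔ zB := by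
        set gB : ℕ × ℕ → P := fun p =>
          if h : p.1 < p.2 ∧ p.2 < j then (hBex p.1 p.2 h.1 h.2).choose else e with hgB
        have gBmem : ∀ p, gB p ∈ I (M j) := by
          intro p
          rw [hgB]
          dsimp only
          split
          · next h => exact (hBex p.1 p.2 h.1 h.2).choose_spec.1
          · exact he
        obtain ⟨zB, hzB, hzBb⟩ := finset_bound (hId (M j)) T gB (fun p _ => gBmem p)
        refine ⟨zB, hzB, ?_⟩
        intro t m htm hmj
        have hsp := (hBex t m htm hmj).choose_spec.2
        have hle : gB (t, m) = (hBex t m htm hmj).choose := by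
          rw [hgB]; dsimp only; rw [dif_pos ⟨htm, hmj⟩]
        have : gB (t, m) ≤ zB := hzBb (t, m) (hmemT t m (by omega) (by omega))
        rw [hle] at this
        exact hsp.trans (sup_le_sup_left this _)
      obtain ⟨zB, hzB, hzBp⟩ := gBfull
      have gUfull : ∃ zU ∈ I (M j), ∀ t m, t < m → m < j →
          ∃ u, u ≤ zU ∧ ¬ u ≤ xt t ⊔ v m := by
        set gU : ℕ × ℕ → P := fun p =>
          if h : p.1 < p.2 ∧ p.2 < j then (hUex p.1 p.2 h.1 h.2).choose else e with hgU
        have gUmem : ∀ p, gU p ∈ I (M j) := by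
          intro p
          rw [hgU]
          dsimp only
          split
          · next h => exact (hUex p.1 p.2 h.1 h.2).choose_spec.1
          · exact he
        obtain ⟨zU, hzU, hzUb⟩ := finset_bound (hId (M j)) T gU (fun p _ => gUmem p)
        refine ⟨zU, hzU, ?_⟩
        intro t m htm hmj
        have hsp := (hUex t m htm hmj).choose_spec.2
        have hle : gU (t, m) = (hUex t m htm hmj).choose := by
          rw [hgU]; dsimp only; rw [dif_pos ⟨htm, hmj⟩]
        refine ⟨gU (t, m), hzUb (t, m) (hmemT t m (by omega) (by omega)), ?_⟩
        rw [hle]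
        exact hsp
      obtain ⟨zU, hzU, hzUp⟩ := gUfull
      refine ⟨zA ⊔ (zB ⊔ zU), sup_mem_ideal (hId (M j)) hzA (sup_mem_ideal (hId (M j)) hzB hzU),
        ?_, ?_, ?_⟩
      · intro t s hts hsj
        exact (hzAp t s hts hsj).trans (sup_le_sup_left le_sup_left _)
      · intro t m htm hmj
        exact (hzBp t m htm hmj).trans
          (sup_le_sup_left (le_sup_right.trans (sup_le_sup_left le_sup_left _)) _)
      · intro t m htm hmj hcon
        obtain ⟨u, hu1, hu2⟩ := hzUp t m htm hmj
        exact hu2 ((hu1.trans (le_sup_right.trans (sup_le_sup_left le_sup_right _))).trans hcon)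
    -- the sequence w
    obtain ⟨e0, he0⟩ := (hId K).1
    set w : ℕ → P := fun m => wseq I M xt e0 m with hw
    have Q := wseq_invariant I M xt e0 ePhi
    have Qmem : ∀ j, 1 ≤ j → w j ∈ I (M j) := fun j hj => (Q j hj).1
    have QA : ∀ j, 1 ≤ j → ∀ t s, t < s → s ≤ j → xt s ≤ xt t ⊔ w j :=
      fun j hj => (Q j hj).2.1
    have QB : ∀ j, 1 ≤ j → ∀ t m, t < m → m < j → w m ≤ xt t ⊔ w j :=
      fun j hj => (Q j hj).2.2.1
    have QS : ∀ j, 1 ≤ j → ∀ t m, t < m → m < j → ¬ w j ≤ xt t ⊔ w m :=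
      fun j hj => (Q j hj).2.2.2
    -- the embedding
    refine ⟨fun p => xt p.1.1 ⊔ w p.1.2, ?_, ?_⟩
    · -- injectivity
      intro p q hpq
      obtain ⟨⟨i, jj⟩, hij⟩ := p
      obtain ⟨⟨i', jj'⟩, hij'⟩ := q
      simp only at hpq hij hij'
      -- first coordinate
      have hkey : ∀ a b aj bj : ℕ, a < b → b < bj → a < aj →
          xt a ⊔ w aj = xt b ⊔ w bj → False := by
        intro a b aj bj hab hbbj haaj heq
        have hmem1 : xt b ⊔ w bj ∈ I (M (a + 1)) := by
          apply sup_mem_ideal (hId (M (a + 1)))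
          · exact hIsub (show a + 1 ≤ b from hab) (hxmem b)
          · exact hIsub (show a + 1 ≤ bj from by omega) (Qmem bj (by omega))
        have : xt a ∈ I (M (a + 1)) :=
          (hId (M (a + 1))).2.1 (le_sup_left.trans_eq heq) hmem1
        exact hxnot a this
      have hii : i = i' := by
        rcases lt_trichotomy i i' with h | h | h
        · exact absurd hpq (fun heq => hkey i i' jj jj' h hij' hij heq)
        · exact h
        · exact absurd hpq.symm (fun heq => hkey i' i jj' jj h hij hij' heq)
      subst hii
      have hjj : jj = jj' := by
        rcases lt_trichotomy jj jj' with h | h | h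
        · exfalso
          apply QS jj' (by omega) i jj hij h
          calc w jj' ≤ xt i ⊔ w jj' := le_sup_right
            _ = xt i ⊔ w jj := hpq.symm
        · exact h
        · exfalso
          apply QS jj (by omega) i jj' hij' h
          calc w jj ≤ xt i ⊔ w jj := le_sup_right
            _ = xt i ⊔ w jj' := hpq
      exact Subtype.ext (Prod.ext rfl hjj)
    · -- join preservation
      have key : ∀ a aj b bj : ℕ, b ≤ a → a < aj → aj ≤ bj →
          xt a ⊔ w aj ≤ xt b ⊔ w bj := by
        intro a aj b bj hba haaj hajbj
        apply sup_le
        · rcases eq_or_lt_of_le hba with rfl | hlt'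
          · exact le_sup_left
          · exact QA bj (by omega) b a hlt' (by omega)
        · rcases eq_or_lt_of_le hajbj with rfl | hlt'
          · exact le_sup_right
          · exact QB bj (by omega) b aj (by omega) hlt'
      intro p q
      obtain ⟨⟨i, jj⟩, hij⟩ := p
      obtain ⟨⟨i', jj'⟩, hij'⟩ := q
      simp only at hij hij'
      have hsupeq : (⟨(i, jj), hij⟩ ⊔ ⟨(i', jj'), hij'⟩ : OmegaStar) =
          ⟨(min i i', max jj jj'), lt_of_le_of_lt (min_le_left _ _)
            (lt_of_lt_of_le hij (le_max_left _ _))⟩ := rfl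
      rw [hsupeq]
      apply le_antisymm
      · -- f (p ⊔ q) ≤ f p ⊔ f q
        apply sup_le
        · rcases le_total i i' with h | h
          · exact (le_of_eq (congrArg xt (min_eq_left h))).trans
              (le_sup_left.trans le_sup_left)
          · exact (le_of_eq (congrArg xt (min_eq_right h))).trans
              (le_sup_left.trans le_sup_right)
        · rcases le_total jj jj' with h | h
          · exact (le_of_eq (congrArg w (max_eq_right h))).trans
              (le_sup_right.trans le_sup_right)
          · exact (le_of_eq (congrArg w (max_eq_left h))).trans
              (le_sup_right.trans le_sup_left)
      · -- f p ⊔ f q ≤ f (p ⊔ q)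
        apply sup_le
        · exact key i jj (min i i') (max jj jj') (min_le_left _ _) hij (le_max_left _ _)
        · exact key i' jj' (min i i') (max jj jj') (min_le_right _ _) hij' (le_max_right _ _)

end Backward

end Stmt7Aux

namespace Stmt7Aux

section Forward
variable {P : Type*} [SemilatticeSup P]

theorem forward_omega (g : ℕ → P) (hg : StrictAnti g) :
    ∃ I : ℕ → Set P, (∀ n, IsIdeal (I n)) ∧ StrictAnti I ∧
      ∀ S : Set ℕ, S.Infinite → ¬ Separating (I '' S) := by
  refine ⟨fun n => {z | z ≤ g n}, ?_, ?_, ?_⟩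
  · intro n
    exact ⟨⟨g n, le_refl _⟩, fun x y hxy hy => hxy.trans hy,
      fun x hx y hy => ⟨g n, le_refl _, hx, hy⟩⟩
  · intro m n hmn
    refine lt_of_le_of_ne (fun z hz => hz.trans (hg hmn).le) ?_
    intro heq
    have heq' : {z : P | z ≤ g n} = {z : P | z ≤ g m} := heq
    have : g m ∈ {z : P | z ≤ g n} := by rw [heq']; exact le_refl (g m)
    exact absurd (lt_of_le_of_lt this (hg hmn)) (lt_irrefl _)
  · intro S hS hsep
    obtain ⟨m, hm⟩ := hS.nonempty
    obtain ⟨n, hn⟩ := (hS.diff (Set.finite_Iic m)).nonempty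
    have hmn : m < n := by
      have := hn.2
      simp only [Set.mem_Iic] at this
      omega
    have hgm_not : g m ∉ {z | z ≤ g n} := by
      intro h
      exact absurd (lt_of_le_of_lt h (hg hmn)) (lt_irrefl _)
    have hUmem : g m ∈ ⋃₀ ((fun n => {z | z ≤ g n}) '' S) :=
      ⟨{z | z ≤ g m}, ⟨m, hm, rfl⟩, le_refl (g m)⟩
    have hne : {z | z ≤ g n} ≠ ⋃₀ ((fun n => {z | z ≤ g n}) '' S) :=
      fun h => hgm_not (h.symm ▸ hUmem)
    obtain ⟨J, hJ, hnsub⟩ := hsep {z | z ≤ g n} ⟨n, hn.1, rfl⟩ hne (g m) hUmem hgm_not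
    apply hnsub
    intro z hz
    obtain ⟨k, hk, rfl⟩ := hJ
    exact ⟨g k, le_refl _, (hz.trans (hg hmn).le).trans le_sup_left⟩

def mkOS (i j : ℕ) (h : i < j) : OmegaStar := ⟨(i, j), h⟩

theorem mkOS_fst (i j : ℕ) (h : i < j) : (mkOS i j h).1.1 = i := rfl
theorem mkOS_snd (i j : ℕ) (h : i < j) : (mkOS i j h).1.2 = j := rfl

theorem forward_embed (f : OmegaStar → P) (hinj : Function.Injective f)
    (hf : ∀ x y, f (x ⊔ y) = f x ⊔ f y) :
    ∃ I : ℕ → Set P, (∀ n, IsIdeal (I n)) ∧ StrictAnti I ∧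
      ∀ S : Set ℕ, S.Infinite → ¬ Separating (I '' S) := by
  set I : ℕ → Set P := fun n => {z | ∃ a : OmegaStar, n ≤ a.1.1 ∧ z ≤ f a} with hI
  have hsub : ∀ {m n : ℕ}, m ≤ n → I n ⊆ I m := by
    rintro m n hmn z ⟨a, h1, h2⟩
    exact ⟨a, hmn.trans h1, h2⟩
  have hwit : ∀ n : ℕ, f (mkOS n (n + 1) (Nat.lt_succ_self n)) ∈ I n :=
    fun n => ⟨mkOS n (n + 1) (Nat.lt_succ_self n), le_refl n, le_refl _⟩
  have hwit_not : ∀ {m n : ℕ}, m < n → f (mkOS m (m + 1) (Nat.lt_succ_self m)) ∉ I n := by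
    rintro m n hmn ⟨a, h1, h2⟩
    have hle : mkOS m (m + 1) (Nat.lt_succ_self m) ≤ a := join_reflect hinj hf h2
    have : a.1.1 ≤ m := hle.1
    omega
  refine ⟨I, ?_, ?_, ?_⟩
  · intro n
    refine ⟨⟨_, hwit n⟩, fun x y hxy hy => ?_, ?_⟩
    · obtain ⟨a, h1, h2⟩ := hy
      exact ⟨a, h1, hxy.trans h2⟩
    · rintro x ⟨a, ha1, ha2⟩ y ⟨b, hb1, hb2⟩
      refine ⟨f (a ⊔ b), ⟨a ⊔ b, le_min ha1 hb1, le_refl _⟩, ?_, ?_⟩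
      · exact ha2.trans (by rw [hf]; exact le_sup_left)
      · exact hb2.trans (by rw [hf]; exact le_sup_right)
  · intro m n hmn
    refine lt_of_le_of_ne (hsub hmn.le) ?_
    intro heq
    exact hwit_not hmn (heq ▸ hwit m)
  · intro S hS hsep
    obtain ⟨m, hm⟩ := hS.nonempty
    obtain ⟨n, hn⟩ := (hS.diff (Set.finite_Iic m)).nonempty
    have hmn : m < n := by
      have := hn.2
      simp only [Set.mem_Iic] at this
      omega
    have hUmem : f (mkOS m (m + 1) (Nat.lt_succ_self m)) ∈ ⋃₀ (I '' S) :=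
      ⟨I m, ⟨m, hm, rfl⟩, hwit m⟩
    have hne : I n ≠ ⋃₀ (I '' S) := fun h => hwit_not hmn (h.symm ▸ hUmem)
    obtain ⟨J, hJ, hnsub⟩ := hsep (I n) ⟨n, hn.1, rfl⟩ hne _ hUmem (hwit_not hmn)
    apply hnsub
    rintro z ⟨a, h1, h2⟩
    obtain ⟨k, hk, rfl⟩ := hJ
    have hb : k < max a.1.2 (k + 1) := lt_of_lt_of_le (Nat.lt_succ_self k) (le_max_right _ _)
    refine ⟨f (mkOS k (max a.1.2 (k + 1)) hb), ⟨mkOS k (max a.1.2 (k + 1)) hb, le_refl k,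
      le_refl _⟩, ?_⟩
    have hab : a ≤ mkOS m (m + 1) (Nat.lt_succ_self m) ⊔ mkOS k (max a.1.2 (k + 1)) hb := by
      constructor
      · exact (min_le_left m k).trans (hmn.le.trans h1)
      · exact (le_max_left a.1.2 (k + 1)).trans (le_max_right (m + 1) _)
    calc z ≤ f a := h2
      _ ≤ f (mkOS m (m + 1) (Nat.lt_succ_self m) ⊔ mkOS k (max a.1.2 (k + 1)) hb) :=
        join_mono hf hab
      _ = _ := hf _ _

end Forward

end Stmt7Aux

/-- `P` contains `ω*` or `Ω(ω*)` as a join-subsemilattice iff it contains an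
`ω*`-chain of ideals all of whose infinite subchains are non-separating. -/
theorem stmt_7 {P : Type*} [SemilatticeSup P] :
    ((∃ g : ℕ → P, StrictAnti g) ∨ JoinEmbeds OmegaStar P) ↔
      (∃ I : ℕ → Set P, (∀ n, IsIdeal (I n)) ∧ StrictAnti I ∧
        ∀ S : Set ℕ, S.Infinite → ¬ Separating (I '' S)) := by
  constructor
  · rintro (⟨g, hg⟩ | ⟨f, hinj, hf⟩)
    · exact Stmt7Aux.forward_omega g hg
    · exact Stmt7Aux.forward_embed f hinj hf
  · rintro ⟨I, hId, hA, hNS⟩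
    exact Stmt7Aux.backward I hId hA hNS
end

section
/- A poset P is isomorphic to I_{<ω}(Q) for some poset Q if and only if P is a join-semilattice with a least element in which every element is a finite join of join-prime elements. -/
universe u

/-- `p` is join-prime in a poset with least element `b`. -/
def IsPrimeIn {P : Type*} [PartialOrder P] (b p : P) : Prop :=
  p ≠ b ∧ ∀ a c z : P, IsLUB {a, c} z → p ≤ z → p ≤ a ∨ p ≤ c

namespace Stmt9Aux

variable {Q : Type*} [Preorder Q]

lemma le_def {S T : FinGenInitSeg Q} : S ≤ T ↔ S.1 ⊆ T.1 := Iff.rfl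

/-- The segment generated by a finite set. -/
def seg (F : Finset Q) : FinGenInitSeg Q := ⟨{x | ∃ y ∈ F, x ≤ y}, F, rfl⟩

lemma down_closed (S : FinGenInitSeg Q) {x y : Q} (hxy : x ≤ y) (hy : y ∈ S.1) : x ∈ S.1 := by
  obtain ⟨F, hF⟩ := S.2
  rw [hF] at hy ⊢
  obtain ⟨z, hz, hyz⟩ := hy
  exact ⟨z, hz, hxy.trans hyz⟩

/-- Union of two finitely generated initial segments. -/
def union (S T : FinGenInitSeg Q) : FinGenInitSeg Q :=
  ⟨S.1 ∪ T.1, by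
    obtain ⟨F, hF⟩ := S.2
    obtain ⟨G, hG⟩ := T.2
    classical
    refine ⟨F ∪ G, ?_⟩
    rw [hF, hG]
    ext x
    simp only [Set.mem_union, Set.mem_setOf_eq, Finset.mem_union]
    constructor
    · rintro (⟨y, hy, hxy⟩ | ⟨y, hy, hxy⟩)
      exacts [⟨y, Or.inl hy, hxy⟩, ⟨y, Or.inr hy, hxy⟩]
    · rintro ⟨y, hy | hy, hxy⟩
      exacts [Or.inl ⟨y, hy, hxy⟩, Or.inr ⟨y, hy, hxy⟩]⟩

lemma isLUB_union (S T : FinGenInitSeg Q) : IsLUB {S, T} (union S T) := by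
  constructor
  · rintro W (rfl | rfl)
    · exact fun x hx => Or.inl hx
    · exact fun x hx => Or.inr hx
  · intro W hW
    have hS : S ≤ W := hW (Set.mem_insert _ _)
    have hT : T ≤ W := hW (Set.mem_insert_of_mem _ rfl)
    rintro x (hx | hx)
    exacts [hS hx, hT hx]

lemma lub_pair_eq {S T Z : FinGenInitSeg Q} (h : IsLUB {S, T} Z) : Z.1 = S.1 ∪ T.1 := by
  have h1 : union S T ≤ Z := by
    rintro x (hx | hx)
    exacts [h.1 (Set.mem_insert _ _) hx, h.1 (Set.mem_insert_of_mem _ rfl) hx]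
  have h2 : Z ≤ union S T := h.2 (isLUB_union S T).1
  exact Set.Subset.antisymm h2 h1

lemma seg_empty_le (S : FinGenInitSeg Q) : seg (∅ : Finset Q) ≤ S := by
  rintro x ⟨y, hy, -⟩
  exact absurd hy (Finset.notMem_empty y)

lemma seg_singleton_prime (a : Q) : IsPrimeIn (seg (∅ : Finset Q)) (seg {a}) := by
  constructor
  · intro h
    have ha : a ∈ (seg ({a} : Finset Q)).1 := ⟨a, Finset.mem_singleton_self a, le_refl a⟩
    rw [h] at ha
    obtain ⟨y, hy, -⟩ := ha
    exact absurd hy (Finset.notMem_empty y)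
  · intro S T Z hZ hle
    have hZ1 : Z.1 = S.1 ∪ T.1 := lub_pair_eq hZ
    have ha : a ∈ Z.1 := hle ⟨a, Finset.mem_singleton_self a, le_refl a⟩
    rw [hZ1] at ha
    rcases ha with ha | ha
    · left
      rintro x ⟨y, hy, hxy⟩
      rw [Finset.mem_singleton] at hy
      subst hy
      exact down_closed S hxy ha
    · right
      rintro x ⟨y, hy, hxy⟩
      rw [Finset.mem_singleton] at hy
      subst hy
      exact down_closed T hxy ha

lemma decompose (S : FinGenInitSeg Q) :
    ∃ F : Finset (FinGenInitSeg Q),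
      (∀ p ∈ F, IsPrimeIn (seg (∅ : Finset Q)) p) ∧ IsLUB ↑F S := by
  classical
  obtain ⟨F₀, hF₀⟩ := S.2
  refine ⟨F₀.image (fun a => seg {a}), ?_, ?_, ?_⟩
  · intro p hp
    simp only [Finset.mem_image] at hp
    obtain ⟨a, -, rfl⟩ := hp
    exact seg_singleton_prime a
  · intro W hW
    simp only [Finset.coe_image, Set.mem_image, Finset.mem_coe] at hW
    obtain ⟨a, ha, rfl⟩ := hW
    rintro x ⟨y, hy, hxy⟩
    rw [Finset.mem_singleton] at hy
    show x ∈ S.1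
    rw [hF₀]
    exact ⟨a, ha, hy ▸ hxy⟩
  · intro W hW
    intro x hx
    have hx' : x ∈ {x | ∃ y ∈ F₀, x ≤ y} := by rw [← hF₀]; exact hx
    obtain ⟨y, hy, hxy⟩ := hx'
    have : seg {y} ≤ W := hW (by
      simp only [Finset.coe_image, Set.mem_image, Finset.mem_coe]
      exact ⟨y, hy, rfl⟩)
    exact this ⟨y, Finset.mem_singleton_self y, hxy⟩

/-- Transport of primeness along an order isomorphism. -/
lemma prime_map {P R : Type*} [PartialOrder P] [PartialOrder R] (e : P ≃o R) {b p : R}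
    (hp : IsPrimeIn b p) : IsPrimeIn (e.symm b) (e.symm p) := by
  constructor
  · intro h
    exact hp.1 (e.symm.injective h)
  · intro a c z hz hle
    have hz' : IsLUB {e a, e c} (e z) := by
      rw [← Set.image_pair]
      exact e.isLUB_image'.2 hz
    have hle' : p ≤ e z := (e.symm_apply_le).1 hle
    rcases hp.2 (e a) (e c) (e z) hz' hle' with h | h
    · exact Or.inl ((e.symm_apply_le).2 h)
    · exact Or.inr ((e.symm_apply_le).2 h)

section Semilattice

variable {P : Type*} [SemilatticeSup P] [OrderBot P]

lemma finset_isLUB (F : Finset P) : IsLUB ↑F (F.sup id) :=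
  ⟨fun x hx => Finset.le_sup (f := id) hx, fun w hw => Finset.sup_le fun x hx => hw hx⟩

lemma prime_le_sup {p : P} (hp : IsPrimeIn ⊥ p) (F : Finset P) (h : p ≤ F.sup id) :
    ∃ q ∈ F, p ≤ q := by
  classical
  induction F using Finset.induction with
  | empty =>
      simp only [Finset.sup_empty, le_bot_iff] at h
      exact absurd h hp.1
  | insert a F ha ih =>
      rw [Finset.sup_insert] at h
      rcases hp.2 a (F.sup id) _ isLUB_pair h with h' | h'
      · exact ⟨a, Finset.mem_insert_self a F, h'⟩
      · obtain ⟨q, hq, hpq⟩ := ih h'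
        exact ⟨q, Finset.mem_insert_of_mem hq, hpq⟩

end Semilattice

end Stmt9Aux

open Stmt9Aux in
/-- a poset `P` is isomorphic to `I_{<ω}(Q)` for some poset `Q` iff `P` is a
join-semilattice with least element in which every element is a finite join of join-primes. -/
theorem stmt_9 {P : Type u} [PartialOrder P] :
    (∃ (Q : Type u) (_ : PartialOrder Q), Nonempty (P ≃o FinGenInitSeg Q)) ↔
      ((∀ x y : P, ∃ z, IsLUB {x, y} z) ∧
        ∃ b : P, (∀ x, b ≤ x) ∧
          ∀ x : P, ∃ F : Finset P, (∀ p ∈ F, IsPrimeIn b p) ∧ IsLUB ↑F x) := by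
  classical
  constructor
  · rintro ⟨Q, _, ⟨e⟩⟩
    refine ⟨?_, e.symm (seg (∅ : Finset Q)), ?_, ?_⟩
    · intro x y
      refine ⟨e.symm (union (e x) (e y)), ?_⟩
      have h := (e.symm.isLUB_image').2 (isLUB_union (e x) (e y))
      rwa [Set.image_pair, e.symm_apply_apply, e.symm_apply_apply] at h
    · intro x
      exact (e.symm_apply_le).2 (seg_empty_le (e x))
    · intro x
      obtain ⟨F', hF'p, hF'lub⟩ := decompose (e x)
      refine ⟨F'.image e.symm, ?_, ?_⟩
      · intro p hp
        simp only [Finset.mem_image] at hp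
        obtain ⟨p', hp', rfl⟩ := hp
        exact prime_map e (hF'p p' hp')
      · have h := (e.symm.isLUB_image').2 hF'lub
        rwa [← Finset.coe_image, e.symm_apply_apply] at h
  · rintro ⟨hsup, b, hb, hdec⟩
    letI : SemilatticeSup P :=
      { sup := fun x y => (hsup x y).choose
        le_sup_left := fun x y => (hsup x y).choose_spec.1 (Set.mem_insert _ _)
        le_sup_right := fun x y => (hsup x y).choose_spec.1 (Set.mem_insert_of_mem _ rfl)
        sup_le := fun a c w hac hcw => (hsup a c).choose_spec.2 (by
          rintro v (rfl | rfl)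
          exacts [hac, hcw]) }
    letI : OrderBot P := { bot := b, bot_le := hb }
    set Q := {p : P // IsPrimeIn b p} with hQ
    have hbot : (⊥ : P) = b := rfl
    -- the forward map
    have hsegset : ∀ x : P, ∃ F : Finset Q, {q : Q | q.1 ≤ x} = {q | ∃ y ∈ F, q ≤ y} := by
      intro x
      obtain ⟨F, hFp, hFlub⟩ := hdec x
      have hx : x = F.sup id := hFlub.unique (finset_isLUB F)
      refine ⟨F.attach.image (fun p => (⟨p.1, hFp p.1 p.2⟩ : Q)), ?_⟩
      ext q
      simp only [Set.mem_setOf_eq, Finset.mem_image, Finset.mem_attach, true_and]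
      constructor
      · intro hq
        rw [hx] at hq
        obtain ⟨p, hp, hqp⟩ := prime_le_sup q.2 F hq
        exact ⟨⟨p, hFp p hp⟩, ⟨⟨p, hp⟩, rfl⟩, hqp⟩
      · rintro ⟨y, ⟨p, rfl⟩, hqy⟩
        exact le_trans hqy (hFlub.1 (Finset.mem_coe.2 p.2))
    let f : P → FinGenInitSeg Q := fun x =>
      ⟨{q : Q | q.1 ≤ x}, (hsegset x).choose, (hsegset x).choose_spec⟩
    have hf_le : ∀ {x y : P}, f x ≤ f y ↔ x ≤ y := by
      intro x y
      constructor
      · intro h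
        obtain ⟨F, hFp, hFlub⟩ := hdec x
        refine hFlub.2 ?_
        intro p hp
        have hpx : (⟨p, hFp p hp⟩ : Q) ∈ (f x).1 := hFlub.1 hp
        exact h hpx
      · intro h q hq
        exact le_trans hq h
    have hf_inj : Function.Injective f := by
      intro x y hxy
      exact le_antisymm (hf_le.1 hxy.le) (hf_le.1 hxy.ge)
    have hf_surj : Function.Surjective f := by
      rintro ⟨S, hS⟩
      obtain ⟨G, rfl⟩ := hS
      refine ⟨(G.image Subtype.val).sup id, ?_⟩
      apply Subtype.ext
      show {q : Q | q.1 ≤ (G.image Subtype.val).sup id} = {x | ∃ y ∈ G, x ≤ y}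
      ext q
      simp only [Set.mem_setOf_eq]
      constructor
      · intro hq
        obtain ⟨p, hp, hqp⟩ := prime_le_sup q.2 _ hq
        simp only [Finset.mem_image] at hp
        obtain ⟨y, hy, rfl⟩ := hp
        exact ⟨y, hy, hqp⟩
      · rintro ⟨y, hy, hqy⟩
        refine le_trans hqy (Finset.le_sup (f := id) ?_)
        exact Finset.mem_image_of_mem Subtype.val hy
    refine ⟨Q, inferInstance, ⟨⟨Equiv.ofBijective f ⟨hf_inj, hf_surj⟩, hf_le⟩⟩⟩
end

section
/- A join-semilattice P embeds as a join-subsemilattice into I_{<ω}(Q) for some poset Q if and only if for every x ∈ P, the set P \ ↑x is a finite (possibly empty) union of ideals. -/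
universe u

lemma IsIdeal.finset_le {α : Type*} [Preorder α] {I : Set α} (hI : IsIdeal I)
    (t : Finset α) (ht : ∀ a ∈ t, a ∈ I) : ∃ c ∈ I, ∀ a ∈ t, a ≤ c := by
  classical
  induction t using Finset.induction with
  | empty => obtain ⟨c, hc⟩ := hI.1; exact ⟨c, hc, by simp⟩
  | insert _ _ ha ih =>
    rename_i a t
    obtain ⟨c, hcI, hc⟩ := ih (fun b hb => ht b (Finset.mem_insert_of_mem hb))
    obtain ⟨d, hdI, had, hcd⟩ := hI.2.2 a (ht a (Finset.mem_insert_self a t)) c hcI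
    refine ⟨d, hdI, fun b hb => ?_⟩
    rcases Finset.mem_insert.mp hb with rfl | hb
    · exact had
    · exact (hc b hb).trans hcd

lemma ideal_subset_of_subset_sUnion {α : Type*} [Preorder α] {I : Set α}
    (hI : IsIdeal I) (s : Finset (Set α))
    (hseg : ∀ J ∈ s, ∀ ⦃x y : α⦄, x ≤ y → y ∈ J → x ∈ J)
    (h : I ⊆ ⋃₀ ↑s) : ∃ J ∈ s, I ⊆ J := by
  classical
  by_contra hcon
  push_neg at hcon
  choose g hg1 hg2 using fun (J : Set α) (hJ : J ∈ s) => Set.not_subset.mp (hcon J hJ)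
  have ht : ∀ a ∈ s.attach.image (fun J => g J.1 J.2), a ∈ I := by
    rintro a ha
    simp only [Finset.mem_image, Finset.mem_attach, true_and] at ha
    obtain ⟨J, rfl⟩ := ha
    exact hg1 J.1 J.2
  obtain ⟨c, hcI, hc⟩ := hI.finset_le _ ht
  obtain ⟨J, hJ, hcJ⟩ := h hcI
  exact hg2 J hJ (hseg J hJ (hc _ (Finset.mem_image.mpr ⟨⟨J, hJ⟩, Finset.mem_attach _ _, rfl⟩)) hcJ)


/-- a join-semilattice `P` embeds as a join-subsemilattice into some
`I_{<ω}(Q)` iff for every `x ∈ P` the set `P \\ ↑x` is a finite union of ideals. -/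
theorem stmt_10 {P : Type u} [SemilatticeSup P] :
    (∃ (Q : Type u) (_ : PartialOrder Q), JoinEmbeds P (FinGenInitSeg Q)) ↔
      ∀ x : P, ∃ 𝓖 : Finset (Set P), (∀ I ∈ 𝓖, IsIdeal I) ∧
        {y : P | ¬ x ≤ y} = ⋃₀ ↑𝓖 := by
  constructor
  · rintro ⟨Q, _inst, f, hinj, hsup⟩
    classical
    have hseg : ∀ a : P, ∀ ⦃z q : Q⦄, z ≤ q → q ∈ (f a).1 → z ∈ (f a).1 := by
      intro a z q hzq hq
      obtain ⟨F, hF⟩ := (f a).2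
      rw [hF] at hq ⊢
      obtain ⟨w, hw, hqw⟩ := hq
      exact ⟨w, hw, hzq.trans hqw⟩
    have hval : ∀ a b : P, (f (a ⊔ b)).1 = (f a).1 ∪ (f b).1 := by
      intro a b; rw [hsup]; rfl
    have hmono : ∀ {a b : P}, a ≤ b → (f a).1 ⊆ (f b).1 := by
      intro a b hab
      have h1 : (f (a ⊔ b)).1 = (f b).1 := by rw [sup_eq_right.mpr hab]
      rw [hval] at h1
      rw [← h1]
      exact Set.subset_union_left
    have hle : ∀ {a b : P}, (f a).1 ⊆ (f b).1 → a ≤ b := by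
      intro a b hab
      have h1 : (f (a ⊔ b)).1 = (f b).1 := by
        rw [hval]; exact Set.union_eq_self_of_subset_left hab
      exact sup_eq_right.mp (hinj (Subtype.ext h1))
    intro x
    obtain ⟨F, hF⟩ := (f x).2
    refine ⟨(F.image fun q => {y : P | q ∉ (f y).1}).filter Set.Nonempty, ?_, ?_⟩
    · intro I hI
      simp only [Finset.mem_filter, Finset.mem_image] at hI
      obtain ⟨⟨q, hq, rfl⟩, hne⟩ := hI
      refine ⟨hne, ?_, ?_⟩
      · intro a b hab hb
        exact fun hqa => hb (hmono hab hqa)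
      · intro a ha b hb
        refine ⟨a ⊔ b, ?_, le_sup_left, le_sup_right⟩
        simp only [Set.mem_setOf_eq] at *
        rw [hval]
        rintro (h | h)
        · exact ha h
        · exact hb h
    · ext y
      simp only [Set.mem_setOf_eq, Set.mem_sUnion, Finset.mem_coe, Finset.mem_filter,
        Finset.mem_image]
      constructor
      · intro hxy
        have hns : ¬ (f x).1 ⊆ (f y).1 := fun h => hxy (hle h)
        obtain ⟨z, hz, hzny⟩ := Set.not_subset.mp hns
        rw [hF] at hz
        obtain ⟨q, hq, hzq⟩ := hz
        have hqny : q ∉ (f y).1 := fun h => hzny (hseg y hzq h)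
        exact ⟨{y' | q ∉ (f y').1}, ⟨⟨q, hq, rfl⟩, ⟨y, hqny⟩⟩, hqny⟩
      · rintro ⟨I, ⟨⟨q, hq, rfl⟩, -⟩, hyI⟩
        intro hxy
        have hqx : q ∈ (f x).1 := by rw [hF]; exact ⟨q, hq, le_refl q⟩
        exact hyI (hmono hxy hqx)
  · intro h
    classical
    choose 𝓖 hIdeal hUnion using h
    refine ⟨{I : Set P // IsIdeal I}, inferInstance, ?_⟩
    set Qt := {I : Set P // IsIdeal I} with hQt
    let D : P → Set P := fun x => {y | ¬ x ≤ y}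
    have hDsub : ∀ x : P, ∀ J ∈ 𝓖 x, J ⊆ D x := by
      intro x J hJ
      have : D x = ⋃₀ ↑(𝓖 x) := hUnion x
      rw [this]
      exact fun a ha => ⟨J, hJ, ha⟩
    have key : ∀ x : P, {I : Qt | I.1 ⊆ D x} =
        {I : Qt | ∃ J ∈ (𝓖 x).attach.image (fun J => (⟨J.1, hIdeal x J.1 J.2⟩ : Qt)), I ≤ J} := by
      intro x
      ext I
      simp only [Set.mem_setOf_eq, Finset.mem_image, Finset.mem_attach, true_and]
      constructor
      · intro hIx
        obtain ⟨J, hJ, hIJ⟩ := ideal_subset_of_subset_sUnion I.2 (𝓖 x)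
          (fun J hJ => (hIdeal x J hJ).2.1) (by rw [← hUnion x]; exact hIx)
        exact ⟨⟨J, hIdeal x J hJ⟩, ⟨⟨J, hJ⟩, rfl⟩, hIJ⟩
      · rintro ⟨J, ⟨⟨J0, hJ0⟩, rfl⟩, hIJ⟩
        exact fun a ha => hDsub x J0 hJ0 (hIJ ha)
    let f : P → FinGenInitSeg Qt := fun x =>
      ⟨{I : Qt | I.1 ⊆ D x}, (𝓖 x).attach.image (fun J => ⟨J.1, hIdeal x J.1 J.2⟩), key x⟩
    have hDinj : ∀ {x y : P}, (f x).1 = (f y).1 → D x ⊆ D y := by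
      intro x y hf a ha
      have ha' : a ∈ ⋃₀ ↑(𝓖 x) := by rw [← hUnion x]; exact ha
      obtain ⟨J, hJ, haJ⟩ := ha'
      have hmem : (⟨J, hIdeal x J hJ⟩ : Qt) ∈ (f x).1 := hDsub x J hJ
      rw [hf] at hmem
      exact hmem haJ
    refine ⟨f, ?_, ?_⟩
    · intro x y hxy
      have h1 := hDinj (congrArg Subtype.val hxy)
      have h2 := hDinj (congrArg Subtype.val hxy.symm)
      have hx : x ≤ y := by
        by_contra hc
        exact (h1 hc) le_rfl
      have hy : y ≤ x := by
        by_contra hc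
        exact (h2 hc) le_rfl
      exact le_antisymm hx hy
    · intro x y
      apply Subtype.ext
      show {I : Qt | I.1 ⊆ D (x ⊔ y)} = (f x).1 ∪ (f y).1
      have hD : D (x ⊔ y) = D x ∪ D y := by
        ext z
        simp only [D, Set.mem_setOf_eq, Set.mem_union, sup_le_iff]
        tauto
      ext I
      simp only [Set.mem_setOf_eq, Set.mem_union, hD, f]
      constructor
      · intro hI
        by_contra hc
        push_neg at hc
        obtain ⟨h1, h2⟩ := hc
        obtain ⟨a, haI, haD⟩ := Set.not_subset.mp h1
        obtain ⟨b, hbI, hbD⟩ := Set.not_subset.mp h2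
        obtain ⟨c, hcI, hac, hbc⟩ := I.2.2.2 a haI b hbI
        have hxa : x ≤ a := not_not.mp haD
        have hyb : y ≤ b := not_not.mp hbD
        rcases hI hcI with hcx | hcy
        · exact hcx (hxa.trans hac)
        · exact hcy (hyb.trans hbc)
      · rintro (h1 | h1) a ha
        · exact Or.inl (h1 ha)
        · exact Or.inr (h1 ha)
end

section
/- If a join-semilattice P has no infinite antichain, then P embeds as a join-subsemilattice into I_{<ω}(J(P)), the join-semilattice of finitely generated initial segments of the poset of ideals of P. -/
section Aux

variable {P : Type*} [SemilatticeSup P]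

lemma IsIdeal.sup_mem {J : Set P} (hJ : IsIdeal J) {x y : P} (hx : x ∈ J) (hy : y ∈ J) :
    x ⊔ y ∈ J := by
  obtain ⟨z, hz, hxz, hyz⟩ := hJ.2.2 x hx y hy
  exact hJ.2.1 (sup_le hxz hyz) hz

/-- `U` is covered by finitely many ideals, each contained in `S`. -/
def GoodIn (S U : Set P) : Prop :=
  ∃ T : Set (Set P), T.Finite ∧ (∀ I ∈ T, IsIdeal I ∧ I ⊆ S) ∧ U ⊆ ⋃₀ T

lemma ideal_subset_of_subset_union {J : Set P} (hJ : IsIdeal J) :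
    ∀ (T : Finset (Set P)), (∀ I ∈ T, ∀ ⦃x y : P⦄, x ≤ y → y ∈ I → x ∈ I) →
      (∀ z ∈ J, ∃ I ∈ T, z ∈ I) → ∃ I ∈ T, J ⊆ I := by
  classical
  intro T
  induction T using Finset.induction_on with
  | empty =>
    intro _ hsub
    obtain ⟨j, hj⟩ := hJ.1
    obtain ⟨I, hI, _⟩ := hsub j hj
    simp at hI
  | @insert I0 T' hI0 ih =>
    intro hinit hsub
    by_cases hJI0 : J ⊆ I0
    · exact ⟨I0, Finset.mem_insert_self _ _, hJI0⟩
    · obtain ⟨e, heJ, heI0⟩ := Set.not_subset.1 hJI0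
      have hsub' : ∀ z ∈ J, ∃ I ∈ T', z ∈ I := by
        intro x hx
        have hxe : x ⊔ e ∈ J := hJ.sup_mem hx heJ
        have hxeI0 : x ⊔ e ∉ I0 :=
          fun hmem => heI0 (hinit I0 (Finset.mem_insert_self _ _) le_sup_right hmem)
        obtain ⟨I, hI, hmem⟩ := hsub _ hxe
        rcases Finset.mem_insert.1 hI with rfl | hI'
        · exact absurd hmem hxeI0
        · exact ⟨I, hI', hinit I (Finset.mem_insert_of_mem hI') le_sup_left hmem⟩
      obtain ⟨I, hI, hJI⟩ := ih (fun I hI => hinit I (Finset.mem_insert_of_mem hI)) hsub'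
      exact ⟨I, Finset.mem_insert_of_mem hI, hJI⟩

lemma step_lemma (h : ¬ ∃ A : Set P, A.Infinite ∧ IsAntichain (· ≤ ·) A)
    {S : Set P} (hS : ∀ ⦃x y : P⦄, x ≤ y → y ∈ S → x ∈ S)
    {U : Set P} (hUS : U ⊆ S)
    (hUup : ∀ ⦃u v : P⦄, u ∈ U → u ≤ v → v ∈ S → v ∈ U)
    (hUbad : ¬ GoodIn S U) :
    ∃ a c : P, ¬ GoodIn S (S ∩ {y | a ≤ y}) ∧ (S ∩ {y | a ≤ y}) ⊆ U ∧ c ∈ U ∧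
      ∀ x ∈ S ∩ {y | a ≤ y}, ¬ c ≤ x ∧ ¬ x ≤ c := by
  classical
  -- U is nonempty
  have hUne : U.Nonempty := by
    rcases Set.eq_empty_or_nonempty U with rfl | h'
    · exact absurd ⟨∅, Set.finite_empty, by simp, by simp⟩ hUbad
    · exact h'
  -- there is an incompatible pair in U
  have hpair : ∃ x ∈ U, ∃ y ∈ U, x ⊔ y ∉ U := by
    by_contra hd
    push_neg at hd
    refine hUbad ⟨{{y | ∃ u ∈ U, y ≤ u}}, Set.finite_singleton _, ?_, ?_⟩
    · rintro I hI
      rw [Set.mem_singleton_iff] at hI; subst hI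
      refine ⟨⟨?_, ?_, ?_⟩, ?_⟩
      · obtain ⟨u, hu⟩ := hUne; exact ⟨u, u, hu, le_rfl⟩
      · rintro x y hxy ⟨u, hu, hyu⟩; exact ⟨u, hu, hxy.trans hyu⟩
      · rintro x ⟨u, hu, hxu⟩ y ⟨v, hv, hyv⟩
        exact ⟨u ⊔ v, ⟨u ⊔ v, hd u hu v hv, le_rfl⟩, hxu.trans le_sup_left,
          hyv.trans le_sup_right⟩
      · rintro y ⟨u, hu, hyu⟩; exact hS hyu (hUS hu)
    · intro x hx; exact ⟨_, Set.mem_singleton _, x, hx, le_rfl⟩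
  obtain ⟨x₀, hx₀, y₀, hy₀, hxy₀⟩ := hpair
  -- Zorn: a maximal pairwise-incompatible subset of U containing x₀
  have hx₀y₀ : x₀ ≠ y₀ := by
    intro hxy; apply hxy₀; rw [← hxy, sup_idem]; exact hx₀
  set 𝒜 : Set (Set P) := {A | A ⊆ U ∧ x₀ ∈ A ∧ ∀ a ∈ A, ∀ b ∈ A, a ≠ b → a ⊔ b ∉ U} with h𝒜
  have hA0 : ({x₀} : Set P) ∈ 𝒜 := by
    refine ⟨by simpa using hx₀, Set.mem_singleton _, ?_⟩
    rintro a ha b hb hab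
    rw [Set.mem_singleton_iff] at ha hb
    subst ha; subst hb; exact absurd rfl hab
  have hzorn : ∀ c ⊆ 𝒜, IsChain (· ⊆ ·) c → c.Nonempty → ∃ ub ∈ 𝒜, ∀ s ∈ c, s ⊆ ub := by
    rintro c hc𝒜 hchain hcne
    refine ⟨⋃₀ c, ⟨?_, ?_, ?_⟩, fun s hs => Set.subset_sUnion_of_mem hs⟩
    · exact Set.sUnion_subset fun A hA => (hc𝒜 hA).1
    · obtain ⟨A, hA⟩ := hcne; exact ⟨A, hA, (hc𝒜 hA).2.1⟩
    · rintro a ⟨A, hA, haA⟩ b ⟨B, hB, hbB⟩ hab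
      rcases hchain.total hA hB with hAB | hBA
      · exact (hc𝒜 hB).2.2 a (hAB haA) b hbB hab
      · exact (hc𝒜 hA).2.2 a haA b (hBA hbB) hab
  obtain ⟨M, hx₀sub, hMmax⟩ := zorn_subset_nonempty 𝒜 hzorn _ hA0
  have hMU : M ⊆ U := hMmax.1.1
  have hx₀M : x₀ ∈ M := hMmax.1.2.1
  have hMpair : ∀ a ∈ M, ∀ b ∈ M, a ≠ b → a ⊔ b ∉ U := hMmax.1.2.2
  -- M is a finite antichain
  have hManti : IsAntichain (· ≤ ·) M := by
    intro a ha b hb hab hle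
    exact hMpair a ha b hb hab (by rw [sup_eq_right.2 hle]; exact hMU hb)
  have hMfin : M.Finite := Set.not_infinite.1 fun hinf => h ⟨M, hinf, hManti⟩
  -- M covers U via compatibility
  have hcov : ∀ x ∈ U, ∃ a ∈ M, x ⊔ a ∈ U := by
    by_contra hc
    push_neg at hc
    obtain ⟨x, hxU, hx⟩ := hc
    have hxM : x ∉ M := fun hxM => hx x hxM (by rwa [sup_idem])
    have hins : insert x M ∈ 𝒜 := by
      refine ⟨Set.insert_subset hxU hMU, Set.mem_insert_of_mem _ hx₀M, ?_⟩
      intro a ha b hb hab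
      rcases Set.mem_insert_iff.1 ha with rfl | ha'
      · rcases Set.mem_insert_iff.1 hb with rfl | hb'
        · exact absurd rfl hab
        · exact hx b hb'
      · rcases Set.mem_insert_iff.1 hb with rfl | hb'
        · intro hm; exact hx a ha' (by rwa [sup_comm] at hm)
        · exact hMpair a ha' b hb' hab
    have := hMmax.2 hins (Set.subset_insert _ _)
    exact hxM (this (Set.mem_insert _ _))
  -- some a ∈ M has a bad cone
  have hchild : ∃ a ∈ M, ¬ GoodIn S (S ∩ {y | a ≤ y}) := by
    by_contra hall
    push_neg at hall
    have hall' : ∀ a : P, ∃ Tset : Set (Set P), Tset.Finite ∧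
        (∀ I ∈ Tset, IsIdeal I ∧ I ⊆ S) ∧
        (a ∈ M → (S ∩ {y | a ≤ y}) ⊆ ⋃₀ Tset) := by
      intro a
      by_cases ha : a ∈ M
      · obtain ⟨Tset, h1, h2, h3⟩ := hall a ha
        exact ⟨Tset, h1, h2, fun _ => h3⟩
      · exact ⟨∅, Set.finite_empty, by simp, fun ha' => absurd ha' ha⟩
    choose T hTfin hTid hTsub using hall'
    apply hUbad
    refine ⟨⋃ a ∈ M, (fun I => {x | x ⊔ a ∈ I}) '' {I ∈ T a | a ∈ I}, ?_, ?_, ?_⟩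
    · exact hMfin.biUnion fun a _ => (((hTfin a).subset (Set.sep_subset _ _)).image _)
    · intro J hJ
      simp only [Set.mem_iUnion, Set.mem_image, Set.mem_setOf_eq] at hJ
      obtain ⟨a, haM, I, ⟨hIT, haI⟩, rfl⟩ := hJ
      obtain ⟨hIid, hIS⟩ := hTid a I hIT
      constructor
      · refine ⟨⟨a, by simpa [sup_idem] using haI⟩, ?_, ?_⟩
        · intro x y hxy hy
          exact hIid.2.1 (sup_le_sup_right hxy a) hy
        · intro x hx y hy
          refine ⟨x ⊔ y, ?_, le_sup_left, le_sup_right⟩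
          show (x ⊔ y) ⊔ a ∈ I
          rw [show (x ⊔ y) ⊔ a = (x ⊔ a) ⊔ (y ⊔ a) by
            rw [sup_sup_sup_comm, sup_idem]]
          exact hIid.sup_mem hx hy
      · intro x hx
        exact hS le_sup_left (hIS hx)
    · intro x hxU
      obtain ⟨a, haM, hxa⟩ := hcov x hxU
      have hmem : x ⊔ a ∈ S ∩ {y | a ≤ y} := ⟨hUS hxa, le_sup_right⟩
      obtain ⟨I, hIT, hmemI⟩ := hTsub a haM hmem
      have haI : a ∈ I := (hTid a I hIT).1.2.1 le_sup_right hmemI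
      refine ⟨{z | z ⊔ a ∈ I}, ?_, hmemI⟩
      simp only [Set.mem_iUnion, Set.mem_image, Set.mem_setOf_eq]
      exact ⟨a, haM, I, ⟨hIT, haI⟩, rfl⟩
  obtain ⟨a, haM, hachild⟩ := hchild
  -- a sibling of a in M
  have hsib : ∃ c ∈ M, c ≠ a := by
    by_contra hc
    push_neg at hc
    have hx₀a : x₀ = a := hc x₀ hx₀M
    obtain ⟨b, hbM, hb⟩ := hcov y₀ hy₀
    have hba : b = a := hc b hbM
    apply hxy₀
    rw [hx₀a, sup_comm]
    rwa [hba] at hb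
  obtain ⟨c, hcM, hca⟩ := hsib
  have hcaU : c ⊔ a ∉ U := hMpair c hcM a haM hca
  refine ⟨a, c, hachild, ?_, hMU hcM, ?_⟩
  · rintro x ⟨hxS, hax⟩
    exact hUup (hMU haM) hax hxS
  · rintro x ⟨hxS, hax⟩
    constructor
    · intro hcx
      have h1 : c ⊔ a ≤ x := sup_le hcx hax
      exact hcaU (hUup (hMU hcM) le_sup_left (hS h1 hxS))
    · intro hxc
      have h2 : a ≤ c := le_trans hax hxc
      apply hcaU
      rw [sup_eq_left.2 h2]
      exact hMU hcM

/-- Key lemma: in a join-semilattice with no infinite antichain, every initial segment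
is a finite union of ideals contained in it. -/
lemma cover (h : ¬ ∃ A : Set P, A.Infinite ∧ IsAntichain (· ≤ ·) A)
    {S : Set P} (hS : ∀ ⦃x y : P⦄, x ≤ y → y ∈ S → x ∈ S) : GoodIn S S := by
  classical
  by_contra hbad
  rcases Set.eq_empty_or_nonempty S with rfl | hSne
  · exact hbad ⟨∅, Set.finite_empty, by simp, by simp⟩
  have hPne : Nonempty P := ⟨hSne.choose⟩
  have step : ∀ U : Set P, (U ⊆ S ∧ (∀ ⦃u v : P⦄, u ∈ U → u ≤ v → v ∈ S → v ∈ U) ∧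
      ¬ GoodIn S U) → ∃ a c : P,
      ((S ∩ {y | a ≤ y}) ⊆ S ∧ (∀ ⦃u v : P⦄, u ∈ S ∩ {y | a ≤ y} → u ≤ v → v ∈ S →
        v ∈ S ∩ {y | a ≤ y}) ∧ ¬ GoodIn S (S ∩ {y | a ≤ y})) ∧
      (S ∩ {y | a ≤ y}) ⊆ U ∧ c ∈ U ∧
      ∀ x ∈ S ∩ {y | a ≤ y}, ¬ c ≤ x ∧ ¬ x ≤ c := by
    rintro U ⟨hUS, hUup, hUbad⟩
    obtain ⟨a, c, h1, h2, h3, h4⟩ := step_lemma h hS hUS hUup hUbad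
    refine ⟨a, c, ⟨Set.inter_subset_left, ?_, h1⟩, h2, h3, h4⟩
    rintro u v ⟨huS, hau⟩ huv hvS
    exact ⟨hvS, le_trans hau huv⟩
  choose! a c hstep1 hstep2 hstep3 hstep4 using step
  let seq : ℕ → Set P := fun n => Nat.rec S (fun _ Uprev => S ∩ {y | a Uprev ≤ y}) n
  have hRRn : ∀ n, seq n ⊆ S ∧ (∀ ⦃u v : P⦄, u ∈ seq n → u ≤ v → v ∈ S → v ∈ seq n) ∧
      ¬ GoodIn S (seq n) := by
    intro n
    induction n with
    | zero => exact ⟨le_refl _, fun u v _ _ hv => hv, hbad⟩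
    | succ n ih => exact hstep1 _ ih
  have hmono : ∀ n, seq (n + 1) ⊆ seq n := fun n => hstep2 _ (hRRn n)
  have hmono' : ∀ m n, m ≤ n → seq n ⊆ seq m := by
    intro m n hmn
    induction hmn with
    | refl => exact subset_rfl
    | step _ ih => exact (hmono _).trans ih
  have hcmem : ∀ n, c (seq n) ∈ seq n := fun n => hstep3 _ (hRRn n)
  have hinc : ∀ n, ∀ x ∈ seq (n + 1), ¬ c (seq n) ≤ x ∧ ¬ x ≤ c (seq n) := fun n =>
    hstep4 _ (hRRn n)
  have key : ∀ {m n : ℕ}, m < n → ¬ c (seq m) ≤ c (seq n) ∧ ¬ c (seq n) ≤ c (seq m) := by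
    intro m n hmn
    exact hinc m _ (hmono' (m + 1) n hmn (hcmem n))
  apply h
  refine ⟨Set.range fun n => c (seq n), ?_, ?_⟩
  · apply Set.infinite_range_of_injective
    intro m n hmn
    by_contra hne
    rcases lt_or_gt_of_ne hne with h' | h'
    · exact (key h').1 (le_of_eq hmn)
    · exact (key h').2 (le_of_eq hmn)
  · rintro _ ⟨m, rfl⟩ _ ⟨n, rfl⟩ hne hle
    rcases lt_trichotomy m n with h' | h' | h'
    · exact (key h').1 hle
    · exact hne (by rw [h'])
    · exact (key h').2 hle

end Aux

/-- if a join-semilattice `P` has no infinite antichain, it embeds as a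
join-subsemilattice into `I_{<ω}(J(P))`. -/
theorem stmt_11 {P : Type*} [SemilatticeSup P]
    (h : ¬ ∃ A : Set P, A.Infinite ∧ IsAntichain (· ≤ ·) A) :
    JoinEmbeds P (FinGenInitSeg {I : Set P // IsIdeal I}) := by
  classical
  have key : ∀ x : P, ∃ F : Finset {I : Set P // IsIdeal I},
      {J : {I : Set P // IsIdeal I} | x ∉ J.1} = {J | ∃ K ∈ F, J ≤ K} := by
    intro x
    have hinit : ∀ ⦃u v : P⦄, u ≤ v → v ∈ {y : P | ¬ x ≤ y} → u ∈ {y : P | ¬ x ≤ y} :=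
      fun u v huv hv hxu => hv (hxu.trans huv)
    obtain ⟨T, hTfin, hTprop, hTsub⟩ := cover h hinit
    have hT'fin : {J : {I : Set P // IsIdeal I} | J.1 ∈ T}.Finite :=
      Set.Finite.preimage (f := Subtype.val) (fun a _ b _ hab => Subtype.ext hab) hTfin
    refine ⟨hT'fin.toFinset, ?_⟩
    ext J
    simp only [Set.mem_setOf_eq, Set.Finite.mem_toFinset]
    constructor
    · intro hxJ
      have hJsub : J.1 ⊆ {y : P | ¬ x ≤ y} := fun z hz hxz => hxJ (J.2.2.1 hxz hz)
      obtain ⟨I, hI, hJI⟩ := ideal_subset_of_subset_union J.2 hTfin.toFinset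
        (fun I hI => (hTprop I (hTfin.mem_toFinset.1 hI)).1.2.1)
        (fun z hz => by
          obtain ⟨I, hI, hzI⟩ := hTsub (hJsub hz)
          exact ⟨I, hTfin.mem_toFinset.2 hI, hzI⟩)
      exact ⟨⟨I, (hTprop I (hTfin.mem_toFinset.1 hI)).1⟩, hTfin.mem_toFinset.1 hI, hJI⟩
    · rintro ⟨K, hK, hJK⟩ hxJ
      exact (hTprop K.1 hK).2 (hJK hxJ) le_rfl
  choose F hF using key
  refine ⟨fun x => ⟨{J | x ∉ J.1}, F x, hF x⟩, ?_, ?_⟩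
  · intro x y hxy
    have h1 : {J : {I : Set P // IsIdeal I} | x ∉ J.1} = {J | y ∉ J.1} :=
      congrArg Subtype.val hxy
    have hid : ∀ z : P, IsIdeal {w : P | w ≤ z} := fun z =>
      ⟨⟨z, le_rfl⟩, fun u v huv hv => huv.trans hv, fun u hu v hv => ⟨z, le_rfl, hu, hv⟩⟩
    have hx : x ≤ y := by
      by_contra hc
      exact ((Set.ext_iff.1 h1 ⟨{w | w ≤ y}, hid y⟩).1 hc) le_rfl
    have hy : y ≤ x := by
      by_contra hc
      exact ((Set.ext_iff.1 h1 ⟨{w | w ≤ x}, hid x⟩).2 hc) le_rfl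
    exact le_antisymm hx hy
  · intro x y
    apply Subtype.ext
    show {J : {I : Set P // IsIdeal I} | x ⊔ y ∉ J.1} =
      {J : {I : Set P // IsIdeal I} | x ∉ J.1} ∪ {J | y ∉ J.1}
    ext J
    simp only [Set.mem_setOf_eq, Set.mem_union]
    constructor
    · intro hsup
      by_contra hc
      push_neg at hc
      exact hsup (J.2.sup_mem hc.1 hc.2)
    · rintro (hx | hx) hsup
      · exact hx (J.2.2.1 le_sup_left hsup)
      · exact hx (J.2.2.1 le_sup_right hsup)
end

section
/- Let Q be a well-founded poset and 𝓕 ⊆ I_{<ω}(Q) a family of finitely generated initial segments. Let 𝓕^{<ω} be the set of finite unions of members of 𝓕 and 𝓕^∪ the set of arbitrary unions of members of 𝓕, both ordered by inclusion. Then the following are equivalent: (1) 𝓕 has no infinite antichain; (2) 𝓕^{<ω} is well-quasi-ordered; (6) [ω]^{<ω} does not embed into 𝓕^{<ω} as a poset; (7) 𝓕^∪ is well-founded. -/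
open Relation

section DM

variable {α : Type*} [Preorder α]

/-- One-step Dershowitz–Manna relation: replace one element by finitely many smaller ones. -/
def MStep (N M : Multiset α) : Prop :=
  ∃ a X Y, M = a ::ₘ X ∧ N = X + Y ∧ ∀ y ∈ Y, y < a

theorem mstep_acc_add {a : α}
    (H1 : ∀ b, b < a → ∀ M : Multiset α, Acc MStep M → Acc MStep (b ::ₘ M)) :
    ∀ Y : Multiset α, (∀ y ∈ Y, y < a) → ∀ M : Multiset α, Acc MStep M → Acc MStep (M + Y) := by
  intro Y
  induction Y using Multiset.induction with
  | empty => intro _ M hM; simpa using hM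
  | cons y Y ih =>
    intro hY M hM
    rw [Multiset.add_cons]
    exact H1 y (hY y (Multiset.mem_cons_self y Y)) _
      (ih (fun z hz => hY z (Multiset.mem_cons_of_mem hz)) M hM)

theorem mstep_acc_cons {a : α}
    (H1 : ∀ b, b < a → ∀ M : Multiset α, Acc MStep M → Acc MStep (b ::ₘ M)) :
    ∀ M : Multiset α, Acc MStep M → Acc MStep (a ::ₘ M) := by
  intro M hM
  induction hM with
  | intro M hpred ih =>
    constructor
    intro N hN
    rcases hN with ⟨c, X, Y, hM', hN', hY⟩
    rcases Multiset.cons_eq_cons.mp hM' with ⟨hac, hMX⟩ | ⟨hac, cs, hMcs, hXcs⟩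
    · subst hN'
      rw [← hMX]
      exact mstep_acc_add H1 Y (fun y hy => hac ▸ hY y hy) M (Acc.intro M hpred)
    · subst hN'
      rw [hXcs, Multiset.cons_add]
      exact ih (cs + Y) ⟨c, cs, Y, hMcs, rfl, hY⟩

theorem mstep_acc_cons_all (hwf : WellFounded ((· < ·) : α → α → Prop)) :
    ∀ a : α, ∀ M : Multiset α, Acc MStep M → Acc MStep (a ::ₘ M) := by
  intro a
  induction a using WellFounded.induction hwf with
  | _ a ih => exact mstep_acc_cons (fun b hb => ih b hb)

theorem mstep_wf (hwf : WellFounded ((· < ·) : α → α → Prop)) :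
    WellFounded (MStep : Multiset α → Multiset α → Prop) := by
  constructor
  intro M
  induction M using Multiset.induction with
  | empty =>
    constructor
    rintro N ⟨a, X, Y, h, _, _⟩
    exact absurd h.symm (Multiset.cons_ne_zero)
  | cons a M ih => exact mstep_acc_cons_all hwf a M ih

theorem mstep_transGen :
    ∀ Z : Multiset α, Z ≠ 0 → ∀ X Y : Multiset α, (∀ y ∈ Y, ∃ z ∈ Z, y < z) →
      TransGen (MStep : Multiset α → Multiset α → Prop) (X + Y) (X + Z) := by
  intro Z
  induction Z using Multiset.induction with
  | empty => intro h; exact absurd rfl h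
  | cons z Z ihZ =>
    intro _ X Y hYZ
    by_cases hZ0 : Z = 0
    · subst hZ0
      apply TransGen.single
      refine ⟨z, X, Y, by rw [Multiset.add_cons, add_zero], rfl, ?_⟩
      intro y hy
      obtain ⟨z', hz', hlt⟩ := hYZ y hy
      rcases Multiset.mem_cons.mp hz' with rfl | h
      · exact hlt
      · simp at h
    · classical
      have hsplit : Y.filter (fun y => ∃ z' ∈ Z, y < z')
          + Y.filter (fun y => ¬ ∃ z' ∈ Z, y < z') = Y := Multiset.filter_add_not _ Y
      have hY₁lt : ∀ y ∈ Y.filter (fun y => ¬ ∃ z' ∈ Z, y < z'), y < z := by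
        intro y hy
        have hyY : y ∈ Y := (Multiset.mem_filter.mp hy).1
        have hno : ¬ ∃ z' ∈ Z, y < z' := (Multiset.mem_filter.mp hy).2
        obtain ⟨z', hz', hlt⟩ := hYZ y hyY
        rcases Multiset.mem_cons.mp hz' with rfl | h
        · exact hlt
        · exact absurd ⟨z', h, hlt⟩ hno
      have main : TransGen MStep
          ((X + Y.filter (fun y => ¬ ∃ z' ∈ Z, y < z')) + Y.filter (fun y => ∃ z' ∈ Z, y < z'))
          ((X + Y.filter (fun y => ¬ ∃ z' ∈ Z, y < z')) + Z) :=
        ihZ hZ0 _ _ (fun y hy => (Multiset.mem_filter.mp hy).2)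
      have laststep : MStep ((X + Z) + Y.filter (fun y => ¬ ∃ z' ∈ Z, y < z'))
          (X + (z ::ₘ Z)) :=
        ⟨z, X + Z, _, by rw [Multiset.add_cons], rfl, hY₁lt⟩
      have e1 : (X + Y.filter (fun y => ¬ ∃ z' ∈ Z, y < z'))
          + Y.filter (fun y => ∃ z' ∈ Z, y < z') = X + Y := by
        rw [add_assoc, add_comm (Y.filter (fun y => ¬ ∃ z' ∈ Z, y < z')), hsplit]
      have e2 : (X + Y.filter (fun y => ¬ ∃ z' ∈ Z, y < z')) + Z
          = (X + Z) + Y.filter (fun y => ¬ ∃ z' ∈ Z, y < z') := by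
        rw [add_assoc, add_assoc, add_comm _ Z]
      rw [← e1]
      rw [e2] at main
      exact TransGen.tail main laststep

end DM

section Poset

variable {Q : Type*} [PartialOrder Q]

/-- Lower closure of a finite set. -/
def lcl (F : Finset Q) : Set Q := {x | ∃ y ∈ F, x ≤ y}

theorem lcl_mono {F G : Finset Q} (h : F ⊆ G) : lcl F ⊆ lcl G := by
  rintro x ⟨y, hy, hxy⟩; exact ⟨y, h hy, hxy⟩

theorem lcl_down {F : Finset Q} {x y : Q} (hxy : x ≤ y) (hy : y ∈ lcl F) : x ∈ lcl F := by
  obtain ⟨z, hz, hyz⟩ := hy; exact ⟨z, hz, hxy.trans hyz⟩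

theorem mem_lcl_self {F : Finset Q} {x : Q} (hx : x ∈ F) : x ∈ lcl F := ⟨x, hx, le_rfl⟩

theorem lcl_empty : lcl (∅ : Finset Q) = ∅ := by ext x; simp [lcl]

theorem lcl_union [DecidableEq Q] (F G : Finset Q) : lcl (F ∪ G) = lcl F ∪ lcl G := by
  ext x; simp [lcl, Finset.mem_union, or_and_right, exists_or]

/-- Maximal elements of a finite set. -/
noncomputable def maxl (F : Finset Q) : Finset Q :=
  @Finset.filter _ (fun x => ∀ y ∈ F, ¬ x < y) (Classical.decPred _) F

theorem mem_maxl {F : Finset Q} {x : Q} : x ∈ maxl F ↔ x ∈ F ∧ ∀ y ∈ F, ¬ x < y := by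
  unfold maxl; exact @Finset.mem_filter _ (fun x => ∀ y ∈ F, ¬ x < y) (Classical.decPred _) _ _

theorem maxl_subset {F : Finset Q} : maxl F ⊆ F := fun x hx => (mem_maxl.mp hx).1

theorem exists_le_maxl (F : Finset Q) {y : Q} (hy : y ∈ F) : ∃ z ∈ maxl F, y ≤ z := by
  classical
  obtain ⟨m, hm, hmax⟩ := Finset.exists_maximal (s := F.filter (fun x => y ≤ x))
    ⟨y, Finset.mem_filter.mpr ⟨hy, le_rfl⟩⟩
  have hmF : m ∈ F := (Finset.mem_filter.mp hm).1
  have hym : y ≤ m := (Finset.mem_filter.mp hm).2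
  refine ⟨m, mem_maxl.mpr ⟨hmF, ?_⟩, hym⟩
  intro w hw hlt
  exact lt_irrefl m (lt_of_lt_of_le hlt (hmax (Finset.mem_filter.mpr ⟨hw, hym.trans hlt.le⟩) hlt.le))

theorem lcl_maxl (F : Finset Q) : lcl (maxl F) = lcl F := by
  apply Set.Subset.antisymm (lcl_mono maxl_subset)
  rintro x ⟨y, hy, hxy⟩
  obtain ⟨z, hz, hyz⟩ := exists_le_maxl F hy
  exact ⟨z, hz, hxy.trans hyz⟩

theorem maxl_antichain {F : Finset Q} {x y : Q} (hx : x ∈ maxl F) (hy : y ∈ maxl F)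
    (hxy : x ≤ y) : x = y := by
  by_contra hne
  exact (mem_maxl.mp hx).2 y (maxl_subset hy) (lt_of_le_of_ne hxy hne)

theorem count_finset_val [DecidableEq Q] (s : Finset Q) (a : Q) :
    s.val.count a = if a ∈ s then 1 else 0 := by
  split_ifs with h
  · exact Multiset.count_eq_one_of_mem s.nodup (Finset.mem_val.mpr h)
  · exact Multiset.count_eq_zero_of_notMem (fun hc => h (Finset.mem_val.mp hc))

theorem finset_val_decomp [DecidableEq Q] (A B : Finset Q) :
    (A ∩ B).val + (B \ A).val = B.val := by
  refine Multiset.ext.mpr fun a => ?_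
  rw [Multiset.count_add, count_finset_val, count_finset_val, count_finset_val]
  by_cases h1 : a ∈ A <;> by_cases h2 : a ∈ B <;>
    simp [Finset.mem_inter, Finset.mem_sdiff, h1, h2]

theorem finset_val_decomp' [DecidableEq Q] (A B : Finset Q) :
    (A ∩ B).val + (A \ B).val = A.val := by
  refine Multiset.ext.mpr fun a => ?_
  rw [Multiset.count_add, count_finset_val, count_finset_val, count_finset_val]
  by_cases h1 : a ∈ A <;> by_cases h2 : a ∈ B <;>
    simp [Finset.mem_inter, Finset.mem_sdiff, h1, h2]

theorem ssubset_transGen [DecidableEq Q] {A B : Finset Q}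
    (hB : ∀ x ∈ B, ∀ y ∈ B, x ≤ y → x = y)
    (h : lcl B ⊂ lcl A) : TransGen MStep B.val A.val := by
  have hsub : lcl B ⊆ lcl A := h.subset
  have hZ : (A \ B).val ≠ 0 := by
    intro h0
    have : A ⊆ B := Finset.sdiff_eq_empty_iff_subset.mp (Finset.val_eq_zero.mp h0)
    exact h.not_subset (lcl_mono this)
  have hYZ : ∀ y ∈ (B \ A).val, ∃ z ∈ (A \ B).val, y < z := by
    intro y hy
    rw [Finset.mem_val, Finset.mem_sdiff] at hy
    obtain ⟨hyB, hyA⟩ := hy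
    obtain ⟨a, haA, hya⟩ := hsub (mem_lcl_self hyB)
    have hne : y ≠ a := fun he => hyA (he ▸ haA)
    have haB : a ∉ B := by
      intro haB
      exact hne (hB y hyB a haB hya)
    refine ⟨a, ?_, lt_of_le_of_ne hya hne⟩
    rw [Finset.mem_val, Finset.mem_sdiff]
    exact ⟨haA, haB⟩
  have := mstep_transGen (A \ B).val hZ (A ∩ B).val (B \ A).val hYZ
  rwa [finset_val_decomp, finset_val_decomp'] at this

/-- Lemma A: any family of finitely generated lower sets is well-founded under strict
inclusion. -/
theorem lemA (hQ : WellFounded ((· < ·) : Q → Q → Prop)) (C : Set (Set Q))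
    (hC : ∀ S ∈ C, ∃ F : Finset Q, S = lcl F) (hne : C.Nonempty) :
    ∃ m ∈ C, ∀ b ∈ C, ¬ b ⊂ m := by
  classical
  choose Ffun hF using hC
  set μ : {S // S ∈ C} → Multiset Q := fun p => (maxl (Ffun p.1 p.2)).val with hμ
  have wf := (mstep_wf hQ).transGen
  have hrne : (Set.range μ).Nonempty := by
    obtain ⟨S, hS⟩ := hne
    exact ⟨μ ⟨S, hS⟩, ⟨S, hS⟩, rfl⟩
  obtain ⟨v, ⟨p₀, rfl⟩, hmin⟩ := wf.has_min (Set.range μ) hrne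
  refine ⟨p₀.1, p₀.2, fun b hb hlt => ?_⟩
  have h1 : lcl (maxl (Ffun b hb)) = b := by rw [lcl_maxl]; exact (hF b hb).symm
  have h2 : lcl (maxl (Ffun p₀.1 p₀.2)) = p₀.1 := by rw [lcl_maxl]; exact (hF p₀.1 p₀.2).symm
  have hss : lcl (maxl (Ffun b hb)) ⊂ lcl (maxl (Ffun p₀.1 p₀.2)) := by
    rw [h1, h2]; exact hlt
  have := ssubset_transGen (fun x hx y hy => maxl_antichain hx hy) hss
  exact hmin (μ ⟨b, hb⟩) ⟨⟨b, hb⟩, rfl⟩ this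


/-- Finite unions of finitely generated lower sets are finitely generated. -/
theorem fg_union {S T : Set Q} (hS : ∃ F : Finset Q, S = lcl F)
    (hT : ∃ F : Finset Q, T = lcl F) : ∃ F : Finset Q, S ∪ T = lcl F := by
  classical
  obtain ⟨F, rfl⟩ := hS
  obtain ⟨G, rfl⟩ := hT
  exact ⟨F ∪ G, (lcl_union F G).symm⟩

theorem fg_biUnion {ι : Type*} (J : Finset ι) (g : ι → Set Q)
    (h : ∀ j, ∃ F : Finset Q, g j = lcl F) : ∃ F : Finset Q, (⋃ j ∈ J, g j) = lcl F := by
  classical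
  induction J using Finset.induction_on with
  | empty => exact ⟨∅, by simp [lcl_empty]⟩
  | insert _ _ ha ih =>
    obtain ⟨F, hF⟩ := ih
    obtain ⟨G, hG⟩ := h _
    refine ⟨G ∪ F, ?_⟩
    rw [Finset.set_biUnion_insert, hG, hF, lcl_union]

/-- The core combinatorial recursion: choose an infinite "independent" subfamily. -/
theorem lemC (B : ℕ → Set Q) (U : Ultrafilter ℕ) (L : Set Q)
    (hLU : ∀ x : Q, x ∉ L → {m | x ∉ B m} ∈ U)
    (W : Set ℕ) (hW : W ∈ U) (e : ℕ → Set Q)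
    (h1 : ∀ m ∈ W, B m ⊆ L ∪ e m)
    (h2 : ∀ J : Finset ℕ, (∀ j ∈ J, j ∈ W) → {m | ¬ B m ⊆ L ∪ ⋃ j ∈ J, e j} ∈ U) :
    ∃ (n : ℕ → ℕ) (x : ℕ → Q), (∀ k, x k ∈ B (n k)) ∧ ∀ j k, j ≠ k → x k ∉ B (n j) := by
  classical
  have hUinter : ∀ {s t : Set ℕ}, s ∈ U → t ∈ U → s ∩ t ∈ U := fun hs ht =>
    Ultrafilter.mem_coe.mp (Filter.inter_mem (Ultrafilter.mem_coe.mpr hs)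
      (Ultrafilter.mem_coe.mpr ht))
  have hUne : ∀ {s : Set ℕ}, s ∈ U → s.Nonempty := fun hs =>
    Filter.nonempty_of_mem (Ultrafilter.mem_coe.mpr hs)
  set P : ℕ × Q → Prop := fun p => p.1 ∈ W ∧ p.2 ∈ B p.1 ∧ p.2 ∉ L with hP
  set r : ℕ × Q → ℕ × Q → Prop := fun p q => q.2 ∉ e p.1 ∧ p.2 ∉ B q.1 with hr
  have key : ∀ s : Finset (ℕ × Q), (∀ p ∈ s, P p) → ∃ q, P q ∧ ∀ p ∈ s, r p q := by
    intro s hs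
    have hJW : ∀ j ∈ s.image Prod.fst, j ∈ W := by
      intro j hj
      obtain ⟨p, hp, rfl⟩ := Finset.mem_image.mp hj
      exact (hs p hp).1
    have hU1 : {m | ¬ B m ⊆ L ∪ ⋃ j ∈ s.image Prod.fst, e j} ∈ U := h2 _ hJW
    have hU2 : (⋂ p ∈ s, {m | p.2 ∉ B m}) ∈ U := by
      refine Ultrafilter.mem_coe.mp ((Filter.biInter_finset_mem s).mpr ?_)
      intro p hp
      exact Ultrafilter.mem_coe.mpr (hLU p.2 (hs p hp).2.2)
    obtain ⟨m, hmW, hm1, hm2⟩ := hUne (hUinter hW (hUinter hU1 hU2))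
    obtain ⟨x, hxB, hxn⟩ := Set.not_subset.mp hm1
    refine ⟨(m, x), ⟨hmW, hxB, fun hxL => hxn (Set.mem_union_left _ hxL)⟩, ?_⟩
    intro p hp
    constructor
    · intro hxe
      exact hxn (Set.mem_union_right _
        (Set.mem_iUnion₂.mpr ⟨p.1, Finset.mem_image_of_mem Prod.fst hp, hxe⟩))
    · exact Set.mem_iInter₂.mp hm2 p hp
  obtain ⟨f, hfP, hfr⟩ := exists_seq_of_forall_finset_exists P r key
  refine ⟨fun k => (f k).1, fun k => (f k).2, fun k => (hfP k).2.1, ?_⟩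
  intro j k hjk
  rcases lt_or_gt_of_ne hjk with h | h
  · intro hmem
    have := h1 (f j).1 (hfP j).1 hmem
    rw [Set.mem_union] at this
    rcases this with hxL | hxe
    · exact (hfP k).2.2 hxL
    · exact (hfr j k h).1 hxe
  · exact (hfr k j h).2

/-- Lemma B: an infinite antichain of finitely generated lower sets contains an
infinite subfamily with separating points. -/
theorem lemB (hQ : WellFounded ((· < ·) : Q → Q → Prop)) (B : ℕ → Set Q)
    (hfg : ∀ n, ∃ F : Finset Q, B n = lcl F)
    (hanti : ∀ n m, n ≠ m → ¬ B n ⊆ B m) :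
    ∃ (n : ℕ → ℕ) (x : ℕ → Q), (∀ k, x k ∈ B (n k)) ∧ ∀ j k, j ≠ k → x k ∉ B (n j) := by
  classical
  choose F hFB using hfg
  set U : Ultrafilter ℕ := Filter.hyperfilter ℕ with hU
  have hUinter : ∀ {s t : Set ℕ}, s ∈ U → t ∈ U → s ∩ t ∈ U := fun hs ht =>
    Ultrafilter.mem_coe.mp (Filter.inter_mem (Ultrafilter.mem_coe.mpr hs)
      (Ultrafilter.mem_coe.mpr ht))
  have hUne : ∀ {s : Set ℕ}, s ∈ U → s.Nonempty := fun hs =>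
    Filter.nonempty_of_mem (Ultrafilter.mem_coe.mpr hs)
  set L : Set Q := {x | {m | x ∈ B m} ∈ U} with hL
  have hdown : ∀ n, ∀ x y : Q, x ≤ y → y ∈ B n → x ∈ B n := by
    intro n x y hxy hy
    rw [hFB n] at hy ⊢
    exact lcl_down hxy hy
  have hLdown : ∀ x y : Q, x ≤ y → y ∈ L → x ∈ L := by
    intro x y hxy hy
    exact Ultrafilter.mem_coe.mp (Filter.mem_of_superset (Ultrafilter.mem_coe.mpr hy)
      (fun m hm => hdown m _ _ hxy hm))
  have hLU : ∀ x : Q, x ∉ L → {m | x ∉ B m} ∈ U :=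
    fun x hx => Ultrafilter.compl_mem_iff_notMem.mpr hx
  have fact1 : {m | B m ⊆ L} ∉ U := by
    intro hmem
    obtain ⟨m1, hm1⟩ := hUne hmem
    have hT : {m | ∀ x ∈ F m1, x ∈ B m} ∈ U := by
      have heq : {m | ∀ x ∈ F m1, x ∈ B m} = ⋂ x ∈ F m1, {m | x ∈ B m} := by
        ext m; simp
      rw [heq]
      refine Ultrafilter.mem_coe.mp ((Filter.biInter_finset_mem (F m1)).mpr ?_)
      intro x hx
      exact Ultrafilter.mem_coe.mpr (hm1 (by rw [hFB m1]; exact mem_lcl_self hx))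
    have hT2 : ({m1}ᶜ : Set ℕ) ∈ U := (Set.finite_singleton m1).compl_mem_hyperfilter
    obtain ⟨m, hmT, hmne⟩ := hUne (hUinter hT hT2)
    have hsub : B m1 ⊆ B m := by
      rw [hFB m1]
      rintro x ⟨y, hy, hxy⟩
      exact hdown m _ _ hxy (hmT y hy)
    exact hanti m1 m (fun h => hmne (h ▸ rfl)) hsub
  by_cases hD : ∃ D : Set Q, (∃ Fd : Finset Q, D = lcl Fd) ∧ {m | B m ⊆ L ∪ D} ∈ U
  · -- Case 2: there is a finitely generated cover; take a minimal one.
    obtain ⟨D, ⟨hDfg, hDU⟩, hDmin⟩ := lemA hQ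
      {D | (∃ Fd : Finset Q, D = lcl Fd) ∧ {m | B m ⊆ L ∪ D} ∈ U}
      (fun S hS => hS.1) hD
    obtain ⟨FD, hFD⟩ := hDfg
    have hGD : lcl (maxl FD) = D := by rw [lcl_maxl]; exact hFD.symm
    -- generators avoid L
    have hGL : ∀ g ∈ maxl FD, g ∉ L := by
      intro g hg hgL
      have hsub : {m | B m ⊆ L ∪ D} ⊆ {m | B m ⊆ L ∪ lcl ((maxl FD).erase g)} := by
        intro m hm x hx
        have := hm hx
        rw [Set.mem_union] at this
        rcases this with hxL | hxD
        · exact Set.mem_union_left _ hxL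
        · rw [← hGD] at hxD
          obtain ⟨g', hg', hxg'⟩ := hxD
          by_cases hgg : g' = g
          · exact Set.mem_union_left _ (hLdown x g (hgg ▸ hxg') hgL)
          · exact Set.mem_union_right _ ⟨g', Finset.mem_erase.mpr ⟨hgg, hg'⟩, hxg'⟩
      have hD'U : {m | B m ⊆ L ∪ lcl ((maxl FD).erase g)} ∈ U :=
        Ultrafilter.mem_coe.mp (Filter.mem_of_superset (Ultrafilter.mem_coe.mpr hDU) hsub)
      have hD'ss : lcl ((maxl FD).erase g) ⊂ D := by
        rw [← hGD]
        refine (Set.ssubset_iff_of_subset (lcl_mono (Finset.erase_subset g (maxl FD)))).mpr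
          ⟨g, mem_lcl_self hg, ?_⟩
        rintro ⟨g', hg', hgg'⟩
        obtain ⟨hne, hg'G⟩ := Finset.mem_erase.mp hg'
        exact hne (maxl_antichain hg hg'G hgg').symm
      exact hDmin _ ⟨⟨(maxl FD).erase g, rfl⟩, hD'U⟩ hD'ss
    have hGne : (maxl FD).Nonempty := by
      rcases Finset.eq_empty_or_nonempty (maxl FD) with h | h
      · exfalso
        apply fact1
        have hDe : D = ∅ := by rw [← hGD, h, lcl_empty]
        have : {m | B m ⊆ L ∪ D} = {m | B m ⊆ L} := by rw [hDe]; simp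
        rwa [this] at hDU
      · exact h
    obtain ⟨g₀, hg₀⟩ := hGne
    set W : Set ℕ := {m | B m ⊆ L ∪ D} ∩ ⋂ g ∈ maxl FD, {m | g ∉ B m} with hWdef
    have hWU : W ∈ U := by
      refine hUinter hDU ?_
      refine Ultrafilter.mem_coe.mp ((Filter.biInter_finset_mem (maxl FD)).mpr ?_)
      intro g hg
      exact Ultrafilter.mem_coe.mpr (hLU g (hGL g hg))
    set e : ℕ → Set Q := fun m => lcl ((F m).filter (fun x => x ∉ L)) with he
    have hesub : ∀ m ∈ W, e m ⊆ D := by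
      rintro m ⟨hm1, _⟩ x ⟨y, hy, hxy⟩
      rw [Finset.mem_filter] at hy
      have hyB : y ∈ B m := by rw [hFB m]; exact mem_lcl_self hy.1
      have := hm1 hyB
      rw [Set.mem_union] at this
      rcases this with hyL | hyD
      · exact absurd hyL hy.2
      · rw [← hGD] at hyD ⊢
        exact lcl_down hxy hyD
    have heB : ∀ m, e m ⊆ B m := by
      rintro m x ⟨y, hy, hxy⟩
      rw [Finset.mem_filter] at hy
      exact hdown m _ _ hxy (by rw [hFB m]; exact mem_lcl_self hy.1)
    apply lemC B U L hLU W hWU e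
    · intro m _ x hx
      rw [hFB m] at hx
      obtain ⟨y, hyF, hxy⟩ := hx
      by_cases hyL : y ∈ L
      · exact Set.mem_union_left _ (hLdown x y hxy hyL)
      · exact Set.mem_union_right _ ⟨y, Finset.mem_filter.mpr ⟨hyF, hyL⟩, hxy⟩
    · intro J hJ
      have hfg' : ∃ Fl : Finset Q, (⋃ j ∈ J, e j) = lcl Fl :=
        fg_biUnion J e (fun j => ⟨(F j).filter (fun x => x ∉ L), rfl⟩)
      have hsubD : (⋃ j ∈ J, e j) ⊆ D := by
        intro x hx
        obtain ⟨j, hjJ, hxe⟩ := Set.mem_iUnion₂.mp hx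
        exact hesub j (hJ j hjJ) hxe
      have hg₀n : g₀ ∉ (⋃ j ∈ J, e j) := by
        intro hx
        obtain ⟨j, hjJ, hxe⟩ := Set.mem_iUnion₂.mp hx
        have hjW : j ∈ W := hJ j hjJ
        have : g₀ ∉ B j := Set.mem_iInter₂.mp hjW.2 g₀ hg₀
        exact this (heB j hxe)
      have hne' : {m | B m ⊆ L ∪ ⋃ j ∈ J, e j} ∉ U := by
        intro hmem
        refine hDmin _ ⟨hfg', hmem⟩ ?_
        exact (Set.ssubset_iff_of_subset hsubD).mpr
          ⟨g₀, by rw [← hGD]; exact mem_lcl_self hg₀, hg₀n⟩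
      exact Ultrafilter.compl_mem_iff_notMem.mpr hne'
  · -- Case 1: no finitely generated cover.
    push_neg at hD
    apply lemC B U L hLU Set.univ Filter.univ_mem B
    · intro m _ x hx
      exact Set.mem_union_right _ hx
    · intro J _
      have hfg' : ∃ Fl : Finset Q, (⋃ j ∈ J, B j) = lcl Fl :=
        fg_biUnion J B (fun j => ⟨F j, hFB j⟩)
      exact Ultrafilter.compl_mem_iff_notMem.mpr (hD _ hfg')

end Poset

/-- Finite unions of members of `𝓕`. -/
def finUnions {Q : Type*} (𝓕 : Set (Set Q)) : Set (Set Q) :=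
  {S | ∃ G : Finset (Set Q), ↑G ⊆ 𝓕 ∧ S = ⋃₀ ↑G}

/-- Arbitrary unions of members of `𝓕`. -/
def arbUnions {Q : Type*} (𝓕 : Set (Set Q)) : Set (Set Q) :=
  {S | ∃ T ⊆ 𝓕, S = ⋃₀ T}

/-- The subset `X` is well-founded for the induced order. -/
def WFOn {α : Type*} [Preorder α] (X : Set α) : Prop :=
  ∀ C ⊆ X, C.Nonempty → ∃ m ∈ C, ∀ b ∈ C, ¬ b < m

/-- The subset `X` has no infinite antichain. -/
def NoInfAC {α : Type*} [Preorder α] (X : Set α) : Prop :=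
  ¬ ∃ A ⊆ X, A.Infinite ∧ IsAntichain (· ≤ ·) A

section Assembly

variable {Q : Type*} [PartialOrder Q]

theorem subset_finUnions (𝓕 : Set (Set Q)) : 𝓕 ⊆ finUnions 𝓕 := by
  intro S hS
  refine ⟨{S}, ?_, ?_⟩
  · simp [hS]
  · simp

theorem finUnions_fg {𝓕 : Set (Set Q)} (h𝓕 : ∀ S ∈ 𝓕, ∃ F : Finset Q, S = lcl F) :
    ∀ S ∈ finUnions 𝓕, ∃ F : Finset Q, S = lcl F := by
  classical
  rintro S ⟨G, hG, rfl⟩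
  have : ∀ G' : Finset (Set Q), ↑G' ⊆ 𝓕 → ∃ F : Finset Q, ⋃₀ ↑G' = lcl F := by
    intro G'
    induction G' using Finset.induction_on with
    | empty => intro _; exact ⟨∅, by simp [lcl_empty]⟩
    | @insert a G'' _ ih =>
      intro hsub
      obtain ⟨F, hF⟩ := h𝓕 a (hsub (by simp))
      obtain ⟨F', hF'⟩ := ih (fun S hS => hsub (by simp [hS]))
      refine ⟨F ∪ F', ?_⟩
      rw [Finset.coe_insert, Set.sUnion_insert, hF, hF', lcl_union]
  exact this G hG

/-- From an infinite antichain in a family of finitely generated sets, extract an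
independent sequence with separating points. -/
theorem antichain_indep (hQ : WellFounded ((· < ·) : Q → Q → Prop))
    {𝓖 : Set (Set Q)} (hfg : ∀ S ∈ 𝓖, ∃ F : Finset Q, S = lcl F)
    {A : Set (Set Q)} (hsub : A ⊆ 𝓖) (hinf : A.Infinite)
    (hanti : IsAntichain (· ≤ ·) A) :
    ∃ (C : ℕ → Set Q) (x : ℕ → Q),
      (∀ k, C k ∈ A) ∧ (∀ k, x k ∈ C k) ∧ ∀ j k, j ≠ k → x k ∉ C j := by
  classical
  set emb := Set.Infinite.natEmbedding _ hinf with hemb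
  set Bs : ℕ → Set Q := fun m => (emb m).1 with hBs0
  have hBmem : ∀ m, Bs m ∈ A := fun m => (emb m).2
  have hfg' : ∀ m, ∃ F : Finset Q, Bs m = lcl F := fun m => hfg _ (hsub (hBmem m))
  have hanti' : ∀ n m, n ≠ m → ¬ Bs n ⊆ Bs m := by
    intro n m hnm hss
    have hne : Bs n ≠ Bs m := fun he => hnm (emb.injective (Subtype.coe_injective he))
    exact hanti (hBmem n) (hBmem m) hne hss
  obtain ⟨nn, x, hx1, hx2⟩ := lemB hQ Bs hfg' hanti'
  exact ⟨fun k => Bs (nn k), x, fun k => hBmem (nn k), hx1, fun j k h => hx2 j k h⟩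

theorem noAC_finUnions (hQ : WellFounded ((· < ·) : Q → Q → Prop))
    {𝓕 : Set (Set Q)} (h𝓕 : ∀ S ∈ 𝓕, ∃ F : Finset Q, S = lcl F)
    (h : NoInfAC 𝓕) : NoInfAC (finUnions 𝓕) := by
  rintro ⟨A, hAsub, hAinf, hAanti⟩
  obtain ⟨C, x, hCA, hxC, hsep⟩ := antichain_indep hQ (finUnions_fg h𝓕) hAsub hAinf hAanti
  have hpick : ∀ k, ∃ S ∈ 𝓕, x k ∈ S ∧ S ⊆ C k := by
    intro k
    obtain ⟨G, hG, hEq⟩ := hAsub (hCA k)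
    have hx : x k ∈ ⋃₀ (↑G : Set (Set Q)) := by rw [← hEq]; exact hxC k
    obtain ⟨S, hSG, hxS⟩ := hx
    exact ⟨S, hG hSG, hxS, by rw [hEq]; exact Set.subset_sUnion_of_mem hSG⟩
  choose S hS𝓕 hxS hSC using hpick
  apply h
  refine ⟨Set.range S, ?_, ?_, ?_⟩
  · rintro _ ⟨k, rfl⟩; exact hS𝓕 k
  · apply Set.infinite_range_of_injective
    intro k l hkl
    by_contra hne
    exact hsep l k (fun hh => hne hh.symm) (hSC l (hkl ▸ hxS k))
  · rintro _ ⟨k, rfl⟩ _ ⟨l, rfl⟩ hne hss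
    have hkl : l ≠ k := fun hh => hne (by rw [hh])
    exact hsep l k hkl (hSC l (hss (hxS k)))

theorem wfOn_of_fg (hQ : WellFounded ((· < ·) : Q → Q → Prop))
    {X : Set (Set Q)} (hfg : ∀ S ∈ X, ∃ F : Finset Q, S = lcl F) : WFOn X := by
  intro C hC hne
  obtain ⟨m, hm, hmin⟩ := lemA hQ C (fun S hS => hfg S (hC hS)) hne
  exact ⟨m, hm, fun b hb hlt => hmin b hb (Set.lt_iff_ssubset.mp hlt)⟩

end Assembly

/-- for a well-founded poset `Q` and a family `𝓕` of finitely generated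
initial segments: (1) `𝓕` has no infinite antichain ↔ (2) `𝓕^{<ω}` is wqo ↔
(6) `[ω]^{<ω}` does not embed into `𝓕^{<ω}` ↔ (7) `𝓕^∪` is well-founded. -/
theorem stmt_12 {Q : Type*} [PartialOrder Q]
    (hQ : WellFounded ((· < ·) : Q → Q → Prop)) (𝓕 : Set (Set Q))
    (h𝓕 : ∀ S ∈ 𝓕, ∃ F : Finset Q, S = {x | ∃ y ∈ F, x ≤ y}) :
    (NoInfAC 𝓕 ↔ (WFOn (finUnions 𝓕) ∧ NoInfAC (finUnions 𝓕))) ∧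
    (NoInfAC 𝓕 ↔ ¬ ∃ g : FinSets ℕ → Set Q,
        (∀ a, g a ∈ finUnions 𝓕) ∧ ∀ a b, a ≤ b ↔ g a ⊆ g b) ∧
    (NoInfAC 𝓕 ↔ WFOn (arbUnions 𝓕)) := by
  classical
  have h𝓕' : ∀ S ∈ 𝓕, ∃ F : Finset Q, S = lcl F := h𝓕
  -- (1) → no infinite antichain in finUnions
  have main2 : NoInfAC 𝓕 → NoInfAC (finUnions 𝓕) := noAC_finUnions hQ h𝓕'
  -- (1) ← from finUnions
  have back2 : NoInfAC (finUnions 𝓕) → NoInfAC 𝓕 := by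
    intro h
    rintro ⟨A, hsub, hinf, hanti⟩
    exact h ⟨A, hsub.trans (subset_finUnions 𝓕), hinf, hanti⟩
  -- from an antichain in 𝓕, independent family
  have indep : ¬ NoInfAC 𝓕 → ∃ (C : ℕ → Set Q) (x : ℕ → Q),
      (∀ k, C k ∈ 𝓕) ∧ (∀ k, x k ∈ C k) ∧ ∀ j k, j ≠ k → x k ∉ C j := by
    intro h
    obtain ⟨A, hsub, hinf, hanti⟩ := not_not.mp (by simpa [NoInfAC] using h)
    obtain ⟨C, x, hCA, hxC, hsep⟩ := antichain_indep hQ h𝓕' hsub hinf hanti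
    exact ⟨C, x, fun k => hsub (hCA k), hxC, hsep⟩
  refine ⟨⟨fun h => ⟨wfOn_of_fg hQ (finUnions_fg h𝓕'), main2 h⟩, fun h => back2 h.2⟩, ?_, ?_⟩
  · -- embedding characterization
    constructor
    · rintro h ⟨g, hg1, hg2⟩
      apply main2 h
      set sing : ℕ → FinSets ℕ := fun n => ⟨{n}, Set.finite_singleton n⟩ with hsing
      have hles : ∀ n m : ℕ, sing n ≤ sing m ↔ n = m := by
        intro n m
        constructor
        · intro hle
          have : ({n} : Set ℕ) ⊆ {m} := hle
          simpa using this
        · rintro rfl; exact le_rfl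
      refine ⟨Set.range (fun n => g (sing n)), ?_, ?_, ?_⟩
      · rintro _ ⟨n, rfl⟩; exact hg1 (sing n)
      · apply Set.infinite_range_of_injective
        intro n m hnm
        have h1 : sing n ≤ sing m := (hg2 _ _).mpr (le_of_eq hnm)
        exact (hles n m).mp h1
      · rintro _ ⟨n, rfl⟩ _ ⟨m, rfl⟩ hne hss
        have h1 : sing n ≤ sing m := (hg2 _ _).mpr hss
        exact hne (by rw [(hles n m).mp h1])
    · intro hng
      by_contra hAC
      obtain ⟨C, x, hC𝓕, hxC, hsep⟩ := indep hAC
      apply hng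
      refine ⟨fun a => ⋃ i ∈ a.1, C i, ?_, ?_⟩
      · intro a
        refine ⟨a.2.toFinset.image (fun i => C i), ?_, ?_⟩
        · rintro _ hS
          rw [Finset.coe_image] at hS
          obtain ⟨i, _, rfl⟩ := hS
          exact hC𝓕 i
        · rw [Finset.coe_image, Set.sUnion_image]
          ext y
          simp [Set.Finite.mem_toFinset]
      · intro a b
        constructor
        · intro hab
          have hab' : a.1 ⊆ b.1 := hab
          intro y hy
          obtain ⟨i, hia, hyi⟩ := Set.mem_iUnion₂.mp hy
          exact Set.mem_iUnion₂.mpr ⟨i, hab' hia, hyi⟩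
        · intro hss
          intro i hia
          have : x i ∈ ⋃ j ∈ b.1, C j := hss (Set.mem_iUnion₂.mpr ⟨i, hia, hxC i⟩)
          obtain ⟨j, hjb, hxj⟩ := Set.mem_iUnion₂.mp this
          by_cases hij : j = i
          · exact hij ▸ hjb
          · exact absurd hxj (hsep j i hij)
  · -- arbitrary unions
    constructor
    · intro hAC C hC hne
      by_contra hmin
      push_neg at hmin
      -- build a strictly descending chain in C
      have step : ∀ p : {S // S ∈ C}, ∃ q : {S // S ∈ C}, q.1 < p.1 := by
        intro p
        obtain ⟨b, hb, hlt⟩ := hmin p.1 p.2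
        exact ⟨⟨b, hb⟩, hlt⟩
      choose fstep hfstep using step
      let θ : ℕ → {S // S ∈ C} := fun k =>
        Nat.rec ⟨hne.choose, hne.choose_spec⟩ (fun _ ih => fstep ih) k
      have hθ : ∀ k, (θ (k + 1)).1 < (θ k).1 := fun k => hfstep (θ k)
      have hssub : ∀ k, (θ (k + 1)).1 ⊂ (θ k).1 := fun k => Set.lt_iff_ssubset.mp (hθ k)
      have hxex : ∀ k, ∃ y, y ∈ (θ k).1 ∧ y ∉ (θ (k + 1)).1 := by
        intro k
        obtain ⟨y, hy1, hy2⟩ := Set.exists_of_ssubset (hssub k)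
        exact ⟨y, hy1, hy2⟩
      choose x hx1 hx2 using hxex
      have hAex : ∀ k, ∃ A ∈ 𝓕, x k ∈ A ∧ A ⊆ (θ k).1 := by
        intro k
        obtain ⟨T, hT, hEq⟩ := hC (θ k).2
        have hk : x k ∈ ⋃₀ T := by rw [← hEq]; exact hx1 k
        obtain ⟨A, hAT, hxA⟩ := hk
        exact ⟨A, hT hAT, hxA, by rw [hEq]; exact Set.subset_sUnion_of_mem hAT⟩
      choose A hA𝓕 hxA hAsub using hAex
      have hmono : ∀ i j : ℕ, i + 1 ≤ j → (θ j).1 ⊆ (θ (i + 1)).1 := by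
        intro i j hij
        induction j, hij using Nat.le_induction with
        | base => exact subset_rfl
        | succ j hj ih => exact (hssub j).subset.trans ih
      have hbad : ∀ i j : ℕ, i < j → ¬ A i ⊆ A j := by
        intro i j hij hss
        exact hx2 i (hmono i j hij (hAsub j (hss (hxA i))))
      -- extract antichain
      have hstep1 : ∀ N : ℕ, ∃ i, N ≤ i ∧ ∀ j, i < j → ¬ A j ⊂ A i := by
        intro N
        by_contra hcon
        push_neg at hcon
        have step2 : ∀ p : {i // N ≤ i}, ∃ q : {i // N ≤ i}, A q.1 ⊂ A p.1 := by
          intro p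
          obtain ⟨j, hij, hsubj⟩ := hcon p.1 p.2
          exact ⟨⟨j, p.2.trans hij.le⟩, hsubj⟩
        choose f2 hf2 using step2
        let φ : ℕ → {i // N ≤ i} := fun k => Nat.rec ⟨N, le_rfl⟩ (fun _ ih => f2 ih) k
        have hφ : ∀ k, A (φ (k + 1)).1 ⊂ A (φ k).1 := fun k => hf2 (φ k)
        obtain ⟨m, hmR, hmin'⟩ := lemA hQ (Set.range (fun k => A (φ k).1))
          (by rintro _ ⟨k, rfl⟩; exact h𝓕' _ (hA𝓕 _)) ⟨_, ⟨0, rfl⟩⟩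
        obtain ⟨k, rfl⟩ := hmR
        exact hmin' _ ⟨k + 1, rfl⟩ (hφ k)
      have step3 : ∀ p : ℕ, ∃ i, p < i ∧ ∀ j, i < j → ¬ A j ⊂ A i := by
        intro p
        obtain ⟨i, hi, hh⟩ := hstep1 (p + 1)
        exact ⟨i, Nat.lt_of_succ_le hi, hh⟩
      choose f3 hf3a hf3b using step3
      let T := {i : ℕ // ∀ j, i < j → ¬ A j ⊂ A i}
      let ψ : ℕ → T := fun k =>
        Nat.rec ⟨(hstep1 0).choose, (hstep1 0).choose_spec.2⟩
          (fun _ ih => ⟨f3 ih.1, hf3b ih.1⟩) k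
      have hψlt : ∀ k, (ψ k).1 < (ψ (k + 1)).1 := fun k => hf3a (ψ k).1
      have hψmono : StrictMono (fun k => (ψ k).1) := strictMono_nat_of_lt_succ hψlt
      apply hAC
      refine ⟨Set.range (fun k => A (ψ k).1), ?_, ?_, ?_⟩
      · rintro _ ⟨k, rfl⟩; exact hA𝓕 _
      · apply Set.infinite_range_of_injective
        intro k l hkl
        by_contra hne
        rcases lt_or_gt_of_ne hne with hlt | hlt
        · exact hbad _ _ (hψmono hlt) (le_of_eq hkl)
        · exact hbad _ _ (hψmono hlt) (le_of_eq hkl.symm)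
      · rintro _ ⟨k, rfl⟩ _ ⟨l, rfl⟩ hne hss
        rcases lt_trichotomy k l with hlt | rfl | hlt
        · exact hbad _ _ (hψmono hlt) hss
        · exact hne rfl
        · exact (ψ l).2 _ (hψmono hlt) (HasSubset.Subset.ssubset_of_ne hss
            (fun hh => hne hh))
    · intro hWF
      by_contra hAC
      obtain ⟨C, x, hC𝓕, hxC, hsep⟩ := indep hAC
      set V : ℕ → Set Q := fun k => ⋃ j ∈ {j : ℕ | k ≤ j}, C j with hV
      have hVarb : ∀ k, V k ∈ arbUnions 𝓕 := by
        intro k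
        refine ⟨C '' {j : ℕ | k ≤ j}, ?_, ?_⟩
        · rintro _ ⟨j, _, rfl⟩; exact hC𝓕 j
        · rw [Set.sUnion_image]
      have hVmono : ∀ k, V (k + 1) ⊆ V k := by
        intro k y hy
        obtain ⟨j, hj, hyj⟩ := Set.mem_iUnion₂.mp hy
        exact Set.mem_iUnion₂.mpr ⟨j, le_of_lt (Nat.lt_of_succ_le hj), hyj⟩
      have hVstrict : ∀ k, V (k + 1) < V k := by
        intro k
        rw [Set.lt_iff_ssubset]
        refine (Set.ssubset_iff_of_subset (hVmono k)).mpr ⟨x k, ?_, ?_⟩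
        · refine Set.mem_iUnion₂.mpr ⟨k, ?_, hxC k⟩
          simp
        · intro hmem
          obtain ⟨j, hj, hxj⟩ := Set.mem_iUnion₂.mp hmem
          have hj' : k + 1 ≤ j := hj
          exact hsep j k (fun hh => by omega) hxj
      obtain ⟨m, hmR, hmin⟩ := hWF (Set.range V) (by rintro _ ⟨k, rfl⟩; exact hVarb k)
        ⟨V 0, ⟨0, rfl⟩⟩
      obtain ⟨k, rfl⟩ := hmR
      exact hmin (V (k + 1)) ⟨k + 1, rfl⟩ (hVstrict k)
end
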